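/- arXiv:2209.06765 — 6 statements merged into one kernel-verified Lean document; each statement's English description precedes it below -/
import Mathlib

section
/- Let f : ℤ² → ℝ_{≥0} be finitely supported and let f* denote its rearrangement with respect to the spiral enumeration of ℤ². Then ‖∇f*‖_{L^∞} ≤ 2·‖∇f‖_{L^∞}, where the norms are taken with respect to the grid graph (ℤ²,ℓ¹). -/
open Real

/-- The edge boundary of a set `A`: the edges of `G` with exactly one endpoint in `A`. -/
def edgeBoundary {V : Type*} (G : SimpleGraph V) (A : Set V) : Set (Sym2 V) :=
  {e | e ∈ G.edgeSet ∧ ∃ u w : V, e = s(u, w) ∧ u ∈ A ∧ w ∉ A}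

/-- The vertex boundary of `A`: vertices outside `A` adjacent to some vertex of `A`. -/
def vertexBoundary {V : Type*} (G : SimpleGraph V) (A : Set V) : Set V :=
  {u | u ∉ A ∧ ∃ w ∈ A, G.Adj u w}

/-- The vertex-isoperimetric profile `∂_V(N)`. -/
noncomputable def vertexProfile {V : Type*} (G : SimpleGraph V) (N : ℕ) : ℕ :=
  sInf {k : ℕ | ∃ A : Set V, A.Finite ∧ A.ncard = N ∧ (vertexBoundary G A).ncard = k}

/-- `‖∇f‖_{L¹} = ∑_{{u,w} ∈ E} |f u - f w|`. -/
noncomputable def gradL1 {V : Type*} (G : SimpleGraph V) (f : V → ℝ) : ℝ :=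
  ∑' e : G.edgeSet,
    Sym2.lift ⟨fun u w => |f u - f w|, fun u w => by dsimp only; rw [abs_sub_comm]⟩ e.1

/-- `‖∇f‖_{L^∞} = sup_{{u,w} ∈ E} |f u - f w|`. -/
noncomputable def gradLinf {V : Type*} (G : SimpleGraph V) (f : V → ℝ) : ℝ :=
  ⨆ e : G.edgeSet,
    Sym2.lift ⟨fun u w => |f u - f w|, fun u w => by dsimp only; rw [abs_sub_comm]⟩ e.1

/-- `‖∇f‖_{L^p} = (∑_{{u,w} ∈ E} |f u - f w|^p)^(1/p)` for real `p`. -/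
noncomputable def gradLp {V : Type*} (G : SimpleGraph V) (f : V → ℝ) (p : ℝ) : ℝ :=
  (∑' e : G.edgeSet,
    Sym2.lift ⟨fun u w => |f u - f w| ^ p,
      fun u w => by dsimp only; rw [abs_sub_comm]⟩ e.1) ^ (1 / p)

/-- `‖∇f‖_{L²} = (∑_{{u,w} ∈ E} |f u - f w|²)^(1/2)`. -/
noncomputable def gradL2 {V : Type*} (G : SimpleGraph V) (f : V → ℝ) : ℝ :=
  Real.sqrt (∑' e : G.edgeSet,
    Sym2.lift ⟨fun u w => |f u - f w| ^ 2,
      fun u w => by dsimp only; rw [abs_sub_comm]⟩ e.1)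

/-- `g` is the rearrangement of `f` along the enumeration `v` (with `v 0 = v₁`):
`g` is obtained from `f` by permuting its values, and the values of `g` are
non-increasing along the enumeration. -/
def IsRearrangement {V : Type*} (v : ℕ → V) (f g : V → ℝ) : Prop :=
  (∃ σ : Equiv.Perm V, g = f ∘ σ) ∧ ∀ m n : ℕ, m ≤ n → g (v n) ≤ g (v m)

/-- The grid graph `(ℤ², ℓ¹)`. -/
def gridGraph : SimpleGraph (ℤ × ℤ) where
  Adj p q := |p.1 - q.1| + |p.2 - q.2| = 1
  symm := by
    constructor
    intro p q h
    rw [abs_sub_comm q.1 p.1, abs_sub_comm q.2 p.2]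
    exact h
  loopless := by constructor; intro p h; simp at h

/-- One step of the counterclockwise square spiral on `ℤ²`. -/
def spiralNext : ℤ × ℤ → ℤ × ℤ := fun p =>
  if 1 ≤ p.1 ∧ p.2 = -p.1 then (p.1 + 1, p.2)
  else if 1 ≤ p.1 ∧ -p.1 ≤ p.2 ∧ p.2 < p.1 then (p.1, p.2 + 1)
  else if 1 ≤ p.2 ∧ -p.2 < p.1 ∧ p.1 ≤ p.2 then (p.1 - 1, p.2)
  else if p.1 ≤ -1 ∧ p.1 < p.2 ∧ p.2 ≤ -p.1 then (p.1, p.2 - 1)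
  else (p.1 + 1, p.2)

/-- The spiral enumeration of `ℤ²`, 0-indexed: `spiral 0 = v₁ = (0,0)`,
`spiral 1 = v₂ = (1,0)`, `spiral 2 = v₃ = (1,1)`, `spiral 3 = v₄ = (0,1)`, … -/
def spiral (n : ℕ) : ℤ × ℤ := spiralNext^[n] (0, 0)

def idxZ : ℤ × ℤ → ℤ := fun p =>
  if 1 ≤ p.1 ∧ -p.1 < p.2 ∧ p.2 ≤ p.1 then (2*p.1-1)^2 + p.1 + p.2 - 1
  else if 1 ≤ p.2 ∧ -p.2 ≤ p.1 ∧ p.1 < p.2 then (2*p.2-1)^2 + 3*p.2 - 1 - p.1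
  else if p.1 ≤ -1 ∧ p.1 ≤ p.2 ∧ p.2 < -p.1 then (2*p.1+1)^2 - 5*p.1 - 1 - p.2
  else if p.2 ≤ -1 ∧ p.2 < p.1 ∧ p.1 ≤ -p.2 then (2*p.2+1)^2 + p.1 - 7*p.2 - 1
  else 0

lemma idx_origin : idxZ (0,0) = 0 := by decide

lemma idx_right (x y : ℤ) (h1 : 1 ≤ x) (h2 : -x < y) (h3 : y ≤ x) :
    idxZ (x,y) = (2*x-1)^2 + x + y - 1 := by
  simp only [idxZ]; rw [if_pos ⟨h1,h2,h3⟩]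

lemma idx_top (x y : ℤ) (h1 : 1 ≤ y) (h2 : -y ≤ x) (h3 : x < y) :
    idxZ (x,y) = (2*y-1)^2 + 3*y - 1 - x := by
  simp only [idxZ]; rw [if_neg (by omega), if_pos ⟨h1,h2,h3⟩]

lemma idx_left (x y : ℤ) (h1 : x ≤ -1) (h2 : x ≤ y) (h3 : y < -x) :
    idxZ (x,y) = (2*x+1)^2 - 5*x - 1 - y := by
  simp only [idxZ]; rw [if_neg (by omega), if_neg (by omega), if_pos ⟨h1,h2,h3⟩]

lemma idx_bottom (x y : ℤ) (h1 : y ≤ -1) (h2 : y < x) (h3 : x ≤ -y) :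
    idxZ (x,y) = (2*y+1)^2 + x - 7*y - 1 := by
  simp only [idxZ]; rw [if_neg (by omega), if_neg (by omega), if_neg (by omega), if_pos ⟨h1,h2,h3⟩]

lemma classify (x y : ℤ) :
    (x = 0 ∧ y = 0) ∨ (1 ≤ x ∧ -x < y ∧ y ≤ x) ∨ (1 ≤ y ∧ -y ≤ x ∧ x < y)
    ∨ (x ≤ -1 ∧ x ≤ y ∧ y < -x) ∨ (y ≤ -1 ∧ y < x ∧ x ≤ -y) := by omega

lemma idxZ_nonneg (p : ℤ × ℤ) : 0 ≤ idxZ p := by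
  obtain ⟨x, y⟩ := p
  rcases classify x y with ⟨hx,hy⟩|⟨h1,h2,h3⟩|⟨h1,h2,h3⟩|⟨h1,h2,h3⟩|⟨h1,h2,h3⟩
  · subst hx; subst hy; rw [idx_origin]
  · rw [idx_right _ _ h1 h2 h3]; nlinarith
  · rw [idx_top _ _ h1 h2 h3]; nlinarith
  · rw [idx_left _ _ h1 h2 h3]; nlinarith
  · rw [idx_bottom _ _ h1 h2 h3]; nlinarith

lemma spiralNext_c1 (x y : ℤ) (h1 : 1 ≤ x) (h2 : y = -x) : spiralNext (x,y) = (x+1,y) := by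
  simp only [spiralNext]; rw [if_pos ⟨h1,h2⟩]
lemma spiralNext_c2 (x y : ℤ) (h1 : 1 ≤ x) (h2 : -x < y) (h3 : y < x) :
    spiralNext (x,y) = (x,y+1) := by
  simp only [spiralNext]; rw [if_neg (by omega), if_pos ⟨h1, by omega, h3⟩]
lemma spiralNext_c3 (x y : ℤ) (h1 : 1 ≤ y) (h2 : -y < x) (h3 : x ≤ y) :
    spiralNext (x,y) = (x-1,y) := by
  simp only [spiralNext]; rw [if_neg (by omega), if_neg (by omega), if_pos ⟨h1,h2,h3⟩]
lemma spiralNext_c4 (x y : ℤ) (h1 : x ≤ -1) (h2 : x < y) (h3 : y ≤ -x) :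
    spiralNext (x,y) = (x,y-1) := by
  simp only [spiralNext]
  rw [if_neg (by omega), if_neg (by omega), if_neg (by omega), if_pos ⟨h1,h2,h3⟩]
lemma spiralNext_c5 (x y : ℤ) (h : (x = 0 ∧ y = 0) ∨ (x = y ∧ y ≤ -1) ∨ (y ≤ -1 ∧ y < x ∧ x < -y)) :
    spiralNext (x,y) = (x+1,y) := by
  simp only [spiralNext]
  rw [if_neg (by omega), if_neg (by omega), if_neg (by omega), if_neg (by omega)]

lemma idx_step (p : ℤ × ℤ) : idxZ (spiralNext p) = idxZ p + 1 := by
  obtain ⟨x, y⟩ := p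
  rcases (by omega : (1 ≤ x ∧ y = -x) ∨ (1 ≤ x ∧ -x < y ∧ y < x) ∨ (1 ≤ y ∧ -y < x ∧ x ≤ y)
      ∨ (x ≤ -1 ∧ x < y ∧ y ≤ -x)
      ∨ ((x = 0 ∧ y = 0) ∨ (x = y ∧ y ≤ -1) ∨ (y ≤ -1 ∧ y < x ∧ x < -y))) with
    ⟨h1,h2⟩|⟨h1,h2,h3⟩|⟨h1,h2,h3⟩|⟨h1,h2,h3⟩|hc
  · rw [spiralNext_c1 x y h1 h2, idx_bottom x y (by omega) (by omega) (by omega),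
      idx_right (x+1) y (by omega) (by omega) (by omega)]
    subst h2; ring
  · rw [spiralNext_c2 x y h1 h2 h3, idx_right x y h1 h2 (by omega),
      idx_right x (y+1) h1 (by omega) (by omega)]
    ring
  · rcases eq_or_lt_of_le h3 with he|hlt
    · subst he
      rw [spiralNext_c3 x x h1 h2 le_rfl, idx_right x x (by omega) (by omega) le_rfl,
        idx_top (x-1) x (by omega) (by omega) (by omega)]
      ring
    · rw [spiralNext_c3 x y h1 h2 h3, idx_top x y h1 (by omega) hlt,
        idx_top (x-1) y h1 (by omega) (by omega)]
      ring
  · rcases eq_or_lt_of_le h3 with he|hlt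
    · rw [spiralNext_c4 x y h1 h2 h3, idx_top x y (by omega) (by omega) (by omega),
        idx_left x (y-1) h1 (by omega) (by omega)]
      subst he; ring
    · rw [spiralNext_c4 x y h1 h2 h3, idx_left x y h1 (by omega) hlt,
        idx_left x (y-1) h1 (by omega) (by omega)]
      ring
  · rcases hc with ⟨h1,h2⟩|⟨h1,h2⟩|⟨h1,h2,h3⟩
    · subst h1; subst h2; decide
    · subst h1
      rw [spiralNext_c5 x x (by omega), idx_left x x (by omega) le_rfl (by omega),
        idx_bottom (x+1) x (by omega) (by omega) (by omega)]
      ring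
    · rw [spiralNext_c5 x y (by omega), idx_bottom x y h1 h2 (by omega),
        idx_bottom (x+1) y h1 (by omega) (by omega)]
      ring


lemma idxZ_spiral (n : ℕ) : idxZ (spiral n) = n := by
  induction n with
  | zero => exact idx_origin
  | succ k ih =>
    rw [spiral, Function.iterate_succ_apply', ← spiral, idx_step, ih]; push_cast; ring

lemma spiral_injective : Function.Injective spiral := by
  intro a b h
  have : (a : ℤ) = b := by rw [← idxZ_spiral a, ← idxZ_spiral b, h]
  exact_mod_cast this

def spiralPrev : ℤ × ℤ → ℤ × ℤ := fun p =>
  if 1 ≤ p.1 ∧ p.2 = 1 - p.1 then (p.1 - 1, 1 - p.1)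
  else if 1 ≤ p.1 ∧ 1 - p.1 < p.2 ∧ p.2 ≤ p.1 then (p.1, p.2 - 1)
  else if 1 ≤ p.2 ∧ -p.2 ≤ p.1 ∧ p.1 < p.2 then (p.1 + 1, p.2)
  else if p.1 ≤ -1 ∧ p.1 ≤ p.2 ∧ p.2 < -p.1 then (p.1, p.2 + 1)
  else (p.1 - 1, p.2)

lemma spiralNext_spiralPrev (p : ℤ × ℤ) (hp : p ≠ (0,0)) : spiralNext (spiralPrev p) = p := by
  obtain ⟨x, y⟩ := p
  have hxy : ¬(x = 0 ∧ y = 0) := by simpa [Prod.ext_iff] using hp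
  rcases (by omega : (1 ≤ x ∧ y = 1 - x) ∨ (1 ≤ x ∧ 1 - x < y ∧ y ≤ x)
      ∨ (1 ≤ y ∧ -y ≤ x ∧ x < y) ∨ (x ≤ -1 ∧ x ≤ y ∧ y < -x)
      ∨ (y ≤ -1 ∧ y < x ∧ x ≤ -y)) with
    ⟨h1,h2⟩|⟨h1,h2,h3⟩|⟨h1,h2,h3⟩|⟨h1,h2,h3⟩|⟨h1,h2,h3⟩
  · have e : spiralPrev (x,y) = (x-1, 1-x) := by
      simp only [spiralPrev]; rw [if_pos ⟨h1, h2⟩]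
    rw [e]
    rcases eq_or_lt_of_le h1 with he|hlt
    · have hx1 : x = 1 := he.symm
      subst hx1; subst h2; decide
    · rw [spiralNext_c1 (x-1) (1-x) (by omega) (by omega)]
      simp only [Prod.mk.injEq]; exact ⟨by first | trivial | omega, by first | trivial | omega⟩
  · have e : spiralPrev (x,y) = (x, y-1) := by
      simp only [spiralPrev]; rw [if_neg (by omega), if_pos ⟨h1, h2, h3⟩]
    rw [e, spiralNext_c2 x (y-1) h1 (by omega) (by omega)]
    simp only [Prod.mk.injEq]; exact ⟨by first | trivial | omega, by first | trivial | omega⟩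
  · have e : spiralPrev (x,y) = (x+1, y) := by
      simp only [spiralPrev]; rw [if_neg (by omega), if_neg (by omega), if_pos ⟨h1, h2, h3⟩]
    rw [e, spiralNext_c3 (x+1) y h1 (by omega) (by omega)]
    simp only [Prod.mk.injEq]; exact ⟨by first | trivial | omega, by first | trivial | omega⟩
  · have e : spiralPrev (x,y) = (x, y+1) := by
      simp only [spiralPrev]
      rw [if_neg (by omega), if_neg (by omega), if_neg (by omega), if_pos ⟨h1, h2, h3⟩]
    rw [e, spiralNext_c4 x (y+1) h1 (by omega) (by omega)]
    simp only [Prod.mk.injEq]; exact ⟨by first | trivial | omega, by first | trivial | omega⟩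
  · have e : spiralPrev (x,y) = (x-1, y) := by
      simp only [spiralPrev]
      rw [if_neg (by omega), if_neg (by omega), if_neg (by omega), if_neg (by omega)]
    rw [e, spiralNext_c5 (x-1) y (by omega)]
    simp only [Prod.mk.injEq]; exact ⟨by first | trivial | omega, by first | trivial | omega⟩

lemma idxZ_eq_zero (p : ℤ × ℤ) (h : idxZ p = 0) : p = (0,0) := by
  obtain ⟨x, y⟩ := p
  by_contra hne
  have hxy : ¬(x = 0 ∧ y = 0) := by simpa [Prod.ext_iff] using hne
  rcases classify x y with ⟨hx,hy⟩|⟨h1,h2,h3⟩|⟨h1,h2,h3⟩|⟨h1,h2,h3⟩|⟨h1,h2,h3⟩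
  · exact hxy ⟨hx, hy⟩
  · rw [idx_right x y h1 h2 h3] at h; nlinarith
  · rw [idx_top x y h1 h2 h3] at h; nlinarith
  · rw [idx_left x y h1 h2 h3] at h; nlinarith
  · rw [idx_bottom x y h1 h2 h3] at h; nlinarith

lemma spiral_idxZ (p : ℤ × ℤ) : spiral (idxZ p).toNat = p := by
  generalize hn : (idxZ p).toNat = n
  induction n generalizing p with
  | zero =>
    have h0 : idxZ p = 0 := by have := idxZ_nonneg p; omega
    rw [idxZ_eq_zero p h0]; rfl
  | succ k ih =>
    have hpne : p ≠ (0,0) := by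
      intro h; rw [h, idx_origin] at hn; simp at hn
    have hq := spiralNext_spiralPrev p hpne
    have hk : idxZ (spiralPrev p) = idxZ p - 1 := by
      have := idx_step (spiralPrev p); rw [hq] at this; omega
    have hkn : (idxZ (spiralPrev p)).toNat = k := by
      have := idxZ_nonneg p; omega
    have := ih (spiralPrev p) hkn
    rw [spiral, Function.iterate_succ_apply', ← spiral, this, hq]
section GAP
variable {m n r : ℤ}

lemma witness_trivial (h0 : 0 ≤ m) (h : n ≤ m + 7) :
    ∃ s t : ℤ, 1 ≤ s ∧ 1 ≤ t ∧ (s-1)^2 ≤ m ∧ (t-1)^2 ≤ m + 2*s + 2 ∧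
      n ≤ m + 2*s + 2*t + 3 :=
  ⟨1, 1, le_refl 1, le_refl 1, by nlinarith, by nlinarith, by linarith⟩

lemma witness1 (hr : 1 ≤ r) (h1 : (2*r-1)^2 ≤ m) (h2 : n ≤ m + 8*r + 1) :
    ∃ s t : ℤ, 1 ≤ s ∧ 1 ≤ t ∧ (s-1)^2 ≤ m ∧ (t-1)^2 ≤ m + 2*s + 2 ∧
      n ≤ m + 2*s + 2*t + 3 :=
  ⟨2*r, 2*r, by linarith, by linarith, by nlinarith, by nlinarith, by linarith⟩

lemma witness2 (hr : 1 ≤ r) (h1 : (2*r-1)^2 + 2*r - 1 ≤ m) (h2 : n ≤ m + 8*r + 3) :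
    ∃ s t : ℤ, 1 ≤ s ∧ 1 ≤ t ∧ (s-1)^2 ≤ m ∧ (t-1)^2 ≤ m + 2*s + 2 ∧
      n ≤ m + 2*s + 2*t + 3 :=
  ⟨2*r, 2*r+1, by linarith, by linarith, by nlinarith, by nlinarith, by linarith⟩

lemma witness3 (hr : 1 ≤ r) (h1 : 4*r^2 ≤ m) (h2 : n ≤ m + 8*r + 5) :
    ∃ s t : ℤ, 1 ≤ s ∧ 1 ≤ t ∧ (s-1)^2 ≤ m ∧ (t-1)^2 ≤ m + 2*s + 2 ∧
      n ≤ m + 2*s + 2*t + 3 :=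
  ⟨2*r+1, 2*r+1, by linarith, by linarith, by nlinarith, by nlinarith, by linarith⟩

lemma witness4 (hr : 1 ≤ r) (h1 : 4*r^2 + 2*r ≤ m) (h2 : n ≤ m + 8*r + 7) :
    ∃ s t : ℤ, 1 ≤ s ∧ 1 ≤ t ∧ (s-1)^2 ≤ m ∧ (t-1)^2 ≤ m + 2*s + 2 ∧
      n ≤ m + 2*s + 2*t + 3 :=
  ⟨2*r+1, 2*r+2, by linarith, by linarith, by nlinarith, by nlinarith, by linarith⟩

end GAP

lemma idx_origin' (x y : ℤ) (hx : x = 0) (hy : y = 0) : idxZ (x,y) = 0 := by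
  subst hx; subst hy; exact idx_origin

set_option maxHeartbeats 2000000 in
lemma idx_gap (x y : ℤ) (q : ℤ × ℤ)
    (hq : q = (x+1,y) ∨ q = (x-1,y) ∨ q = (x,y+1) ∨ q = (x,y-1))
    (hlt : idxZ (x,y) < idxZ q) :
    ∃ s t : ℤ, 1 ≤ s ∧ 1 ≤ t ∧ (s-1)^2 ≤ idxZ (x,y) ∧
      (t-1)^2 ≤ idxZ (x,y) + 2*s + 2 ∧ idxZ q ≤ idxZ (x,y) + 2*s + 2*t + 3 := by
  rcases classify x y with ⟨hx,hy⟩|⟨h1,h2,h3⟩|⟨h1,h2,h3⟩|⟨h1,h2,h3⟩|⟨h1,h2,h3⟩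
  · -- origin
    have hm : idxZ (x,y) = 0 := idx_origin' x y hx hy
    rcases hq with h|h|h|h <;> subst h
    · have hn := idx_right (x+1) y (by omega) (by omega) (by omega)
      rw [hm, hn]; exact witness_trivial le_rfl (by nlinarith)
    · have hn := idx_left (x-1) y (by omega) (by omega) (by omega)
      rw [hm, hn]; exact witness_trivial le_rfl (by nlinarith)
    · have hn := idx_top x (y+1) (by omega) (by omega) (by omega)
      rw [hm, hn]; exact witness_trivial le_rfl (by nlinarith)
    · have hn := idx_bottom x (y-1) (by omega) (by omega) (by omega)
      rw [hm, hn]; exact witness_trivial le_rfl (by nlinarith)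
  · -- right edge: 1 ≤ x, -x < y ≤ x
    have hm := idx_right x y h1 h2 h3
    rcases hq with h|h|h|h <;> subst h
    · have hn := idx_right (x+1) y (by omega) (by omega) (by omega)
      rw [hm, hn]; exact witness1 h1 (by nlinarith) (by nlinarith)
    · -- q = (x-1,y)
      rcases (by omega : (x = 1 ∧ y = 0) ∨ (x = 1 ∧ y = 1) ∨ (2 ≤ x ∧ -(x-1) < y ∧ y ≤ x-1)
          ∨ (2 ≤ x ∧ y = x) ∨ (2 ≤ x ∧ y = 1-x)) with ⟨e1,e2⟩|⟨e1,e2⟩|⟨e1,e2,e3⟩|⟨e1,e2⟩|⟨e1,e2⟩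
      · exfalso; have hn := idx_origin' (x-1) y (by omega) (by omega)
        rw [hm, hn] at hlt; nlinarith
      · have hn := idx_top (x-1) y (by omega) (by omega) (by omega)
        rw [hm, hn]; exact witness_trivial (by nlinarith) (by nlinarith)
      · exfalso; have hn := idx_right (x-1) y (by omega) (by omega) (by omega)
        rw [hm, hn] at hlt; nlinarith
      · have hn := idx_top (x-1) y (by omega) (by omega) (by omega)
        rw [hm, hn]; exact witness_trivial (by nlinarith) (by nlinarith)
      · exfalso; have hn := idx_bottom (x-1) y (by omega) (by omega) (by omega)
        rw [hm, hn] at hlt; nlinarith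
    · -- q = (x,y+1)
      rcases (by omega : (y + 1 ≤ x) ∨ (y = x)) with e|e
      · have hn := idx_right x (y+1) h1 (by omega) (by omega)
        rw [hm, hn]; exact witness_trivial (by nlinarith) (by nlinarith)
      · have hn := idx_top x (y+1) (by omega) (by omega) (by omega)
        rw [hm, hn]; exact witness2 h1 (by nlinarith) (by nlinarith)
    · -- q = (x,y-1)
      rcases (by omega : (-x < y - 1) ∨ (y = 1 - x)) with e|e
      · exfalso; have hn := idx_right x (y-1) h1 e (by omega)
        rw [hm, hn] at hlt; nlinarith
      · have hn := idx_bottom x (y-1) (by omega) (by omega) (by omega)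
        rw [hm, hn]; exact witness1 h1 (by nlinarith) (by nlinarith)
  · -- top edge: 1 ≤ y, -y ≤ x < y
    have hm := idx_top x y h1 h2 h3
    rcases hq with h|h|h|h <;> subst h
    · -- q = (x+1,y)
      rcases (by omega : (x + 1 < y) ∨ (x + 1 = y)) with e|e
      · exfalso; have hn := idx_top (x+1) y h1 (by omega) e
        rw [hm, hn] at hlt; nlinarith
      · exfalso; have hn := idx_right (x+1) y (by omega) (by omega) (by omega)
        rw [hm, hn] at hlt; nlinarith
    · -- q = (x-1,y)
      rcases (by omega : (-y ≤ x - 1) ∨ (x = -y)) with e|e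
      · have hn := idx_top (x-1) y h1 e (by omega)
        rw [hm, hn]; exact witness_trivial (by nlinarith) (by nlinarith)
      · have hn := idx_left (x-1) y (by omega) (by omega) (by omega)
        rw [hm, hn]; exact witness3 (r := y) h1 (by nlinarith) (by nlinarith)
    · -- q = (x,y+1)
      have hn := idx_top x (y+1) (by omega) (by omega) (by omega)
      rw [hm, hn]; exact witness2 h1 (by nlinarith) (by nlinarith)
    · -- q = (x,y-1)
      rcases (by omega : (x = -y ∧ 1 ≤ y) ∨ (x = 0 ∧ y = 1) ∨ (x = y - 1 ∧ 1 ≤ x)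
          ∨ (-(y-1) ≤ x ∧ x < y - 1 ∧ 1 ≤ y - 1)) with ⟨e1,e2⟩|⟨e1,e2⟩|⟨e1,e2⟩|⟨e1,e2,e3⟩
      · have hn := idx_left x (y-1) (by omega) (by omega) (by omega)
        rw [hm, hn]; exact witness_trivial (by nlinarith) (by nlinarith)
      · exfalso; have hn := idx_origin' x (y-1) (by omega) (by omega)
        rw [hm, hn] at hlt; nlinarith
      · exfalso; have hn := idx_right x (y-1) (by omega) (by omega) (by omega)
        rw [hm, hn] at hlt; nlinarith
      · exfalso; have hn := idx_top x (y-1) e3 e1 e2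
        rw [hm, hn] at hlt; nlinarith
  · -- left edge: x ≤ -1, x ≤ y < -x
    have hm := idx_left x y h1 h2 h3
    rcases hq with h|h|h|h <;> subst h
    · -- q = (x+1,y)
      rcases (by omega : (x = -1 ∧ y = 0) ∨ (x = -1 ∧ y = -1) ∨ (x ≤ -2 ∧ y = x)
          ∨ (x ≤ -2 ∧ y = -x-1) ∨ (x ≤ -2 ∧ x + 1 ≤ y ∧ y < -x-1))
        with ⟨e1,e2⟩|⟨e1,e2⟩|⟨e1,e2⟩|⟨e1,e2⟩|⟨e1,e2,e3⟩
      · exfalso; have hn := idx_origin' (x+1) y (by omega) (by omega)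
        rw [hm, hn] at hlt; nlinarith
      · have hn := idx_bottom (x+1) y (by omega) (by omega) (by omega)
        rw [hm, hn]; exact witness_trivial (by nlinarith) (by nlinarith)
      · have hn := idx_bottom (x+1) y (by omega) (by omega) (by omega)
        rw [hm, hn]; exact witness_trivial (by nlinarith) (by nlinarith)
      · exfalso; have hn := idx_top (x+1) y (by omega) (by omega) (by omega)
        rw [hm, hn] at hlt; nlinarith
      · exfalso; have hn := idx_left (x+1) y (by omega) e2 (by omega)
        rw [hm, hn] at hlt; nlinarith
    · -- q = (x-1,y)
      have hn := idx_left (x-1) y (by omega) (by omega) (by omega)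
      rw [hm, hn]; exact witness3 (r := -x) (by omega) (by nlinarith) (by nlinarith)
    · -- q = (x,y+1)
      rcases (by omega : (y + 1 < -x) ∨ (y + 1 = -x)) with e|e
      · exfalso; have hn := idx_left x (y+1) h1 (by omega) e
        rw [hm, hn] at hlt; nlinarith
      · exfalso; have hn := idx_top x (y+1) (by omega) (by omega) (by omega)
        rw [hm, hn] at hlt; nlinarith
    · -- q = (x,y-1)
      rcases (by omega : (x ≤ y - 1) ∨ (y = x)) with e|e
      · have hn := idx_left x (y-1) h1 e (by omega)
        rw [hm, hn]; exact witness_trivial (by nlinarith) (by nlinarith)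
      · have hn := idx_bottom x (y-1) (by omega) (by omega) (by omega)
        rw [hm, hn]; exact witness4 (r := -y) (by omega) (by nlinarith) (by nlinarith)
  · -- bottom edge: y ≤ -1, y < x ≤ -y
    have hm := idx_bottom x y h1 h2 h3
    rcases hq with h|h|h|h <;> subst h
    · -- q = (x+1,y)
      rcases (by omega : (x + 1 ≤ -y) ∨ (x = -y)) with e|e
      · have hn := idx_bottom (x+1) y h1 (by omega) e
        rw [hm, hn]; exact witness_trivial (by nlinarith) (by nlinarith)
      · have hn := idx_right (x+1) y (by omega) (by omega) (by omega)
        rw [hm, hn]; exact witness_trivial (by nlinarith) (by nlinarith)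
    · -- q = (x-1,y)
      rcases (by omega : (y < x - 1) ∨ (x = y + 1)) with e|e
      · exfalso; have hn := idx_bottom (x-1) y h1 e (by omega)
        rw [hm, hn] at hlt; nlinarith
      · exfalso; have hn := idx_left (x-1) y (by omega) (by omega) (by omega)
        rw [hm, hn] at hlt; nlinarith
    · -- q = (x,y+1)
      rcases (by omega : (y + 1 ≤ -1 ∧ y + 1 < x ∧ x ≤ -y-1) ∨ (x = -y ∧ y ≤ -1)
          ∨ (x = y + 1 ∧ y ≤ -2) ∨ (y = -1 ∧ x = 1) ∨ (y = -1 ∧ x = 0))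
        with ⟨e1,e2,e3⟩|⟨e1,e2⟩|⟨e1,e2⟩|⟨e1,e2⟩|⟨e1,e2⟩
      · exfalso; have hn := idx_bottom x (y+1) e1 e2 (by omega)
        rw [hm, hn] at hlt; nlinarith
      · exfalso; have hn := idx_right x (y+1) (by omega) (by omega) (by omega)
        rw [hm, hn] at hlt; nlinarith
      · exfalso; have hn := idx_left x (y+1) (by omega) (by omega) (by omega)
        rw [hm, hn] at hlt; nlinarith
      · exfalso; have hn := idx_right x (y+1) (by omega) (by omega) (by omega)
        rw [hm, hn] at hlt; nlinarith
      · exfalso; have hn := idx_origin' x (y+1) (by omega) (by omega)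
        rw [hm, hn] at hlt; nlinarith
    · -- q = (x,y-1)
      have hn := idx_bottom x (y-1) (by omega) (by omega) (by omega)
      rw [hm, hn]
      refine witness4 (r := -y) (by omega) ?_ ?_
      · have e1 : 4*(-y)^2 = 4*y^2 := by ring
        have e2 : (2*y+1)^2 = 4*y^2+4*y+1 := by ring
        linarith
      · have e1 : (2*(y-1)+1)^2 = 4*y^2-4*y+1 := by ring
        have e2 : (2*y+1)^2 = 4*y^2+4*y+1 := by ring
        linarith
set_option maxHeartbeats 1000000
open Finset in
lemma subset_product' (A : Finset (ℤ×ℤ)) : A ⊆ (A.image Prod.fst) ×ˢ (A.image Prod.snd) := by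
  intro p hp
  rw [Finset.mem_product]
  exact ⟨Finset.mem_image_of_mem _ hp, Finset.mem_image_of_mem _ hp⟩

noncomputable def colTop (A : Finset (ℤ×ℤ)) (x : ℤ) : ℤ :=
  if h : ((A.filter (fun p => p.1 = x)).image Prod.snd).Nonempty then Finset.max' _ h else 0
noncomputable def colBot (A : Finset (ℤ×ℤ)) (x : ℤ) : ℤ :=
  if h : ((A.filter (fun p => p.1 = x)).image Prod.snd).Nonempty then Finset.min' _ h else 0

lemma col_nonempty {A : Finset (ℤ×ℤ)} {x : ℤ} (h : x ∈ A.image Prod.fst) :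
    ((A.filter (fun p => p.1 = x)).image Prod.snd).Nonempty := by
  obtain ⟨p, hp, rfl⟩ := Finset.mem_image.1 h
  exact ⟨p.2, Finset.mem_image_of_mem _ (Finset.mem_filter.2 ⟨hp, rfl⟩)⟩

lemma colTop_mem {A : Finset (ℤ×ℤ)} {x : ℤ} (h : x ∈ A.image Prod.fst) :
    (x, colTop A x) ∈ A := by
  have hne := col_nonempty h
  have hmax := Finset.max'_mem _ hne
  have : colTop A x = Finset.max' _ hne := dif_pos hne
  rw [this]
  obtain ⟨p, hp, hps⟩ := Finset.mem_image.1 hmax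
  obtain ⟨hpA, hpx⟩ := Finset.mem_filter.1 hp
  have : p = (x, Finset.max' _ hne) := by
    apply Prod.ext <;> simp [hpx, hps]
  rwa [← this]

lemma le_colTop {A : Finset (ℤ×ℤ)} {x y : ℤ} (h : (x,y) ∈ A) : y ≤ colTop A x := by
  have hx : x ∈ A.image Prod.fst := Finset.mem_image_of_mem _ h
  have hne := col_nonempty hx
  have : colTop A x = Finset.max' _ hne := dif_pos hne
  rw [this]
  refine Finset.le_max' _ y ?_
  exact Finset.mem_image_of_mem Prod.snd (Finset.mem_filter.2 ⟨h, show (x,y).1 = x from rfl⟩)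

lemma colBot_mem {A : Finset (ℤ×ℤ)} {x : ℤ} (h : x ∈ A.image Prod.fst) :
    (x, colBot A x) ∈ A := by
  have hne := col_nonempty h
  have hmin := Finset.min'_mem _ hne
  have : colBot A x = Finset.min' _ hne := dif_pos hne
  rw [this]
  obtain ⟨p, hp, hps⟩ := Finset.mem_image.1 hmin
  obtain ⟨hpA, hpx⟩ := Finset.mem_filter.1 hp
  have : p = (x, Finset.min' _ hne) := by
    apply Prod.ext <;> simp [hpx, hps]
  rwa [← this]

lemma colBot_le {A : Finset (ℤ×ℤ)} {x y : ℤ} (h : (x,y) ∈ A) : colBot A x ≤ y := by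
  have hx : x ∈ A.image Prod.fst := Finset.mem_image_of_mem _ h
  have hne := col_nonempty hx
  have : colBot A x = Finset.min' _ hne := dif_pos hne
  rw [this]
  refine Finset.min'_le _ y ?_
  exact Finset.mem_image_of_mem Prod.snd (Finset.mem_filter.2 ⟨h, show (x,y).1 = x from rfl⟩)

lemma cols_bound (A B : Finset (ℤ×ℤ)) (hA : A.Nonempty) (hAB : A ⊆ B)
    (hnb : ∀ p ∈ A, ∀ q : ℤ×ℤ, |p.1 - q.1| + |p.2 - q.2| = 1 → q ∈ B) :
    A.card + 2*(A.image Prod.fst).card + 2 ≤ B.card := by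
  classical
  set C := A.image Prod.fst with hC
  have hCne : C.Nonempty := hA.image _
  set T : Finset (ℤ×ℤ) := C.image (fun x => (x, colTop A x + 1)) with hT
  set Bo : Finset (ℤ×ℤ) := C.image (fun x => (x, colBot A x - 1)) with hBo
  set xmax := C.max' hCne with hxmax
  set xmin := C.min' hCne with hxmin
  set eR : ℤ×ℤ := (xmax + 1, colTop A xmax) with heR
  set eL : ℤ×ℤ := (xmin - 1, colTop A xmin) with heL
  -- membership in B
  have hTB : T ⊆ B := by
    intro p hp
    obtain ⟨x, hx, rfl⟩ := Finset.mem_image.1 hp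
    exact hnb _ (colTop_mem hx) _ (by norm_num)
  have hBoB : Bo ⊆ B := by
    intro p hp
    obtain ⟨x, hx, rfl⟩ := Finset.mem_image.1 hp
    exact hnb _ (colBot_mem hx) _ (by norm_num)
  have heRB : eR ∈ B := hnb _ (colTop_mem (C.max'_mem hCne)) _
    (by show |xmax - (xmax+1)| + |colTop A xmax - colTop A xmax| = 1; norm_num)
  have heLB : eL ∈ B := hnb _ (colTop_mem (C.min'_mem hCne)) _
    (by show |xmin - (xmin-1)| + |colTop A xmin - colTop A xmin| = 1; norm_num)
  -- fst characterizations
  have hTfst : ∀ p ∈ T, p.1 ∈ C ∧ p.2 = colTop A p.1 + 1 := by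
    intro p hp; obtain ⟨x, hx, rfl⟩ := Finset.mem_image.1 hp; exact ⟨hx, rfl⟩
  have hBofst : ∀ p ∈ Bo, p.1 ∈ C ∧ p.2 = colBot A p.1 - 1 := by
    intro p hp; obtain ⟨x, hx, rfl⟩ := Finset.mem_image.1 hp; exact ⟨hx, rfl⟩
  -- disjointness
  have hAT : Disjoint A T := by
    rw [Finset.disjoint_left]
    intro p hpA hpT
    obtain ⟨hx, hy⟩ := hTfst p hpT
    have := le_colTop (show (p.1, p.2) ∈ A by simpa using hpA)
    omega
  have hABo : Disjoint A Bo := by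
    rw [Finset.disjoint_left]
    intro p hpA hpB
    obtain ⟨hx, hy⟩ := hBofst p hpB
    have := colBot_le (show (p.1, p.2) ∈ A by simpa using hpA)
    omega
  have hTBo : Disjoint T Bo := by
    rw [Finset.disjoint_left]
    intro p hpT hpB
    obtain ⟨hx1, hy1⟩ := hTfst p hpT
    obtain ⟨hx2, hy2⟩ := hBofst p hpB
    have h1 := le_colTop (colBot_mem hx1)
    omega
  have hfstC : ∀ p ∈ A ∪ T ∪ Bo, xmin ≤ p.1 ∧ p.1 ≤ xmax := by
    intro p hp
    have : p.1 ∈ C := by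
      rcases Finset.mem_union.1 hp with hp | hp
      · rcases Finset.mem_union.1 hp with hp | hp
        · exact Finset.mem_image_of_mem _ hp
        · exact (hTfst p hp).1
      · exact (hBofst p hp).1
    exact ⟨C.min'_le _ this, C.le_max' _ this⟩
  have heRout : eR ∉ A ∪ T ∪ Bo := by
    intro h
    have h2 := hfstC _ h
    have h3 : xmax + 1 ≤ xmax := h2.2
    omega
  have heLout : eL ∉ A ∪ T ∪ Bo := by
    intro h
    have h2 := hfstC _ h
    have h3 : xmin ≤ xmin - 1 := h2.1
    omega
  have heRL : eR ≠ eL := by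
    intro h
    have h1 : xmin ≤ xmax := C.min'_le _ (C.max'_mem hCne)
    have h3 : xmax + 1 = xmin - 1 := congrArg Prod.fst h
    omega
  -- cardinalities
  have hTcard : T.card = C.card := by
    rw [hT]
    apply Finset.card_image_of_injOn
    intro a _ b _ h
    exact congrArg Prod.fst h
  have hBocard : Bo.card = C.card := by
    rw [hBo]
    apply Finset.card_image_of_injOn
    intro a _ b _ h
    exact congrArg Prod.fst h
  have hsub : insert eR (insert eL (A ∪ T ∪ Bo)) ⊆ B := by
    intro p hp
    rcases Finset.mem_insert.1 hp with rfl | hp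
    · exact heRB
    rcases Finset.mem_insert.1 hp with rfl | hp
    · exact heLB
    rcases Finset.mem_union.1 hp with hp | hp
    · rcases Finset.mem_union.1 hp with hp | hp
      · exact hAB hp
      · exact hTB hp
    · exact hBoB hp
  have hcard : (insert eR (insert eL (A ∪ T ∪ Bo))).card = A.card + 2*C.card + 2 := by
    rw [Finset.card_insert_of_notMem, Finset.card_insert_of_notMem heLout,
      Finset.card_union_of_disjoint, Finset.card_union_of_disjoint hAT, hTcard, hBocard]
    · ring
    · exact Finset.disjoint_union_left.2 ⟨hABo, hTBo⟩
    · simp only [Finset.mem_insert]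
      push_neg
      exact ⟨heRL, heRout⟩
  calc A.card + 2*C.card + 2 = (insert eR (insert eL (A ∪ T ∪ Bo))).card := hcard.symm
    _ ≤ B.card := Finset.card_le_card hsub

lemma rows_bound (A B : Finset (ℤ×ℤ)) (hA : A.Nonempty) (hAB : A ⊆ B)
    (hnb : ∀ p ∈ A, ∀ q : ℤ×ℤ, |p.1 - q.1| + |p.2 - q.2| = 1 → q ∈ B) :
    A.card + 2*(A.image Prod.snd).card + 2 ≤ B.card := by
  classical
  have hswapinj : Function.Injective (Prod.swap : ℤ×ℤ → ℤ×ℤ) := Prod.swap_injective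
  have h := cols_bound (A.image Prod.swap) (B.image Prod.swap)
    (hA.image _) (Finset.image_subset_image hAB) ?_
  · rw [Finset.card_image_of_injective _ hswapinj, Finset.card_image_of_injective _ hswapinj,
      Finset.image_image] at h
    convert h using 3
    rfl
  · intro p hp q hadj
    obtain ⟨p', hp', rfl⟩ := Finset.mem_image.1 hp
    have : q.swap ∈ B := by
      apply hnb _ hp'
      have h1 : (p'.swap).1 = p'.2 := rfl
      have h2 : (p'.swap).2 = p'.1 := rfl
      rw [h1, h2] at hadj
      rw [Prod.fst_swap, Prod.snd_swap]; linarith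
    have := Finset.mem_image_of_mem Prod.swap this
    rwa [Prod.swap_swap] at this

lemma expand_card (A B : Finset (ℤ×ℤ)) (hA : A.Nonempty) (hAB : A ⊆ B)
    (hnb : ∀ p ∈ A, ∀ q : ℤ×ℤ, |p.1 - q.1| + |p.2 - q.2| = 1 → q ∈ B)
    (s : ℤ) (hs : 1 ≤ s) (hsc : (s-1)^2 < (A.card : ℤ)) :
    (A.card : ℤ) + 2*s + 2 ≤ (B.card : ℤ) := by
  classical
  set c := (A.image Prod.fst).card with hc
  set r := (A.image Prod.snd).card with hr
  have hcr : A.card ≤ c * r := by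
    calc A.card ≤ ((A.image Prod.fst) ×ˢ (A.image Prod.snd)).card :=
          Finset.card_le_card (subset_product' A)
      _ = c * r := Finset.card_product _ _
  rcases le_total r c with hrc | hrc
  · have hcs : s ≤ (c:ℤ) := by
      by_contra hlt
      push_neg at hlt
      have h1 : (c:ℤ) ≤ s - 1 := by omega
      have h2 : (A.card:ℤ) ≤ (c:ℤ) * (r:ℤ) := by exact_mod_cast hcr
      have h3 : (r:ℤ) ≤ (c:ℤ) := by exact_mod_cast hrc
      nlinarith [Int.ofNat_nonneg r, Int.ofNat_nonneg c]
    have := cols_bound A B hA hAB hnb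
    have hcast : (A.card:ℤ) + 2*(c:ℤ) + 2 ≤ (B.card:ℤ) := by exact_mod_cast this
    linarith
  · have hcs : s ≤ (r:ℤ) := by
      by_contra hlt
      push_neg at hlt
      have h1 : (r:ℤ) ≤ s - 1 := by omega
      have h2 : (A.card:ℤ) ≤ (c:ℤ) * (r:ℤ) := by exact_mod_cast hcr
      have h3 : (c:ℤ) ≤ (r:ℤ) := by exact_mod_cast hrc
      nlinarith [Int.ofNat_nonneg r, Int.ofNat_nonneg c]
    have := rows_bound A B hA hAB hnb
    have hcast : (A.card:ℤ) + 2*(r:ℤ) + 2 ≤ (B.card:ℤ) := by exact_mod_cast this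
    linarith

set_option maxHeartbeats 200000

lemma grid_adj_cases {p q : ℤ×ℤ} (h : |p.1 - q.1| + |p.2 - q.2| = 1) :
    q = (p.1+1,p.2) ∨ q = (p.1-1,p.2) ∨ q = (p.1,p.2+1) ∨ q = (p.1,p.2-1) := by
  obtain ⟨a,b⟩ := p; obtain ⟨c,d⟩ := q
  simp only [Prod.mk.injEq]
  rcases abs_cases (a - c) with ⟨e1,f1⟩|⟨e1,f1⟩ <;> rcases abs_cases (b - d) with ⟨e2,f2⟩|⟨e2,f2⟩ <;>
    rw [e1,e2] at h <;> omega

/-- For a finitely supported `f : ℤ² → ℝ_{≥0}`, the spiral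
rearrangement `f*` satisfies `‖∇f*‖_{L^∞} ≤ 2‖∇f‖_{L^∞}` on the grid graph `(ℤ², ℓ¹)`. -/
theorem spiral_polya_szego_Linf (f fstar : ℤ × ℤ → ℝ)
    (hsupp : (Function.support f).Finite) (hpos : ∀ x, 0 ≤ f x)
    (hre : IsRearrangement spiral f fstar) :
    gradLinf gridGraph fstar ≤ 2 * gradLinf gridGraph f := by
  classical
  obtain ⟨⟨σ, hσ⟩, hmono⟩ := hre
  set ε := gradLinf gridGraph f with hε
  set F := hsupp.toFinset with hF
  set CC := (insert (0:ℝ) (F.image f)).max' (Finset.insert_nonempty _ _) with hCC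
  have hC0 : (0:ℝ) ≤ CC := Finset.le_max' _ _ (Finset.mem_insert_self _ _)
  have hCb : ∀ x, f x ≤ CC := by
    intro x
    by_cases hx : f x = 0
    · rw [hx]; exact hC0
    · exact Finset.le_max' _ _ (Finset.mem_insert_of_mem
        (Finset.mem_image_of_mem f (hsupp.mem_toFinset.2 hx)))
  have hbdd : BddAbove (Set.range (fun e : gridGraph.edgeSet =>
      Sym2.lift ⟨fun u w => |f u - f w|,
        fun u w => by dsimp only; rw [abs_sub_comm]⟩ e.1)) := by
    refine ⟨CC, ?_⟩
    rintro v ⟨e, rfl⟩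
    obtain ⟨e, he⟩ := e
    induction e using Sym2.ind with
    | _ u w =>
      simp only [Sym2.lift_mk]
      rw [abs_sub_le_iff]
      constructor <;> [linarith [hpos w, hCb u]; linarith [hpos u, hCb w]]
  have key : ∀ u w : ℤ×ℤ, gridGraph.Adj u w → |f u - f w| ≤ ε := by
    intro u w h
    have := le_ciSup hbdd (⟨s(u,w), (SimpleGraph.mem_edgeSet _).2 h⟩ : gridGraph.edgeSet)
    exact this
  have hε0 : 0 ≤ ε := by
    have h01 : gridGraph.Adj (0,0) (1,0) := by
      show |(0:ℤ) - 1| + |(0:ℤ) - 0| = 1; norm_num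
    exact le_trans (abs_nonneg _) (key _ _ h01)
  have hfst0 : ∀ x, 0 ≤ fstar x := by intro x; rw [hσ]; exact hpos _
  set S : ℝ → Finset (ℤ×ℤ) := fun t => F.filter (fun x => t ≤ f x) with hS
  have hmemS : ∀ t : ℝ, 0 < t → ∀ x, t ≤ f x → x ∈ S t := by
    intro t ht x hx
    refine Finset.mem_filter.2 ⟨hsupp.mem_toFinset.2 ?_, hx⟩
    intro h0; rw [h0] at hx; linarith
  have hScard : ∀ k : ℕ, 0 < fstar (spiral k) → k + 1 ≤ (S (fstar (spiral k))).card := by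
    intro k hk
    have h1 : (Finset.range (k+1)).card ≤ (S (fstar (spiral k))).card := by
      apply Finset.card_le_card_of_injOn (fun j => σ (spiral j))
      · intro j hj
        rw [Finset.mem_coe, Finset.mem_range] at hj
        rw [Finset.mem_coe]
        apply hmemS _ hk
        have h1 : fstar (spiral k) ≤ fstar (spiral j) := hmono j k (by omega)
        have h2 : fstar (spiral j) = f (σ (spiral j)) := by rw [hσ]; rfl
        linarith
      · intro j1 _ j2 _ he
        exact spiral_injective (σ.injective he)
    simpa using h1
  have hrank : ∀ (t : ℝ) (k : ℕ), k + 1 ≤ (S t).card → t ≤ fstar (spiral k) := by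
    intro t k hcard
    by_contra hlt
    push_neg at hlt
    have h1 : (S t).card ≤ (Finset.range k).card := by
      apply Finset.card_le_card_of_injOn (fun x => (idxZ (σ.symm x)).toNat)
      · intro x hx
        have hx2 : t ≤ f x := (Finset.mem_filter.1 hx).2
        simp only [Finset.mem_coe, Finset.mem_range]
        by_contra hge
        push_neg at hge
        have he : spiral ((idxZ (σ.symm x)).toNat) = σ.symm x := spiral_idxZ _
        have h1 : fstar (spiral ((idxZ (σ.symm x)).toNat)) ≤ fstar (spiral k) := hmono k _ hge
        rw [he] at h1
        have h2 : fstar (σ.symm x) = f x := by rw [hσ]; simp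
        linarith [hx2]
      · intro x1 h1 x2 h2 he
        have e1 : spiral ((idxZ (σ.symm x1)).toNat) = σ.symm x1 := spiral_idxZ _
        have e2 : spiral ((idxZ (σ.symm x2)).toNat) = σ.symm x2 := spiral_idxZ _
        have : σ.symm x1 = σ.symm x2 := by rw [← e1, ← e2]; exact congrArg spiral he
        exact σ.symm.injective this
    rw [Finset.card_range] at h1
    omega
  have hsubS : ∀ t t' : ℝ, t' ≤ t → S t ⊆ S t' := by
    intro t t' htt x hx
    obtain ⟨h1, h2⟩ := Finset.mem_filter.1 hx
    exact Finset.mem_filter.2 ⟨h1, by linarith⟩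
  have hnbS : ∀ t : ℝ, 0 < t - ε → ∀ p ∈ S t, ∀ q : ℤ×ℤ,
      |p.1 - q.1| + |p.2 - q.2| = 1 → q ∈ S (t - ε) := by
    intro t ht p hp q hadj'
    have hpf : t ≤ f p := (Finset.mem_filter.1 hp).2
    have hk : |f p - f q| ≤ ε := key p q hadj'
    apply hmemS _ ht
    have h2 : f p - f q ≤ ε := le_trans (le_abs_self _) hk
    linarith
  have core : ∀ u w : ℤ×ℤ, gridGraph.Adj u w → idxZ u < idxZ w →
      fstar w ≤ fstar u ∧ fstar u - fstar w ≤ 2*ε := by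
    intro u w hadj hlt
    have hmZ : ((idxZ u).toNat : ℤ) = idxZ u := Int.toNat_of_nonneg (idxZ_nonneg u)
    have hnZ : ((idxZ w).toNat : ℤ) = idxZ w := Int.toNat_of_nonneg (idxZ_nonneg w)
    set m := (idxZ u).toNat with hm
    set n := (idxZ w).toNat with hn
    have hu : spiral m = u := spiral_idxZ u
    have hw : spiral n = w := spiral_idxZ w
    have hmn : m ≤ n := by omega
    have hmono' : fstar w ≤ fstar u := by rw [← hu, ← hw]; exact hmono m n hmn
    refine ⟨hmono', ?_⟩
    by_contra hcon
    push_neg at hcon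
    have ha2 : 0 < fstar u - 2*ε := by have := hfst0 w; linarith
    have ha1 : 0 < fstar u - ε := by linarith
    have ha0 : 0 < fstar u := by linarith
    have hAcard : (m:ℤ) + 1 ≤ ((S (fstar u)).card : ℤ) := by
      have h1 := hScard m (by rw [hu]; exact ha0)
      rw [hu] at h1
      exact_mod_cast h1
    obtain ⟨s, t, hs1, ht1, hsm, htm, hgap⟩ :=
      idx_gap u.1 u.2 w (grid_adj_cases hadj) (by rw [Prod.mk.eta]; exact hlt)
    rw [Prod.mk.eta] at hsm htm hgap
    have hAne : (S (fstar u)).Nonempty := by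
      rw [← Finset.card_pos]
      omega
    have hB := expand_card (S (fstar u)) (S (fstar u - ε)) hAne
      (hsubS _ _ (by linarith)) (hnbS _ ha1) s hs1 (by omega)
    have hBne : (S (fstar u - ε)).Nonempty := by
      rw [← Finset.card_pos]
      omega
    have hDeq : fstar u - ε - ε = fstar u - 2*ε := by ring
    have hD := expand_card (S (fstar u - ε)) (S (fstar u - ε - ε)) hBne
      (hsubS _ _ (by linarith)) (hnbS _ (by linarith)) t ht1 (by omega)
    rw [hDeq] at hD
    have hcard : n + 1 ≤ (S (fstar u - 2*ε)).card := by
      have : ((n:ℤ)) + 1 ≤ ((S (fstar u - 2*ε)).card : ℤ) := by omega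
      exact_mod_cast this
    have hfin := hrank (fstar u - 2*ε) n hcard
    rw [hw] at hfin
    linarith
  refine Real.iSup_le ?_ (by linarith)
  rintro ⟨e, he⟩
  induction e using Sym2.ind with
  | _ u w =>
    simp only [Sym2.lift_mk]
    have hadj : gridGraph.Adj u w := (SimpleGraph.mem_edgeSet _).1 he
    have hne : idxZ u ≠ idxZ w := by
      intro h
      have : u = w := by rw [← spiral_idxZ u, ← spiral_idxZ w, h]
      exact hadj.ne this
    rcases lt_or_gt_of_ne hne with h|h
    · obtain ⟨h1, h2⟩ := core u w hadj h
      rw [abs_sub_le_iff]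
      exact ⟨h2, by linarith⟩
    · obtain ⟨h1, h2⟩ := core w u hadj.symm h
      rw [abs_sub_comm, abs_sub_le_iff]
      exact ⟨h2, by linarith⟩
end

section
/- Let G=(V,E) be a countably infinite, connected, locally finite simple graph whose vertex-isoperimetric profile ∂_V : ℕ → ℕ is non-decreasing. Suppose v₁,v₂,… is a bijective enumeration of V such that, for some integer c ≥ 1 and all N ∈ ℕ, every vertex u with min_{1≤i≤N} d(u,v_i) ≤ 1 (graph distance) belongs to {v₁,…,v_{N+c·∂_V(N)}}. Then for every finitely supported f : V → ℝ_{≥0}, the rearrangement f* associated to this enumeration satisfies ‖∇f*‖_{L^∞} ≤ c·‖∇f‖_{L^∞}. -/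
open Real

/-- **$L^∞$-Polya-Szegő.** Let `G` be a countably infinite, connected,
locally finite graph with non-decreasing vertex-isoperimetric profile. If the enumeration
`v` satisfies: every vertex within graph distance `1` of `{v₁,…,v_N}` lies in
`{v₁,…,v_{N+c·∂_V(N)}}`, then the associated rearrangement satisfies
`‖∇f*‖_{L^∞} ≤ c·‖∇f‖_{L^∞}`. -/
theorem polya_szego_Linf {V : Type*} (G : SimpleGraph V) (hconn : G.Connected)
    (hloc : ∀ a : V, (G.neighborSet a).Finite)
    (hmono : Monotone (vertexProfile G))
    (v : ℕ → V) (hv : Function.Bijective v)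
    (c : ℕ) (hc : 1 ≤ c)
    (hnbr : ∀ N : ℕ, ∀ u : V, (∃ i < N, G.dist u (v i) ≤ 1) →
      u ∈ v '' Set.Iio (N + c * vertexProfile G N))
    (f fstar : V → ℝ) (hsupp : (Function.support f).Finite) (hpos : ∀ x, 0 ≤ f x)
    (hre : IsRearrangement v f fstar) :
    gradLinf G fstar ≤ (c : ℝ) * gradLinf G f := by
  classical
  obtain ⟨⟨σ, hσ⟩, hmonog⟩ := hre
  set M := gradLinf G f with hM
  -- finite range of f, hence a uniform bound
  have hrange : (Set.range f).Finite := by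
    have hsub : Set.range f ⊆ insert 0 (f '' Function.support f) := by
      rintro y ⟨x, rfl⟩
      by_cases hx : f x = 0
      · simp [hx]
      · exact Set.mem_insert_of_mem _ ⟨x, hx, rfl⟩
    exact ((hsupp.image f).insert 0).subset hsub
  obtain ⟨B0, hB0⟩ : ∃ B0 : ℝ, ∀ x, |f x| ≤ B0 := by
    obtain ⟨B0, hB0⟩ := (hrange.image abs).bddAbove
    exact ⟨B0, fun x => hB0 ⟨f x, ⟨x, rfl⟩, rfl⟩⟩
  have hbdd : BddAbove (Set.range fun e : G.edgeSet =>
      Sym2.lift ⟨fun u w => |f u - f w|, fun u w => by dsimp only; rw [abs_sub_comm]⟩ e.1) := by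
    refine ⟨2 * B0, ?_⟩
    rintro _ ⟨⟨s, hs⟩, rfl⟩
    have : ∀ s : Sym2 V,
        Sym2.lift ⟨fun u w => |f u - f w|, fun u w => by dsimp only; rw [abs_sub_comm]⟩ s
          ≤ 2 * B0 := by
      intro s
      induction s using Sym2.ind with
      | _ u w =>
        simp only [Sym2.lift_mk]
        calc |f u - f w| ≤ |f u| + |f w| := abs_sub _ _
          _ ≤ B0 + B0 := add_le_add (hB0 u) (hB0 w)
          _ = 2 * B0 := by ring
    exact this s
  have hEdge : ∀ x y, G.Adj x y → |f x - f y| ≤ M := by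
    intro x y hxy
    have h := le_ciSup hbdd (⟨s(x, y), hxy⟩ : G.edgeSet)
    exact h
  have hM0 : 0 ≤ M := by
    apply Real.iSup_nonneg
    rintro ⟨s, hs⟩
    have : ∀ s : Sym2 V, 0 ≤
        Sym2.lift ⟨fun u w => |f u - f w|, fun u w => by dsimp only; rw [abs_sub_comm]⟩ s := by
      intro s
      induction s using Sym2.ind with
      | _ u w => simp [Sym2.lift_mk, abs_nonneg]
    exact this s
  set τ : ℕ → V := fun n => σ (v n) with hτdef
  have hτbij : Function.Bijective τ := σ.bijective.comp hv
  set g : ℕ → ℝ := fun n => fstar (v n) with hgdef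
  have hg : ∀ n, g n = f (τ n) := by
    intro n
    simp [hgdef, hτdef, hσ]
  have hganti : ∀ {m n : ℕ}, m ≤ n → g n ≤ g m := fun {m n} h => hmonog m n h
  have hncard_Iio : ∀ k : ℕ, (Set.Iio k).ncard = k := by
    intro k
    rw [← Finset.coe_range, Set.ncard_coe_finset, Finset.card_range]
  -- Key claim
  have claim : ∀ i : ℕ, g i - M ≤ g (i + vertexProfile G (i + 1)) := by
    intro i
    set P := vertexProfile G (i + 1) with hP
    set A : Set V := τ '' Set.Iio (i + 1) with hA
    have hAfin : A.Finite := (Set.finite_Iio (i + 1)).image τ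
    have hAcard : A.ncard = i + 1 := by
      rw [hA, Set.ncard_image_of_injective _ hτbij.injective, hncard_Iio]
    set Bd : Set V := vertexBoundary G A with hBd
    have hBdfin : Bd.Finite := by
      have hsub : Bd ⊆ ⋃ a ∈ A, G.neighborSet a := by
        rintro x ⟨hxA, w, hwA, hadj⟩
        exact Set.mem_biUnion hwA hadj.symm
      exact (hAfin.biUnion fun a _ => hloc a).subset hsub
    have hPle : P ≤ Bd.ncard := by
      rw [hP, vertexProfile]
      exact Nat.sInf_le ⟨A, hAfin, hAcard, rfl⟩
    have hdisj : Disjoint A Bd := by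
      rw [Set.disjoint_left]
      rintro x hxA ⟨hxnA, -⟩
      exact hxnA hxA
    set T : Set V := A ∪ Bd with hT
    have hTcard : i + 1 + P ≤ T.ncard := by
      rw [hT, Set.ncard_union_eq hdisj hAfin hBdfin, hAcard]
      exact Nat.add_le_add_left hPle (i + 1)
    have ht : ∀ x ∈ T, g i - M ≤ f x := by
      rintro x (⟨j, hj, rfl⟩ | ⟨hxnA, w, ⟨j, hj, rfl⟩, hadj⟩)
      · have h1 : g i ≤ g j := hganti (Nat.lt_succ_iff.mp hj)
        rw [hg j] at h1
        linarith
      · have h1 : g i ≤ g j := hganti (Nat.lt_succ_iff.mp hj)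
        rw [hg j] at h1
        have h2 : |f x - f (τ j)| ≤ M := hEdge _ _ hadj
        have h3 : f (τ j) - f x ≤ M := by
          have := abs_le.mp h2
          linarith [this.1]
        linarith
    by_contra hcon
    push_neg at hcon
    have hLsub : τ ⁻¹' T ⊆ Set.Iio (i + P) := by
      intro n hn
      by_contra hn'
      simp only [Set.mem_Iio, not_lt] at hn'
      have h1 : g i - M ≤ g n := by rw [hg n]; exact ht _ hn
      have h2 : g n ≤ g (i + P) := hganti hn'
      linarith
    have hpreim : T.ncard = (τ ⁻¹' T).ncard := by
      have h := Set.ncard_image_of_injective (τ ⁻¹' T) hτbij.injective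
      rw [Set.image_preimage_eq T hτbij.surjective] at h
      exact h
    have hcard2 : T.ncard ≤ i + P :=
      hpreim ▸ le_of_le_of_eq (Set.ncard_le_ncard hLsub (Set.finite_Iio _)) (hncard_Iio _)
    omega
  -- main estimate for adjacent enumerated vertices
  have key : ∀ m n : ℕ, m < n → G.Adj (v m) (v n) → g m - g n ≤ (c : ℝ) * M := by
    intro m n hmn hadj
    set P0 := vertexProfile G (m + 1) with hP0
    have hdist : G.dist (v n) (v m) ≤ 1 := by
      have h := SimpleGraph.dist_le (hadj.symm.toWalk)
      simpa using h
    obtain ⟨j, hj, hvj⟩ := hnbr (m + 1) (v n) ⟨m, Nat.lt_succ_self m, hdist⟩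
    have hjn : j = n := hv.injective hvj
    have hn' : n < m + 1 + c * P0 := by
      rw [← hjn]
      simpa [hP0] using hj
    have iter : ∀ j : ℕ, g m - (j : ℝ) * M ≤ g (m + j * P0) := by
      intro j
      induction j with
      | zero => simp
      | succ j ih =>
        have h1 := claim (m + j * P0)
        have hmono' : P0 ≤ vertexProfile G (m + j * P0 + 1) := hmono (by omega)
        have h2 : g (m + j * P0 + vertexProfile G (m + j * P0 + 1))
            ≤ g (m + j * P0 + P0) := hganti (by omega)
        have h3 : m + (j + 1) * P0 = m + j * P0 + P0 := by ring
        rw [h3]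
        push_cast
        linarith
    have h4 : g (m + c * P0) ≤ g n := hganti (by omega)
    have h5 := iter c
    linarith
  have main : ∀ s ∈ G.edgeSet,
      Sym2.lift ⟨fun u w => |fstar u - fstar w|,
        fun u w => by dsimp only; rw [abs_sub_comm]⟩ s ≤ (c : ℝ) * M := by
    intro s
    induction s using Sym2.ind with
    | _ x y =>
      intro hs
      have hadj : G.Adj x y := hs
      obtain ⟨m, rfl⟩ := hv.surjective x
      obtain ⟨n, rfl⟩ := hv.surjective y
      simp only [Sym2.lift_mk]
      have hne : m ≠ n := by
        intro h
        exact hadj.ne (by rw [h])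
      have hgm : fstar (v m) = g m := rfl
      have hgn : fstar (v n) = g n := rfl
      rw [hgm, hgn]
      rcases lt_or_gt_of_ne hne with h | h
      · have h1 := key m n h hadj
        have h2 : g n ≤ g m := hganti h.le
        rw [abs_of_nonneg (by linarith)]
        exact h1
      · have h1 := key n m h hadj.symm
        have h2 : g m ≤ g n := hganti h.le
        rw [abs_of_nonpos (by linarith), neg_sub]
        exact h1
  apply Real.iSup_le
  · rintro ⟨s, hs⟩
    exact main s hs
  · exact mul_nonneg (by positivity) hM0
end

section
/- Let G=(V,E) be a countably infinite, locally finite simple graph and let v₁,v₂,… be a bijective enumeration of V such that for all N ∈ ℕ both ∂_V(N) = #∂_E({v₁,…,v_N}) (where ∂_V(N) is the vertex-isoperimetric profile) and ∂_V({v₁,…,v_N}) ⊆ {v₁,…,v_{N+∂_V(N)}}. Then for every finitely supported f : V → ℝ_{≥0} and every real p with 1 ≤ p < ∞, and also for p = ∞, the rearrangement f* associated to this enumeration satisfies ‖∇f*‖_{L^p} ≤ ‖∇f‖_{L^p}. -/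
open Real

noncomputable def PS_Phi (p x y : ℝ) : ℝ := (max (y - x) 0) ^ p

private lemma PS_Phi_nonneg (p x y : ℝ) : 0 ≤ PS_Phi p x y :=
  Real.rpow_nonneg (le_max_right _ _) p

private lemma PS_Phi_zero {p : ℝ} (hp : p ≠ 0) {x y : ℝ} (h : y ≤ x) : PS_Phi p x y = 0 := by
  rw [PS_Phi, max_eq_right (sub_nonpos.mpr h), Real.zero_rpow hp]

private lemma PS_Phi_eq (p : ℝ) {x y : ℝ} (h : x ≤ y) : PS_Phi p x y = (y - x) ^ p := by
  rw [PS_Phi, max_eq_left (sub_nonneg.mpr h)]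

private lemma PS_rpow_superadd {p : ℝ} (hp : 1 ≤ p) {a b : ℝ} (ha : 0 ≤ a) (hb : 0 ≤ b) :
    a ^ p + b ^ p ≤ (a + b) ^ p := by
  have h := NNReal.add_rpow_le_rpow_add (a.toNNReal) (b.toNNReal) hp
  have h2 := NNReal.coe_le_coe.mpr h
  simp only [NNReal.coe_rpow, NNReal.coe_add, Real.coe_toNNReal _ ha,
    Real.coe_toNNReal _ hb] at h2
  exact h2

private lemma PS_fourpoint {p : ℝ} (hp : 1 ≤ p) {s1 s2 t1 t2 : ℝ}
    (h12 : s1 ≤ s2) (htt : t1 ≤ t2) (h11 : s1 ≤ t1) (h22 : s2 ≤ t2) :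
    PS_Phi p s1 t1 + PS_Phi p s2 t2 ≤ PS_Phi p s1 t2 + PS_Phi p s2 t1 := by
  have hp0 : p ≠ 0 := by intro h; rw [h] at hp; linarith
  rcases le_or_gt s2 t1 with hc | hc
  · rw [PS_Phi_eq p h11, PS_Phi_eq p h22, PS_Phi_eq p (le_trans h11 htt), PS_Phi_eq p hc]
    set A := t2 - s1 with hA
    set m := t1 - s2 with hm
    set x := t1 - s1 with hx
    set y := t2 - s2 with hy
    have hm0 : 0 ≤ m := sub_nonneg.mpr hc
    have hmx : m ≤ x := by rw [hm, hx]; linarith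
    have hmy : m ≤ y := by rw [hm, hy]; linarith
    have hxA : x ≤ A := by rw [hx, hA]; linarith
    have hyA : y ≤ A := by rw [hy, hA]; linarith
    have hsum : x + y = A + m := by rw [hx, hy, hA, hm]; ring
    have hA0 : 0 ≤ A := le_trans hm0 (le_trans hmx hxA)
    rcases eq_or_lt_of_le (le_trans hmx hxA : m ≤ A) with heq | hlt
    · have hxe : x = A := le_antisymm hxA (heq ▸ hmx)
      have hye : y = A := le_antisymm hyA (heq ▸ hmy)
      rw [hxe, hye, ← heq]
    · set l := (x - m) / (A - m) with hl
      have hAm : 0 < A - m := sub_pos.mpr hlt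
      have hl0 : 0 ≤ l := div_nonneg (sub_nonneg.mpr hmx) hAm.le
      have hl1 : l ≤ 1 := by
        rw [hl, div_le_one hAm]
        linarith
      have hxl : x = l * A + (1 - l) * m := by
        rw [hl]
        field_simp
        ring
      have hyl : y = (1 - l) * A + l * m := by
        have : y = A + m - x := by linarith
        rw [this, hxl]
        ring
      have hconv := convexOn_rpow hp
      have c1 := hconv.2 (Set.mem_Ici.mpr hA0) (Set.mem_Ici.mpr hm0) hl0 (by linarith)
        (by ring : l + (1 - l) = 1)
      have c2 := hconv.2 (Set.mem_Ici.mpr hA0) (Set.mem_Ici.mpr hm0) (by linarith : (0:ℝ) ≤ 1 - l)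
        hl0 (by ring : (1 - l) + l = 1)
      simp only [smul_eq_mul] at c1 c2
      rw [← hxl] at c1
      rw [← hyl] at c2
      calc x ^ p + y ^ p ≤ (l * A ^ p + (1 - l) * m ^ p) + ((1 - l) * A ^ p + l * m ^ p) :=
            add_le_add c1 c2
        _ = A ^ p + m ^ p := by ring
  · rw [PS_Phi_zero hp0 hc.le]
    set a := max (t1 - s1) 0 with ha
    set b := max (t2 - s2) 0 with hb
    have ha0 : 0 ≤ a := le_max_right _ _
    have hb0 : 0 ≤ b := le_max_right _ _
    have habc : a + b ≤ t2 - s1 := by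
      rcases max_cases (t1 - s1) 0 with ⟨h1, h2⟩ | ⟨h1, h2⟩ <;>
        rcases max_cases (t2 - s2) 0 with ⟨h3, h4⟩ | ⟨h3, h4⟩ <;>
        rw [ha, hb, h1, h3] <;> linarith
    have hc0 : (0:ℝ) ≤ t2 - s1 := by linarith
    have step1 : a ^ p + b ^ p ≤ (a + b) ^ p := PS_rpow_superadd hp ha0 hb0
    have step2 : (a + b) ^ p ≤ (t2 - s1) ^ p :=
      Real.rpow_le_rpow (by linarith) habc (by linarith)
    have hΦ2 : PS_Phi p s1 t2 = (t2 - s1) ^ p := PS_Phi_eq p (by linarith)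
    rw [hΦ2, PS_Phi, PS_Phi, ← ha, ← hb, add_zero]
    linarith

private lemma PS_telescope (g : ℕ → ℝ) {a b : ℕ} (hab : a ≤ b) :
    ∑ i ∈ Finset.Ico a b, (g (i + 1) - g i) = g b - g a := by
  rw [Finset.sum_Ico_eq_sum_range]
  have h := Finset.sum_range_sub (fun k => g (a + k)) (b - a)
  calc ∑ k ∈ Finset.range (b - a), (g (a + k + 1) - g (a + k))
      = ∑ k ∈ Finset.range (b - a), (g (a + (k + 1)) - g (a + k)) := by
        apply Finset.sum_congr rfl
        intro k _
        rfl
    _ = g (a + (b - a)) - g (a + 0) := h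
    _ = g b - g a := by rw [Nat.add_sub_cancel' hab, Nat.add_zero]

noncomputable def PS_D (p : ℝ) (w : ℕ → ℝ) (i j : ℕ) : ℝ :=
  PS_Phi p (w i) (w (j + 1)) - PS_Phi p (w i) (w j)
    - PS_Phi p (w (i + 1)) (w (j + 1)) + PS_Phi p (w (i + 1)) (w j)

private lemma PS_D_nonneg {p : ℝ} (hp : 1 ≤ p) {w : ℕ → ℝ} (hw : Monotone w)
    {i j : ℕ} (hij : i ≤ j) : 0 ≤ PS_D p w i j := by
  have h := PS_fourpoint hp (hw (Nat.le_succ i)) (hw (Nat.le_succ j)) (hw hij)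
    (hw (Nat.succ_le_succ hij))
  rw [PS_D]
  linarith

private lemma PS_cell_identity {p : ℝ} (hp : 1 ≤ p) {w : ℕ → ℝ} (hw : Monotone w)
    {a b : ℕ} (hab : a ≤ b) :
    PS_Phi p (w a) (w b) = ∑ i ∈ Finset.Ico a b, ∑ j ∈ Finset.Ico i b, PS_D p w i j := by
  have hp0 : p ≠ 0 := by intro h; rw [h] at hp; linarith
  have hinner : ∀ i ∈ Finset.Ico a b,
      ∑ j ∈ Finset.Ico i b, PS_D p w i j
        = PS_Phi p (w i) (w b) - PS_Phi p (w (i + 1)) (w b) := by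
    intro i hi
    rw [Finset.mem_Ico] at hi
    have hstep : ∀ j, PS_D p w i j =
        (fun j => PS_Phi p (w i) (w j) - PS_Phi p (w (i + 1)) (w j)) (j + 1)
          - (fun j => PS_Phi p (w i) (w j) - PS_Phi p (w (i + 1)) (w j)) j := by
      intro j
      simp only [PS_D]
      ring
    rw [Finset.sum_congr rfl (fun j _ => hstep j),
      PS_telescope (fun j => PS_Phi p (w i) (w j) - PS_Phi p (w (i + 1)) (w j)) (le_of_lt hi.2)]
    rw [PS_Phi_zero hp0 (le_refl (w i)), PS_Phi_zero hp0 (hw (Nat.le_succ i))]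
    ring
  rw [Finset.sum_congr rfl hinner]
  have hstep2 : ∀ i, PS_Phi p (w i) (w b) - PS_Phi p (w (i + 1)) (w b) =
      -((fun i => PS_Phi p (w i) (w b)) (i + 1) - (fun i => PS_Phi p (w i) (w b)) i) := by
    intro i
    simp only []
    ring
  rw [Finset.sum_congr rfl (fun i _ => hstep2 i), Finset.sum_neg_distrib,
    PS_telescope (fun i => PS_Phi p (w i) (w b)) hab]
  rw [PS_Phi_zero hp0 (le_refl (w b))]
  ring

section PSaux

variable {V : Type*} {G : SimpleGraph V}

private lemma PS_incident_finite (hloc : ∀ a : V, (G.neighborSet a).Finite) (x : V) :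
    {e : Sym2 V | e ∈ G.edgeSet ∧ x ∈ e}.Finite := by
  apply ((hloc x).image (fun y => s(x, y))).subset
  rintro e ⟨he, hx⟩
  induction e with
  | _ u w =>
    rcases Sym2.mem_iff.mp hx with rfl | rfl
    · exact ⟨w, he, rfl⟩
    · refine ⟨u, ?_, Sym2.eq_swap⟩
      have : G.Adj u x := he
      exact this.symm

private lemma PS_touching_finite (hloc : ∀ a : V, (G.neighborSet a).Finite)
    {S : Set V} (hS : S.Finite) :
    {e : Sym2 V | e ∈ G.edgeSet ∧ ∃ x ∈ S, x ∈ e}.Finite := by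
  apply (hS.biUnion (fun x (_ : x ∈ S) => PS_incident_finite hloc x)).subset
  rintro e ⟨he, x, hxS, hxe⟩
  exact Set.mem_biUnion hxS ⟨he, hxe⟩

private lemma PS_vb_finite (hloc : ∀ a : V, (G.neighborSet a).Finite)
    {A : Set V} (hA : A.Finite) : (vertexBoundary G A).Finite := by
  apply (hA.biUnion (fun x (_ : x ∈ A) => hloc x)).subset
  rintro y ⟨hyA, w, hwA, hadj⟩
  exact Set.mem_biUnion hwA hadj.symm

private lemma PS_eb_finite (hloc : ∀ a : V, (G.neighborSet a).Finite)
    {A : Set V} (hA : A.Finite) : (edgeBoundary G A).Finite := by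
  apply (PS_touching_finite hloc hA).subset
  rintro e ⟨he, u, w, rfl, huA, _⟩
  exact ⟨he, u, huA, by simp⟩

private lemma PS_profile_le {A : Set V} (hA : A.Finite) :
    vertexProfile G A.ncard ≤ (vertexBoundary G A).ncard :=
  Nat.sInf_le ⟨A, hA, rfl, rfl⟩

private lemma PS_ncard_Iio (n : ℕ) : (Set.Iio n).ncard = n := by
  rw [← Finset.coe_range, Set.ncard_coe_finset, Finset.card_range]

private lemma PS_ncard_Ico (a b : ℕ) : (Set.Ico a b).ncard = b - a := by
  rw [← Finset.coe_Ico, Set.ncard_coe_finset, Nat.card_Ico]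

private lemma PS_dc_Iio {S : Set ℕ} (hfin : S.Finite)
    (hdc : ∀ m n : ℕ, m ≤ n → n ∈ S → m ∈ S) :
    S = Set.Iio S.ncard := by
  have hne : Sᶜ.Nonempty := Set.Infinite.nonempty hfin.infinite_compl
  have h1 : S = Set.Iio (sInf Sᶜ) := by
    ext k
    simp only [Set.mem_Iio]
    constructor
    · intro hk
      by_contra hlt
      push_neg at hlt
      exact Nat.sInf_mem hne (hdc _ _ hlt hk)
    · intro hk
      by_contra hkS
      exact absurd (Nat.sInf_le hkS) (not_le.mpr hk)
  have h2 : S.ncard = sInf Sᶜ := by conv_lhs => rw [h1, PS_ncard_Iio]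
  rw [h2, ← h1]

private lemma PS_levelset {v : ℕ → V} (hv : Function.Bijective v) {h : V → ℝ}
    (hmono : ∀ m n : ℕ, m ≤ n → h (v n) ≤ h (v m)) {Sv : Set V} (hfin : Sv.Finite)
    (hup : ∀ x y : V, h x ≤ h y → x ∈ Sv → y ∈ Sv) :
    Sv = v '' Set.Iio Sv.ncard := by
  have hpre : v ⁻¹' Sv = Set.Iio ((v ⁻¹' Sv).ncard) :=
    PS_dc_Iio (hfin.preimage hv.injective.injOn)
      (fun m n hmn hn => hup _ _ (hmono m n hmn) hn)
  have himg : v '' (v ⁻¹' Sv) = Sv := Set.image_preimage_eq Sv hv.surjective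
  have hcard := Set.ncard_image_of_injective (v ⁻¹' Sv) hv.injective
  rw [himg] at hcard
  conv_lhs => rw [← himg]
  rw [hpre, hcard]

private lemma PS_vb_initial {v : ℕ → V} (hv : Function.Bijective v)
    (hvert : ∀ N : ℕ,
      vertexBoundary G (v '' Set.Iio N) ⊆ v '' Set.Iio (N + vertexProfile G N))
    (N : ℕ) :
    vertexBoundary G (v '' Set.Iio N) = v '' Set.Ico N (N + vertexProfile G N) := by
  set b := vertexProfile G N with hb
  have hAfin : (v '' Set.Iio N).Finite := (Set.finite_Iio N).image v
  have hsub : vertexBoundary G (v '' Set.Iio N) ⊆ v '' Set.Ico N (N + b) := by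
    intro y hy
    obtain ⟨i, hi, rfl⟩ := hvert N hy
    refine ⟨i, ⟨?_, hi⟩, rfl⟩
    by_contra hlt
    push_neg at hlt
    exact hy.1 ⟨i, hlt, rfl⟩
  have hcard1 : (v '' Set.Ico N (N + b)).ncard = b := by
    rw [Set.ncard_image_of_injective _ hv.injective, PS_ncard_Ico]
    omega
  have hprof : b ≤ (vertexBoundary G (v '' Set.Iio N)).ncard := by
    have hN : (v '' Set.Iio N).ncard = N := by
      rw [Set.ncard_image_of_injective _ hv.injective, PS_ncard_Iio]
    have := PS_profile_le (G := G) hAfin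
    rwa [hN] at this
  exact Set.eq_of_subset_of_ncard_le hsub (by rw [hcard1]; exact hprof)
    ((Set.finite_Ico N (N + b)).image v)

open Classical in
private lemma PS_claimA
    (hloc : ∀ a : V, (G.neighborSet a).Finite)
    {v : ℕ → V} (hv : Function.Bijective v)
    (hedge : ∀ N : ℕ, vertexProfile G N = (edgeBoundary G (v '' Set.Iio N)).ncard)
    (hvert : ∀ N : ℕ,
      vertexBoundary G (v '' Set.Iio N) ⊆ v '' Set.Iio (N + vertexProfile G N))
    {f fstar : V → ℝ} (hsupp : (Function.support f).Finite) (hpos : ∀ x, 0 ≤ f x)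
    (σ : Equiv.Perm V) (hσ : fstar = f ∘ σ)
    (hmono : ∀ m n : ℕ, m ≤ n → fstar (v n) ≤ fstar (v m))
    {s t : ℝ} (hs : 0 ≤ s) (hst : s < t) :
    {e : Sym2 V | e ∈ G.edgeSet ∧ ∃ x y : V, e = s(x, y) ∧ t ≤ fstar x ∧ fstar y ≤ s}.ncard
      ≤ {e : Sym2 V | e ∈ G.edgeSet ∧ ∃ x y : V, e = s(x, y) ∧ t ≤ f x ∧ f y ≤ s}.ncard := by
  have hsuppstar : (Function.support fstar).Finite := by
    rw [hσ, Function.support_comp_eq_preimage]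
    exact hsupp.preimage σ.injective.injOn
  have hposstar : ∀ x, 0 ≤ fstar x := fun x => by rw [hσ]; exact hpos (σ x)
  have hTfin : {x : V | t ≤ fstar x}.Finite := by
    apply hsuppstar.subset
    intro x hx
    simp only [Set.mem_setOf_eq] at hx
    simp only [Function.mem_support]
    intro h0
    rw [h0] at hx
    linarith
  have hNfin : {x : V | s < fstar x}.Finite := by
    apply hsuppstar.subset
    intro x hx
    simp only [Set.mem_setOf_eq] at hx
    simp only [Function.mem_support]
    intro h0
    rw [h0] at hx
    linarith
  set M := {x : V | t ≤ fstar x}.ncard with hM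
  set N := {x : V | s < fstar x}.ncard with hN
  have hTset : {x : V | t ≤ fstar x} = v '' Set.Iio M :=
    PS_levelset hv hmono hTfin (fun x y hxy hx => le_trans hx hxy)
  have hNset : {x : V | s < fstar x} = v '' Set.Iio N :=
    PS_levelset hv hmono hNfin (fun x y hxy hx => lt_of_lt_of_le hx hxy)
  have hTN : {x : V | t ≤ fstar x} ⊆ {x : V | s < fstar x} :=
    fun x hx => lt_of_lt_of_le hst hx
  have hMN : M ≤ N := Set.ncard_le_ncard hTN hNfin
  set b := vertexProfile G M with hb
  set AM : Set V := v '' Set.Iio M with hAM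
  have hAMfin : AM.Finite := (Set.finite_Iio M).image v
  have hebfin : (edgeBoundary G AM).Finite := PS_eb_finite hloc hAMfin
  have hebcard : (edgeBoundary G AM).ncard = b := (hedge M).symm
  have hvbM : vertexBoundary G AM = v '' Set.Ico M (M + b) := PS_vb_initial hv hvert M
  have hmemT : ∀ z : V, t ≤ fstar z → z ∈ AM := by
    intro z hz
    have hz' : z ∈ {x : V | t ≤ fstar x} := hz
    rwa [hTset] at hz'
  set CS : Set (Sym2 V) :=
    {e | e ∈ G.edgeSet ∧ ∃ x y : V, e = s(x, y) ∧ t ≤ fstar x ∧ fstar y ≤ s} with hCS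
  set CF : Set (Sym2 V) :=
    {e | e ∈ G.edgeSet ∧ ∃ x y : V, e = s(x, y) ∧ t ≤ f x ∧ f y ≤ s} with hCF
  have hAMN : AM ⊆ v '' Set.Iio N := Set.image_mono (Set.Iio_subset_Iio hMN)
  -- low endpoints are not in v '' Iio N
  have hlowmem : ∀ y : V, fstar y ≤ s → y ∉ v '' Set.Iio N := by
    intro y hy hmem
    rw [← hNset] at hmem
    exact absurd hy (not_le.mpr hmem)
  have hCSsub : CS ⊆ edgeBoundary G AM := by
    rintro e ⟨he, x, y, rfl, hx, hy⟩
    exact ⟨he, x, y, rfl, hmemT x hx, fun hyA => hlowmem y hy (hAMN hyA)⟩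
  rcases lt_or_ge (M + b) N with hNb | hNb
  · -- CS is empty
    have hempty : CS = ∅ := by
      rw [Set.eq_empty_iff_forall_notMem]
      rintro e ⟨he, x, y, rfl, hx, hy⟩
      have hxA : x ∈ AM := hmemT x hx
      have hyvb : y ∈ vertexBoundary G AM := by
        refine ⟨fun hyA => hlowmem y hy (hAMN hyA), x, hxA, ?_⟩
        have hadj : G.Adj x y := he
        exact hadj.symm
      rw [hvbM] at hyvb
      obtain ⟨i, hi, rfl⟩ := hyvb
      exact hlowmem _ hy ⟨i, lt_trans hi.2 hNb, rfl⟩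
    rw [hempty]
    simp
  · -- main case
    have hIco_sub : v '' Set.Ico M N ⊆ vertexBoundary G AM := by
      rw [hvbM]
      exact Set.image_mono (fun i hi => ⟨hi.1, lt_of_lt_of_le hi.2 hNb⟩)
    set pickM : V → Sym2 V :=
      fun y => if h : ∃ z, z ∈ AM ∧ G.Adj y z then s(y, h.choose) else s(y, y) with hpickM
    have hmapsto : ∀ y ∈ v '' Set.Ico M N, pickM y ∈ (edgeBoundary G AM) \ CS := by
      intro y hy
      obtain ⟨hyA, z0, hz0, hadj0⟩ := hIco_sub hy
      have hex : ∃ z, z ∈ AM ∧ G.Adj y z := ⟨z0, hz0, hadj0⟩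
      have hpe : pickM y = s(y, hex.choose) := dif_pos hex
      obtain ⟨hzA, hzadj⟩ := hex.choose_spec
      constructor
      · rw [hpe]
        exact ⟨G.mem_edgeSet.mpr hzadj, hex.choose, y, Sym2.eq_swap, hzA, hyA⟩
      · rw [hpe]
        rintro ⟨-, x', y', heq, hx', hy'⟩
        rcases Sym2.eq_iff.mp heq with ⟨rfl, rfl⟩ | ⟨rfl, rfl⟩
        · exact hyA (hmemT y hx')
        · obtain ⟨i, hi, rfl⟩ := hy
          exact hlowmem _ hy' ⟨i, hi.2, rfl⟩
    have hinj : Set.InjOn pickM (v '' Set.Ico M N) := by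
      intro y1 hy1 y2 hy2 heq
      obtain ⟨hy1A, z10, hz10, hadj10⟩ := hIco_sub hy1
      obtain ⟨hy2A, z20, hz20, hadj20⟩ := hIco_sub hy2
      have hex1 : ∃ z, z ∈ AM ∧ G.Adj y1 z := ⟨z10, hz10, hadj10⟩
      have hex2 : ∃ z, z ∈ AM ∧ G.Adj y2 z := ⟨z20, hz20, hadj20⟩
      rw [hpickM] at heq
      simp only [dif_pos hex1, dif_pos hex2] at heq
      rcases Sym2.eq_iff.mp heq with ⟨h1, -⟩ | ⟨h1, h2⟩
      · exact h1
      · exfalso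
        apply hy2A
        rw [← h2]
        exact hex1.choose_spec.1
    have hCSfin : CS.Finite := hebfin.subset hCSsub
    have hc1 : (v '' Set.Ico M N).ncard ≤ ((edgeBoundary G AM) \ CS).ncard :=
      Set.ncard_le_ncard_of_injOn pickM hmapsto hinj (hebfin.subset Set.diff_subset)
    have hIcoN : (v '' Set.Ico M N).ncard = N - M := by
      rw [Set.ncard_image_of_injective _ hv.injective, PS_ncard_Ico]
    have hdiff : ((edgeBoundary G AM) \ CS).ncard = b - CS.ncard := by
      rw [Set.ncard_diff hCSsub hCSfin, hebcard]
    have hCSb : CS.ncard ≤ b := by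
      rw [← hebcard]
      exact Set.ncard_le_ncard hCSsub hebfin
    -- f side
    set A : Set V := {x | t ≤ f x} with hA
    have hAeq : A = σ '' {x : V | t ≤ fstar x} := by
      ext y
      constructor
      · intro hy
        refine ⟨σ.symm y, ?_, by simp⟩
        simp only [Set.mem_setOf_eq, hσ, Function.comp_apply, Equiv.apply_symm_apply]
        exact hy
      · rintro ⟨x, hx, rfl⟩
        simpa [hσ, hA] using hx
    have hAcard : A.ncard = M := by
      rw [hAeq, Set.ncard_image_of_injective _ σ.injective]
    have hAfin : A.Finite := by rw [hAeq]; exact hTfin.image σ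
    have hbA : b ≤ (vertexBoundary G A).ncard := by
      have := PS_profile_le (G := G) hAfin
      rwa [hAcard] at this
    set Nf : Set V := {x | s < f x} with hNf
    have hNfeq : Nf = σ '' {x : V | s < fstar x} := by
      ext y
      constructor
      · intro hy
        refine ⟨σ.symm y, ?_, by simp⟩
        simp only [Set.mem_setOf_eq, hσ, Function.comp_apply, Equiv.apply_symm_apply]
        exact hy
      · rintro ⟨x, hx, rfl⟩
        simpa [hσ, hNf] using hx
    have hNfcard : Nf.ncard = N := by
      rw [hNfeq, Set.ncard_image_of_injective _ σ.injective]
    have hNffin : Nf.Finite := by rw [hNfeq]; exact hNfin.image σ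
    have hANf : A ⊆ Nf := fun x hx => lt_of_lt_of_le hst hx
    set Ylow : Set V := vertexBoundary G A ∩ {y | f y ≤ s} with hYlow
    have hvbAfin : (vertexBoundary G A).Finite := PS_vb_finite hloc hAfin
    have hsplit : vertexBoundary G A \ Ylow ⊆ Nf \ A := by
      rintro y ⟨hyvb, hyn⟩
      refine ⟨?_, hyvb.1⟩
      have : ¬ f y ≤ s := fun hc => hyn ⟨hyvb, hc⟩
      exact not_le.mp this
    have h5 : (vertexBoundary G A \ Ylow).ncard ≤ N - M := by
      have h51 : (vertexBoundary G A \ Ylow).ncard ≤ (Nf \ A).ncard :=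
        Set.ncard_le_ncard hsplit hNffin.diff
      have h52 : (Nf \ A).ncard = N - M := by
        rw [Set.ncard_diff hANf hAfin, hNfcard, hAcard]
      omega
    have h6 : (vertexBoundary G A).ncard ≤ Ylow.ncard + (N - M) := by
      have hcover : vertexBoundary G A ⊆ Ylow ∪ (vertexBoundary G A \ Ylow) := by
        intro y hy
        by_cases hmem : y ∈ Ylow
        · exact Or.inl hmem
        · exact Or.inr ⟨hy, hmem⟩
      calc (vertexBoundary G A).ncard
          ≤ (Ylow ∪ (vertexBoundary G A \ Ylow)).ncard :=
            Set.ncard_le_ncard hcover ((hvbAfin.subset Set.inter_subset_left).union hvbAfin.diff)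
        _ ≤ Ylow.ncard + (vertexBoundary G A \ Ylow).ncard := Set.ncard_union_le _ _
        _ ≤ Ylow.ncard + (N - M) := by omega
    -- injection Ylow → CF
    set pickA : V → Sym2 V :=
      fun y => if h : ∃ z, z ∈ A ∧ G.Adj y z then s(y, h.choose) else s(y, y) with hpickA
    have hmaps2 : ∀ y ∈ Ylow, pickA y ∈ CF := by
      rintro y ⟨⟨hyA, z0, hz0, hadj0⟩, hys⟩
      have hex : ∃ z, z ∈ A ∧ G.Adj y z := ⟨z0, hz0, hadj0⟩
      have hpe : pickA y = s(y, hex.choose) := dif_pos hex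
      obtain ⟨hzA, hzadj⟩ := hex.choose_spec
      rw [hpe]
      exact ⟨hzadj, hex.choose, y, Sym2.eq_swap, hzA, hys⟩
    have hinj2 : Set.InjOn pickA Ylow := by
      rintro y1 ⟨⟨hy1A, z10, hz10, hadj10⟩, -⟩ y2 ⟨⟨hy2A, z20, hz20, hadj20⟩, -⟩ heq
      have hex1 : ∃ z, z ∈ A ∧ G.Adj y1 z := ⟨z10, hz10, hadj10⟩
      have hex2 : ∃ z, z ∈ A ∧ G.Adj y2 z := ⟨z20, hz20, hadj20⟩
      rw [hpickA] at heq
      simp only [dif_pos hex1, dif_pos hex2] at heq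
      rcases Sym2.eq_iff.mp heq with ⟨h1, -⟩ | ⟨h1, h2⟩
      · exact h1
      · exfalso
        apply hy2A
        rw [← h2]
        exact hex1.choose_spec.1
    have hCFfin : CF.Finite := by
      apply (PS_touching_finite hloc hsupp).subset
      rintro e ⟨he, x, y, rfl, hx, hy⟩
      refine ⟨he, x, ?_, by simp⟩
      simp only [Function.mem_support]
      intro h0
      rw [h0] at hx
      linarith
    have hc2 : Ylow.ncard ≤ CF.ncard :=
      Set.ncard_le_ncard_of_injOn pickA hmaps2 hinj2 hCFfin
    omega


end PSaux

private lemma PS_cells_filter {p : ℝ} {w : ℕ → ℝ}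
    {K a b : ℕ} (hab : a ≤ b) (hbK : b ≤ K) :
    ∑ i ∈ Finset.Ico a b, ∑ j ∈ Finset.Ico i b, PS_D p w i j
      = ∑ i ∈ Finset.range K, ∑ j ∈ Finset.range K,
          (if a ≤ i ∧ i ≤ j ∧ j + 1 ≤ b then PS_D p w i j else 0) := by
  have hinner : ∀ i, ∑ j ∈ Finset.range K, (if a ≤ i ∧ i ≤ j ∧ j + 1 ≤ b then PS_D p w i j else 0)
      = if a ≤ i then ∑ j ∈ Finset.Ico i b, PS_D p w i j else 0 := by
    intro i
    by_cases hai : a ≤ i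
    · rw [if_pos hai]
      rw [← Finset.sum_filter]
      apply Finset.sum_congr
      · ext j
        simp only [Finset.mem_filter, Finset.mem_range, Finset.mem_Ico]
        omega
      · intro j _; rfl
    · rw [if_neg hai]
      apply Finset.sum_eq_zero
      intro j _
      rw [if_neg (by tauto)]
  rw [Finset.sum_congr rfl (fun i _ => hinner i)]
  rw [← Finset.sum_filter]
  have hfe : (Finset.range K).filter (fun i => a ≤ i) = Finset.Ico a K := by
    ext i
    simp only [Finset.mem_filter, Finset.mem_range, Finset.mem_Ico]
    omega
  rw [hfe, ← Finset.sum_Ico_consecutive _ hab hbK]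
  have hzero : ∑ i ∈ Finset.Ico b K, ∑ j ∈ Finset.Ico i b, PS_D p w i j = 0 := by
    apply Finset.sum_eq_zero
    intro i hi
    rw [Finset.mem_Ico] at hi
    rw [Finset.Ico_eq_empty (by omega), Finset.sum_empty]
  rw [hzero, add_zero]

section PSmain

variable {V : Type*} {G : SimpleGraph V}

open Classical in
private lemma PS_main
    (hloc : ∀ a : V, (G.neighborSet a).Finite)
    {v : ℕ → V} (hv : Function.Bijective v)
    (hedge : ∀ N : ℕ, vertexProfile G N = (edgeBoundary G (v '' Set.Iio N)).ncard)
    (hvert : ∀ N : ℕ,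
      vertexBoundary G (v '' Set.Iio N) ⊆ v '' Set.Iio (N + vertexProfile G N))
    {f fstar : V → ℝ} (hsupp : (Function.support f).Finite) (hpos : ∀ x, 0 ≤ f x)
    (σ : Equiv.Perm V) (hσ : fstar = f ∘ σ)
    (hmono : ∀ m n : ℕ, m ≤ n → fstar (v n) ≤ fstar (v m)) :
    (∀ p : ℝ, 1 ≤ p → gradLp G fstar p ≤ gradLp G f p) ∧
      gradLinf G fstar ≤ gradLinf G f := by
  classical
  have hsuppstar : (Function.support fstar).Finite := by
    rw [hσ, Function.support_comp_eq_preimage]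
    exact hsupp.preimage σ.injective.injOn
  have hposstar : ∀ x, 0 ≤ fstar x := fun x => by rw [hσ]; exact hpos (σ x)
  have hsubf : Function.support f ⊆ Function.support f ∪ Function.support fstar :=
    Set.subset_union_left
  have hsubfs : Function.support fstar ⊆ Function.support f ∪ Function.support fstar :=
    Set.subset_union_right
  -- min and max value of an edge
  set lov : (V → ℝ) → Sym2 V → ℝ := fun h e =>
    Sym2.lift ⟨fun u w => min (h u) (h w), fun u w => min_comm _ _⟩ e with hlov
  set hiv : (V → ℝ) → Sym2 V → ℝ := fun h e =>
    Sym2.lift ⟨fun u w => max (h u) (h w), fun u w => max_comm _ _⟩ e with hhiv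
  have hlole : ∀ (h : V → ℝ) (e : Sym2 V), lov h e ≤ hiv h e := by
    intro h e
    induction e using Sym2.ind with
    | _ u w2 => simp only [hlov, hhiv, Sym2.lift_mk]; exact min_le_max
  have hlo_nonneg : ∀ (h : V → ℝ), (∀ x, 0 ≤ h x) → ∀ e : Sym2 V, 0 ≤ lov h e := by
    intro h hh e
    induction e using Sym2.ind with
    | _ u w2 => simp only [hlov, Sym2.lift_mk, le_min_iff]; exact ⟨hh u, hh w2⟩
  have hlift_cross : ∀ (h : V → ℝ) (s t : ℝ) (e : Sym2 V), lov h e ≤ s → t ≤ hiv h e →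
      ∃ x y, e = s(x, y) ∧ t ≤ h x ∧ h y ≤ s := by
    intro h s t e
    induction e using Sym2.ind with
    | _ u w2 =>
      intro hlo hhi
      simp only [hlov, hhiv, Sym2.lift_mk] at hlo hhi
      rcases le_total (h u) (h w2) with hle | hle
      · rw [min_eq_left hle] at hlo
        rw [max_eq_right hle] at hhi
        exact ⟨w2, u, Sym2.eq_swap, hhi, hlo⟩
      · rw [min_eq_right hle] at hlo
        rw [max_eq_left hle] at hhi
        exact ⟨u, w2, rfl, hhi, hlo⟩
  have hcross_back : ∀ (h : V → ℝ) (s t : ℝ) (x y : V), t ≤ h x → h y ≤ s →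
      lov h s(x, y) ≤ s ∧ t ≤ hiv h s(x, y) := by
    intro h s t x y hx hy
    simp only [hlov, hhiv, Sym2.lift_mk]
    exact ⟨le_trans (min_le_right _ _) hy, le_trans hx (le_max_left _ _)⟩
  -- the finite edge set
  have hEt : {e : Sym2 V | e ∈ G.edgeSet ∧
      ∃ x ∈ (Function.support f ∪ Function.support fstar), x ∈ e}.Finite :=
    PS_touching_finite hloc (hsupp.union hsuppstar)
  set ES : Finset (Sym2 V) := hEt.toFinset with hES
  have hESedge : ∀ e ∈ ES, e ∈ G.edgeSet := by
    intro e he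
    rw [hES, Set.Finite.mem_toFinset] at he
    exact he.1
  have hESmem : ∀ (e : Sym2 V), e ∈ G.edgeSet →
      (∃ x ∈ (Function.support f ∪ Function.support fstar), x ∈ e) → e ∈ ES := by
    intro e he hx
    rw [hES, Set.Finite.mem_toFinset]
    exact ⟨he, hx⟩
  -- crossing filter identification
  have hfilter_eq : ∀ (h : V → ℝ), Function.support h ⊆
        (Function.support f ∪ Function.support fstar) →
      ∀ s t : ℝ, 0 ≤ s → s < t →
      ((ES.filter (fun e => lov h e ≤ s ∧ t ≤ hiv h e)) : Set (Sym2 V))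
        = {e : Sym2 V | e ∈ G.edgeSet ∧ ∃ x y, e = s(x, y) ∧ t ≤ h x ∧ h y ≤ s} := by
    intro h hsub s t hs hst
    ext e
    simp only [Finset.coe_filter, Set.mem_setOf_eq]
    constructor
    · rintro ⟨heES, hlo, hhi⟩
      exact ⟨hESedge e heES, hlift_cross h s t e hlo hhi⟩
    · rintro ⟨hee, x, y, rfl, hx, hy⟩
      have hxsupp : x ∈ Function.support h := by
        simp only [Function.mem_support]
        intro h0
        rw [h0] at hx
        linarith
      refine ⟨hESmem _ hee ⟨x, hsub hxsupp, by simp⟩, ?_, ?_⟩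
      · exact (hcross_back h s t x y hx hy).1
      · exact (hcross_back h s t x y hx hy).2
  -- the count comparison
  have hcount : ∀ s t : ℝ, 0 ≤ s → s < t →
      (ES.filter (fun e => lov fstar e ≤ s ∧ t ≤ hiv fstar e)).card
        ≤ (ES.filter (fun e => lov f e ≤ s ∧ t ≤ hiv f e)).card := by
    intro s t hs hst
    have h1 := PS_claimA hloc hv hedge hvert hsupp hpos σ hσ hmono hs hst
    have e1 : (ES.filter (fun e => lov fstar e ≤ s ∧ t ≤ hiv fstar e)).card
        = {e : Sym2 V | e ∈ G.edgeSet ∧ ∃ x y, e = s(x, y) ∧ t ≤ fstar x ∧ fstar y ≤ s}.ncard := by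
      rw [← hfilter_eq fstar hsubfs s t hs hst, Set.ncard_coe_finset]
    have e2 : (ES.filter (fun e => lov f e ≤ s ∧ t ≤ hiv f e)).card
        = {e : Sym2 V | e ∈ G.edgeSet ∧ ∃ x y, e = s(x, y) ∧ t ≤ f x ∧ f y ≤ s}.ncard := by
      rw [← hfilter_eq f hsubf s t hs hst, Set.ncard_coe_finset]
    omega
  constructor
  · -- the Lp part
    intro p hp
    have hp0 : (0:ℝ) < p := lt_of_lt_of_le one_pos hp
    have hpne : p ≠ 0 := ne_of_gt hp0
    -- the summand
    set Fg : (V → ℝ) → Sym2 V → ℝ := fun h e =>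
      Sym2.lift ⟨fun u w => |h u - h w| ^ p,
        fun u w => by dsimp only; rw [abs_sub_comm]⟩ e with hFg
    have hFgPhi : ∀ (h : V → ℝ) (e : Sym2 V), Fg h e = PS_Phi p (lov h e) (hiv h e) := by
      intro h e
      induction e using Sym2.ind with
      | _ u w2 =>
        simp only [hFg, hlov, hhiv, Sym2.lift_mk]
        rw [PS_Phi_eq p min_le_max]
        rcases le_total (h u) (h w2) with hle | hle
        · rw [max_eq_right hle, min_eq_left hle, abs_sub_comm, abs_of_nonneg (by linarith)]
        · rw [max_eq_left hle, min_eq_right hle, abs_of_nonneg (by linarith)]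
    have hFg_nonneg : ∀ (h : V → ℝ) (e : Sym2 V), 0 ≤ Fg h e := by
      intro h e
      rw [hFgPhi]
      exact PS_Phi_nonneg p _ _
    -- tsum reduction
    have htsum : ∀ h : V → ℝ, Function.support h ⊆
        (Function.support f ∪ Function.support fstar) →
        (∑' e : G.edgeSet, Fg h e.1) = ∑ e ∈ ES, Fg h e := by
      intro h hsub
      have hzero : ∀ e : Sym2 V, e ∉ ES → Set.indicator G.edgeSet (Fg h) e = 0 := by
        intro e
        induction e using Sym2.ind with
        | _ u w2 =>
          intro he
          by_cases hmem : s(u, w2) ∈ G.edgeSet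
          · rw [Set.indicator_of_mem hmem]
            have hu : h u = 0 := by
              by_contra h0
              exact he (hESmem _ hmem ⟨u, hsub h0, by simp⟩)
            have hw : h w2 = 0 := by
              by_contra h0
              exact he (hESmem _ hmem ⟨w2, hsub h0, by simp⟩)
            simp only [hFg, Sym2.lift_mk, hu, hw, sub_zero, abs_zero]
            exact Real.zero_rpow hpne
          · exact Set.indicator_of_notMem hmem _
      have h1 : (∑' e : G.edgeSet, Fg h e.1) = ∑' e : Sym2 V, Set.indicator G.edgeSet (Fg h) e :=
        tsum_subtype G.edgeSet (Fg h)
      rw [h1, tsum_eq_sum hzero]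
      apply Finset.sum_congr rfl
      intro e he
      exact Set.indicator_of_mem (hESedge e he) _
    -- values and grid
    set W : Finset ℝ := insert 0 ((hsupp.toFinset.image f) ∪ (hsuppstar.toFinset.image fstar))
      with hW
    have hfW : ∀ x : V, f x ∈ W := by
      intro x
      by_cases hx : f x = 0
      · rw [hx, hW]; exact Finset.mem_insert_self 0 _
      · rw [hW]
        exact Finset.mem_insert_of_mem (Finset.mem_union_left _
          (Finset.mem_image_of_mem f (hsupp.mem_toFinset.mpr hx)))
    have hfsW : ∀ x : V, fstar x ∈ W := by
      intro x
      by_cases hx : fstar x = 0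
      · rw [hx, hW]; exact Finset.mem_insert_self 0 _
      · rw [hW]
        exact Finset.mem_insert_of_mem (Finset.mem_union_right _
          (Finset.mem_image_of_mem fstar (hsuppstar.mem_toFinset.mpr hx)))
    set K := W.card with hK
    have hK0 : 0 < K := Finset.card_pos.mpr ⟨0, Finset.mem_insert_self 0 _⟩
    set oi := W.orderIsoOfFin rfl with hoi
    set w : ℕ → ℝ := fun n => ((oi ⟨min n (K - 1), by omega⟩ : W) : ℝ) with hwdef
    have hwmono : Monotone w := by
      intro m n hmn
      have hle : (⟨min m (K - 1), by omega⟩ : Fin K) ≤ ⟨min n (K - 1), by omega⟩ := by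
        simp only [Fin.mk_le_mk]
        omega
      exact Subtype.coe_le_coe.mpr (oi.monotone hle)
    have hwlt : ∀ {m n : ℕ}, m < n → n ≤ K - 1 → w m < w n := by
      intro m n hmn hn
      have hlt : (⟨min m (K - 1), by omega⟩ : Fin K) < ⟨min n (K - 1), by omega⟩ := by
        simp only [Fin.mk_lt_mk]
        omega
      exact Subtype.coe_lt_coe.mpr (oi.strictMono hlt)
    have hwcmp : ∀ {m n : ℕ}, m ≤ K - 1 → n ≤ K - 1 → (w m ≤ w n ↔ m ≤ n) := by
      intro m n hm hn
      constructor
      · intro hle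
        by_contra hlt
        push_neg at hlt
        exact absurd hle (not_le.mpr (hwlt hlt hm))
      · intro hle
        exact hwmono hle
    have hexidx : ∀ x ∈ W, ∃ n, n ≤ K - 1 ∧ w n = x := by
      intro x hx
      refine ⟨(oi.symm ⟨x, hx⟩ : Fin K), ?_, ?_⟩
      · have := (oi.symm ⟨x, hx⟩).isLt
        omega
      · have hn : (⟨min ((oi.symm ⟨x, hx⟩ : Fin K) : ℕ) (K - 1), by omega⟩ : Fin K)
            = oi.symm ⟨x, hx⟩ := by
          apply Fin.ext
          have := (oi.symm ⟨x, hx⟩).isLt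
          simp only []
          omega
        simp only [hwdef]
        rw [hn, OrderIso.apply_symm_apply]
    have hwnonneg : ∀ n, 0 ≤ w n := by
      intro n
      have hmem : w n ∈ W := (oi ⟨min n (K - 1), by omega⟩).2
      rw [hW] at hmem
      rcases Finset.mem_insert.mp hmem with h0 | hmem
      · rw [h0]
      · rcases Finset.mem_union.mp hmem with hmem | hmem
        · obtain ⟨y, -, hy⟩ := Finset.mem_image.mp hmem
          rw [← hy]; exact hpos y
        · obtain ⟨y, -, hy⟩ := Finset.mem_image.mp hmem
          rw [← hy]; exact hposstar y
    -- edge values are in W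
    have hvalW : ∀ (h : V → ℝ), (∀ x, h x ∈ W) → ∀ e : Sym2 V, lov h e ∈ W ∧ hiv h e ∈ W := by
      intro h hhW e
      induction e using Sym2.ind with
      | _ u w2 =>
        simp only [hlov, hhiv, Sym2.lift_mk]
        rcases le_total (h u) (h w2) with hle | hle
        · rw [min_eq_left hle, max_eq_right hle]
          exact ⟨hhW u, hhW w2⟩
        · rw [min_eq_right hle, max_eq_left hle]
          exact ⟨hhW w2, hhW u⟩
    set cells : Finset (ℕ × ℕ) := (Finset.range (K - 1)) ×ˢ (Finset.range (K - 1)) with hcells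
    -- per-edge cell decomposition
    have hedge_cells : ∀ (h : V → ℝ), (∀ x, h x ∈ W) → ∀ e ∈ ES,
        Fg h e = ∑ c ∈ cells,
          (if (lov h e ≤ w c.1 ∧ c.1 ≤ c.2 ∧ w (c.2 + 1) ≤ hiv h e)
            then PS_D p w c.1 c.2 else 0) := by
      intro h hhW e he
      obtain ⟨a, haK, hwa⟩ := hexidx _ (hvalW h hhW e).1
      obtain ⟨b, hbK, hwb⟩ := hexidx _ (hvalW h hhW e).2
      have hab : a ≤ b := by
        rw [← hwcmp haK hbK, hwa, hwb]
        exact hlole h e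
      have hident : Fg h e = ∑ i ∈ Finset.Ico a b, ∑ j ∈ Finset.Ico i b, PS_D p w i j := by
        rw [hFgPhi h e, ← hwa, ← hwb]
        exact PS_cell_identity hp hwmono hab
      rw [hident, PS_cells_filter hab hbK, hcells, Finset.sum_product]
      apply Finset.sum_congr rfl
      intro i hi
      apply Finset.sum_congr rfl
      intro j hj
      rw [Finset.mem_range] at hi hj
      congr 1
      have hiK : i ≤ K - 1 := by omega
      have hjK : j + 1 ≤ K - 1 := by omega
      rw [eq_iff_iff]
      constructor
      · rintro ⟨h1, h2, h3⟩
        exact ⟨by rw [← hwa]; exact hwmono h1, h2, by rw [← hwb]; exact hwmono h3⟩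
      · rintro ⟨h1, h2, h3⟩
        refine ⟨?_, h2, ?_⟩
        · rw [← hwa] at h1
          exact (hwcmp haK hiK).mp h1
        · rw [← hwb] at h3
          exact (hwcmp hjK hbK).mp h3
    -- total sums
    have hsum_cells : ∀ (h : V → ℝ), (∀ x, h x ∈ W) →
        ∑ e ∈ ES, Fg h e = ∑ c ∈ cells, (PS_D p w c.1 c.2) *
          ((ES.filter (fun e => lov h e ≤ w c.1 ∧ c.1 ≤ c.2 ∧ w (c.2 + 1) ≤ hiv h e)).card : ℝ) := by
      intro h hhW
      rw [Finset.sum_congr rfl (fun e he => hedge_cells h hhW e he), Finset.sum_comm]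
      apply Finset.sum_congr rfl
      intro c _
      rw [← Finset.sum_filter, Finset.sum_const, nsmul_eq_mul, mul_comm]
    have hsum_le : ∑ e ∈ ES, Fg fstar e ≤ ∑ e ∈ ES, Fg f e := by
      rw [hsum_cells fstar hfsW, hsum_cells f hfW]
      apply Finset.sum_le_sum
      intro c hc
      rw [hcells, Finset.mem_product, Finset.mem_range, Finset.mem_range] at hc
      by_cases hij : c.1 ≤ c.2
      · have hD : 0 ≤ PS_D p w c.1 c.2 := PS_D_nonneg hp hwmono hij
        apply mul_le_mul_of_nonneg_left _ hD
        have hfe : ∀ (h : V → ℝ),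
            ES.filter (fun e => lov h e ≤ w c.1 ∧ c.1 ≤ c.2 ∧ w (c.2 + 1) ≤ hiv h e)
              = ES.filter (fun e => lov h e ≤ w c.1 ∧ w (c.2 + 1) ≤ hiv h e) := by
          intro h
          apply Finset.filter_congr
          intro e _
          tauto
        rw [hfe fstar, hfe f]
        have := hcount (w c.1) (w (c.2 + 1)) (hwnonneg c.1)
          (hwlt (by omega) (by omega))
        exact_mod_cast this
      · have hfe : ∀ (h : V → ℝ),
            ES.filter (fun e => lov h e ≤ w c.1 ∧ c.1 ≤ c.2 ∧ w (c.2 + 1) ≤ hiv h e) = ∅ := by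
          intro h
          apply Finset.filter_false_of_mem
          intro e _
          tauto
        rw [hfe fstar, hfe f]
    -- conclude
    have hfin1 := htsum fstar hsubfs
    have hfin2 := htsum f hsubf
    rw [gradLp, gradLp]
    apply Real.rpow_le_rpow
    · rw [show (∑' e : G.edgeSet,
        Sym2.lift ⟨fun u w => |fstar u - fstar w| ^ p,
          fun u w => by dsimp only; rw [abs_sub_comm]⟩ e.1) = ∑' e : G.edgeSet, Fg fstar e.1
          from rfl, hfin1]
      exact Finset.sum_nonneg (fun e _ => hFg_nonneg fstar e)
    · rw [show (∑' e : G.edgeSet,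
        Sym2.lift ⟨fun u w => |fstar u - fstar w| ^ p,
          fun u w => by dsimp only; rw [abs_sub_comm]⟩ e.1) = ∑' e : G.edgeSet, Fg fstar e.1
          from rfl,
        show (∑' e : G.edgeSet,
        Sym2.lift ⟨fun u w => |f u - f w| ^ p,
          fun u w => by dsimp only; rw [abs_sub_comm]⟩ e.1) = ∑' e : G.edgeSet, Fg f e.1
          from rfl, hfin1, hfin2]
      exact hsum_le
    · positivity
  · -- the L∞ part
    set dif : (V → ℝ) → Sym2 V → ℝ := fun h e =>
      Sym2.lift ⟨fun u w => |h u - h w|,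
        fun u w => by dsimp only; rw [abs_sub_comm]⟩ e with hdif
    have hdif_eq : ∀ (h : V → ℝ) (e : Sym2 V), dif h e = hiv h e - lov h e := by
      intro h e
      induction e using Sym2.ind with
      | _ u w2 =>
        simp only [hdif, hlov, hhiv, Sym2.lift_mk]
        rcases le_total (h u) (h w2) with hle | hle
        · rw [max_eq_right hle, min_eq_left hle, abs_sub_comm, abs_of_nonneg (by linarith)]
        · rw [max_eq_left hle, min_eq_right hle, abs_of_nonneg (by linarith)]
    -- a uniform bound
    set C : ℝ := (insert (0:ℝ) (hsupp.toFinset.image f)).max' (Finset.insert_nonempty _ _)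
      with hC
    have hfC : ∀ x, f x ≤ C := by
      intro x
      by_cases hx : f x = 0
      · rw [hx, hC]
        exact Finset.le_max' _ _ (Finset.mem_insert_self 0 _)
      · exact Finset.le_max' _ _ (Finset.mem_insert_of_mem
          (Finset.mem_image_of_mem f (hsupp.mem_toFinset.mpr hx)))
    have hfsC : ∀ x, fstar x ≤ C := by
      intro x
      rw [hσ]
      exact hfC (σ x)
    have hdifC : ∀ (h : V → ℝ), (∀ x, 0 ≤ h x) → (∀ x, h x ≤ C) →
        ∀ e : Sym2 V, dif h e ≤ C := by
      intro h h0 h1 e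
      induction e using Sym2.ind with
      | _ u w2 =>
        simp only [hdif, Sym2.lift_mk]
        rw [abs_sub_le_iff]
        constructor
        · linarith [h1 u, h0 w2]
        · linarith [h1 w2, h0 u]
    have hdif_nonneg : ∀ (h : V → ℝ) (e : Sym2 V), 0 ≤ dif h e := by
      intro h e
      induction e using Sym2.ind with
      | _ u w2 =>
        simp only [hdif, Sym2.lift_mk]
        exact abs_nonneg _
    have hbddf : BddAbove (Set.range (fun e : G.edgeSet => dif f e.1)) := by
      refine ⟨C, ?_⟩
      rintro x ⟨e, rfl⟩
      exact hdifC f hpos hfC e.1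
    cases isEmpty_or_nonempty G.edgeSet with
    | inl hemp =>
      rw [gradLinf, gradLinf, Real.iSup_of_isEmpty, Real.iSup_of_isEmpty]
    | inr hne =>
      rw [gradLinf, gradLinf]
      apply ciSup_le
      intro e
      show dif fstar e.1 ≤ ⨆ e : G.edgeSet, dif f e.1
      by_cases hδ : 0 < dif fstar e.1
      · set s := lov fstar e.1 with hsv
        set t := hiv fstar e.1 with htv
        have hs0 : 0 ≤ s := hlo_nonneg fstar hposstar e.1
        have hst : s < t := by
          have := hdif_eq fstar e.1
          rw [← hsv, ← htv] at this
          rw [this] at hδ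
          linarith
        have h1 := PS_claimA hloc hv hedge hvert hsupp hpos σ hσ hmono hs0 hst
        have hnonempty : {e : Sym2 V | e ∈ G.edgeSet ∧
            ∃ x y, e = s(x, y) ∧ t ≤ fstar x ∧ fstar y ≤ s}.Nonempty := by
          refine ⟨e.1, e.2, hlift_cross fstar s t e.1 (le_refl _) (le_refl _)⟩
        have hfinstar : {e : Sym2 V | e ∈ G.edgeSet ∧
            ∃ x y, e = s(x, y) ∧ t ≤ fstar x ∧ fstar y ≤ s}.Finite := by
          apply (PS_touching_finite hloc hsuppstar).subset
          rintro e' ⟨he', x, y, rfl, hx, hy⟩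
          refine ⟨he', x, ?_, by simp⟩
          simp only [Function.mem_support]
          intro h0
          rw [h0] at hx
          linarith
        have hpos1 : 0 < {e : Sym2 V | e ∈ G.edgeSet ∧
            ∃ x y, e = s(x, y) ∧ t ≤ fstar x ∧ fstar y ≤ s}.ncard :=
          (Set.ncard_pos hfinstar).mpr hnonempty
        have hpos2 : 0 < {e : Sym2 V | e ∈ G.edgeSet ∧
            ∃ x y, e = s(x, y) ∧ t ≤ f x ∧ f y ≤ s}.ncard := by omega
        have hfinf : {e : Sym2 V | e ∈ G.edgeSet ∧
            ∃ x y, e = s(x, y) ∧ t ≤ f x ∧ f y ≤ s}.Finite := by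
          apply (PS_touching_finite hloc hsupp).subset
          rintro e' ⟨he', x, y, rfl, hx, hy⟩
          refine ⟨he', x, ?_, by simp⟩
          simp only [Function.mem_support]
          intro h0
          rw [h0] at hx
          linarith
        obtain ⟨e', he'⟩ := (Set.ncard_pos hfinf).mp hpos2
        obtain ⟨hee', x, y, rfl, hx, hy⟩ := he'
        have hd : dif fstar e.1 ≤ dif f s(x, y) := by
          rw [hdif_eq fstar e.1, ← hsv, ← htv]
          simp only [hdif, Sym2.lift_mk]
          calc t - s ≤ f x - f y := by linarith
            _ ≤ |f x - f y| := le_abs_self _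
        exact le_trans hd (le_ciSup hbddf ⟨s(x, y), hee'⟩)
      · push_neg at hδ
        refine le_trans hδ ?_
        have := le_ciSup hbddf e
        exact le_trans (hdif_nonneg f e.1) this
end PSmain


/-- **full range Polya-Szegő.** Let `G` be a countably infinite locally
finite graph and `v` an enumeration of the vertices such that for all `N` one has
`∂_V(N) = #∂_E({v₁,…,v_N})` and `∂_V({v₁,…,v_N}) ⊆ {v₁,…,v_{N+∂_V(N)}}`. Then the
associated rearrangement satisfies `‖∇f*‖_{L^p} ≤ ‖∇f‖_{L^p}` for all `1 ≤ p < ∞`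
and for `p = ∞`. -/
theorem polya_szego_full_range {V : Type*} (G : SimpleGraph V)
    (hloc : ∀ a : V, (G.neighborSet a).Finite)
    (v : ℕ → V) (hv : Function.Bijective v)
    (hedge : ∀ N : ℕ, vertexProfile G N = (edgeBoundary G (v '' Set.Iio N)).ncard)
    (hvert : ∀ N : ℕ,
      vertexBoundary G (v '' Set.Iio N) ⊆ v '' Set.Iio (N + vertexProfile G N))
    (f fstar : V → ℝ) (hsupp : (Function.support f).Finite) (hpos : ∀ x, 0 ≤ f x)
    (hre : IsRearrangement v f fstar) :
    (∀ p : ℝ, 1 ≤ p → gradLp G fstar p ≤ gradLp G f p) ∧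
      gradLinf G fstar ≤ gradLinf G f := by
  obtain ⟨σ, hσ⟩ := hre.1
  exact PS_main hloc hv hedge hvert hsupp hpos σ hσ hre.2
end

section
/- (Modified coarea formula) Let G=(V,E) be a locally finite simple graph, let 1 ≤ p < ∞, and let f : V → ℝ be finitely supported with 0 ≤ f ≤ 1. Then ∑_{{u,w}∈E} |f(u)−f(w)|^p = p·∫₀¹ ( ∑_{{u,w} ∈ ∂_E{f ≥ s}} |min(f(u),s) − min(f(w),s)|^{p−1} ) ds, where {f ≥ s} = {v ∈ V : f(v) ≥ s} and the inner sum runs over the edges of the edge boundary of {f ≥ s}. -/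
open Real

section CoareaAux
open MeasureTheory Set

lemma coarea_cond_eq (a b : ℝ) (hab : a ≤ b) (s : ℝ) :
    ((b < s ∧ s ≤ a) ∨ (a < s ∧ s ≤ b)) ↔ s ∈ Ioc a b := by
  constructor
  · rintro (⟨h1,h2⟩|⟨h1,h2⟩)
    · exact absurd (h2.trans hab) (not_le.2 h1)
    · exact ⟨h1, h2⟩
  · rintro ⟨h1,h2⟩; exact Or.inr ⟨h1,h2⟩

lemma coarea_fun_eq (p a b : ℝ) (hab : a ≤ b) :
    (fun s => if (b < s ∧ s ≤ a) ∨ (a < s ∧ s ≤ b) then |min a s - min b s| ^ (p-1) else 0)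
      = (Ioc a b).indicator (fun s => (s - a) ^ (p-1)) := by
  funext s
  rw [Set.indicator_apply]
  by_cases h : s ∈ Ioc a b
  · rw [if_pos ((coarea_cond_eq a b hab s).2 h), if_pos h]
    obtain ⟨h1, h2⟩ := h
    rw [min_eq_left h1.le, min_eq_right h2, abs_sub_comm, abs_of_nonneg (by linarith)]
  · rw [if_neg (fun hc => h ((coarea_cond_eq a b hab s).1 hc)), if_neg h]

lemma coarea_cont (p a : ℝ) (hp : 1 ≤ p) : Continuous (fun s : ℝ => (s - a) ^ (p-1)) := by
  rw [continuous_iff_continuousAt]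
  intro x
  exact (Real.continuousAt_rpow_const _ _ (Or.inr (by linarith))).comp (by fun_prop)

lemma coarea_integrable_core (p a b : ℝ) (hp : 1 ≤ p) (hab : a ≤ b) :
    IntervalIntegrable
      (fun s => if (b < s ∧ s ≤ a) ∨ (a < s ∧ s ≤ b) then |min a s - min b s| ^ (p-1) else 0)
      MeasureTheory.volume 0 1 := by
  rw [coarea_fun_eq p a b hab, intervalIntegrable_iff]
  exact ((coarea_cont p a hp).integrableOn_uIoc).indicator measurableSet_Ioc

lemma coarea_symm (p a b : ℝ) :
    (fun s => if (b < s ∧ s ≤ a) ∨ (a < s ∧ s ≤ b) then |min a s - min b s| ^ (p-1) else 0)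
      = (fun s => if (a < s ∧ s ≤ b) ∨ (b < s ∧ s ≤ a) then |min b s - min a s| ^ (p-1) else 0) := by
  funext s
  rw [abs_sub_comm]
  exact if_congr or_comm rfl rfl

lemma coarea_integrable (p a b : ℝ) (hp : 1 ≤ p) :
    IntervalIntegrable
      (fun s => if (b < s ∧ s ≤ a) ∨ (a < s ∧ s ≤ b) then |min a s - min b s| ^ (p-1) else 0)
      MeasureTheory.volume 0 1 := by
  rcases le_total a b with hab | hab
  · exact coarea_integrable_core p a b hp hab
  · rw [coarea_symm]; exact coarea_integrable_core p b a hp hab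

lemma coarea_integral_core (p a b : ℝ) (hp : 1 ≤ p) (h0 : 0 ≤ a) (hab : a ≤ b) (h1 : b ≤ 1) :
    p * ∫ s in (0:ℝ)..1,
        (if (b < s ∧ s ≤ a) ∨ (a < s ∧ s ≤ b) then |min a s - min b s| ^ (p-1) else 0)
      = |a - b| ^ p := by
  have hp0 : p ≠ 0 := by linarith
  rw [coarea_fun_eq p a b hab]
  rw [intervalIntegral.integral_of_le zero_le_one,
    MeasureTheory.setIntegral_indicator measurableSet_Ioc,
    Set.inter_eq_right.2 (Set.Ioc_subset_Ioc h0 h1),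
    ← intervalIntegral.integral_of_le hab,
    intervalIntegral.integral_comp_sub_right (fun x => x ^ (p-1)) a]
  rw [integral_rpow (Or.inl (by linarith))]
  rw [sub_self, Real.zero_rpow (by linarith : p - 1 + 1 ≠ 0), sub_add_cancel]
  rw [abs_sub_comm, abs_of_nonneg (by linarith)]
  field_simp
  simp

lemma coarea_integral (p a b : ℝ) (hp : 1 ≤ p) (ha0 : 0 ≤ a) (hb0 : 0 ≤ b)
    (ha1 : a ≤ 1) (hb1 : b ≤ 1) :
    p * ∫ s in (0:ℝ)..1,
        (if (b < s ∧ s ≤ a) ∨ (a < s ∧ s ≤ b) then |min a s - min b s| ^ (p-1) else 0)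
      = |a - b| ^ p := by
  rcases le_total a b with hab | hab
  · exact coarea_integral_core p a b hp ha0 hab hb1
  · rw [coarea_symm, abs_sub_comm]
    exact coarea_integral_core p b a hp hb0 hab ha1

lemma coarea_tsum_subtype_eq_sum {α : Type*} (A : Set α) (Φ : α → ℝ) (T : Finset α)
    (h : ∀ e ∈ A, Φ e ≠ 0 → e ∈ T) :
    ∑' e : A, Φ e.1 = ∑ e ∈ T, A.indicator Φ e := by
  rw [tsum_subtype]
  refine tsum_eq_sum fun e he => ?_
  rw [Set.indicator_apply_eq_zero]
  intro hA
  by_contra h0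
  exact he (h e hA h0)

lemma coarea_mem_edgeBoundary_iff {V : Type*} (G : SimpleGraph V) (A : Set V) {u w : V}
    (h : G.Adj u w) :
    s(u, w) ∈ edgeBoundary G A ↔ (u ∈ A ∧ w ∉ A) ∨ (w ∈ A ∧ u ∉ A) := by
  constructor
  · rintro ⟨-, u', w', he, hu', hw'⟩
    rw [Sym2.eq_iff] at he
    rcases he with ⟨rfl, rfl⟩ | ⟨rfl, rfl⟩
    · exact Or.inl ⟨hu', hw'⟩
    · exact Or.inr ⟨hu', hw'⟩
  · rintro (⟨h1, h2⟩ | ⟨h1, h2⟩)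
    · exact ⟨(SimpleGraph.mem_edgeSet G).2 h, u, w, rfl, h1, h2⟩
    · exact ⟨(SimpleGraph.mem_edgeSet G).2 h, w, u, Sym2.eq_swap.symm, h1, h2⟩

end CoareaAux

/-- **Modified coarea formula.** For a locally finite graph, `1 ≤ p < ∞`
and finitely supported `f : V → ℝ` with `0 ≤ f ≤ 1`,
`∑_{{u,w}∈E} |f u - f w|^p
  = p·∫₀¹ ∑_{{u,w} ∈ ∂_E{f ≥ s}} |min(f u, s) - min(f w, s)|^{p-1} ds`. -/
theorem modified_coarea {V : Type*} (G : SimpleGraph V)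
    (hloc : ∀ a : V, (G.neighborSet a).Finite)
    (p : ℝ) (hp : 1 ≤ p) (f : V → ℝ) (hsupp : (Function.support f).Finite)
    (h0 : ∀ x, 0 ≤ f x) (h1 : ∀ x, f x ≤ 1) :
    (∑' e : G.edgeSet,
        Sym2.lift ⟨fun u w => |f u - f w| ^ p,
          fun u w => by dsimp only; rw [abs_sub_comm]⟩ e.1)
      = p * ∫ s in (0:ℝ)..1,
          ∑' e : (edgeBoundary G {x : V | s ≤ f x}),
            Sym2.lift ⟨fun u w => |min (f u) s - min (f w) s| ^ (p - 1),
              fun u w => by dsimp only; rw [abs_sub_comm]⟩ e.1 := by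
  classical
  have hp0 : p ≠ 0 := by linarith
  set Φ : Sym2 V → ℝ := Sym2.lift ⟨fun u w => |f u - f w| ^ p,
      fun u w => by dsimp only; rw [abs_sub_comm]⟩ with hΦ
  have hΨ : ∀ s : ℝ, ∀ u w : V,
      (Sym2.lift ⟨fun u w => |min (f u) s - min (f w) s| ^ (p - 1),
        fun u w => by dsimp only; rw [abs_sub_comm]⟩ : Sym2 V → ℝ) s(u, w)
        = |min (f u) s - min (f w) s| ^ (p - 1) := fun s u w => Sym2.lift_mk _ u w
  -- the finite set of relevant edges
  set T : Finset (Sym2 V) :=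
    hsupp.toFinset.biUnion (fun v => ((hloc v).toFinset.image (fun u => s(v, u)))) with hTdef
  have hTmem : ∀ u w : V, G.Adj u w → f u ≠ 0 → s(u, w) ∈ T := by
    intro u w huw hu
    refine Finset.mem_biUnion.2 ⟨u, ?_, Finset.mem_image.2 ⟨w, ?_, rfl⟩⟩
    · simpa using hu
    · simpa using huw
  have hT : ∀ u w : V, G.Adj u w → f u ≠ f w → s(u, w) ∈ T := by
    intro u w huw hne
    by_cases hu : f u = 0
    · have hw : f w ≠ 0 := fun h => hne (hu.trans h.symm)
      rw [Sym2.eq_swap]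
      exact hTmem w u huw.symm hw
    · exact hTmem u w huw hu
  have hTedge : ∀ e ∈ T, e ∈ G.edgeSet := by
    intro e he
    obtain ⟨v, hv, he⟩ := Finset.mem_biUnion.1 he
    obtain ⟨u, hu, rfl⟩ := Finset.mem_image.1 he
    have hadj : G.Adj v u := by simpa using hu
    exact (SimpleGraph.mem_edgeSet G).2 hadj
  -- Step A : the left-hand side is a finite sum over T
  have hLHS : (∑' e : G.edgeSet, Φ e.1) = ∑ e ∈ T, Φ e := by
    rw [coarea_tsum_subtype_eq_sum G.edgeSet Φ T ?_]
    · exact Finset.sum_congr rfl fun e he => Set.indicator_of_mem (hTedge e he) Φ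
    · intro e heE hne
      induction e using Sym2.ind with
      | _ u w =>
        have huw : G.Adj u w := (SimpleGraph.mem_edgeSet G).1 heE
        refine hT u w huw fun hfe => hne ?_
        simp [hΦ, Sym2.lift_mk, hfe, Real.zero_rpow hp0]
  -- Step B : the inner tsum is a finite sum over T
  have hBd : ∀ s : ℝ, ∀ e ∈ edgeBoundary G {x : V | s ≤ f x}, e ∈ T := by
    intro s e he
    obtain ⟨heE, u, w, rfl, hu, hw⟩ := he
    have huw : G.Adj u w := (SimpleGraph.mem_edgeSet G).1 heE
    refine hT u w huw fun hfe => ?_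
    simp only [Set.mem_setOf_eq] at hu hw
    rw [hfe] at hu
    exact hw hu
  have hInner : ∀ s : ℝ,
      (∑' e : (edgeBoundary G {x : V | s ≤ f x}),
        (Sym2.lift ⟨fun u w => |min (f u) s - min (f w) s| ^ (p - 1),
          fun u w => by dsimp only; rw [abs_sub_comm]⟩ : Sym2 V → ℝ) e.1)
        = ∑ e ∈ T, (edgeBoundary G {x : V | s ≤ f x}).indicator
            (Sym2.lift ⟨fun u w => |min (f u) s - min (f w) s| ^ (p - 1),
              fun u w => by dsimp only; rw [abs_sub_comm]⟩) e := by
    intro s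
    exact coarea_tsum_subtype_eq_sum _ _ T (fun e he _ => hBd s e he)
  -- indicator reformulation per edge
  have hind : ∀ (u w : V), G.Adj u w → ∀ s : ℝ,
      (edgeBoundary G {x : V | s ≤ f x}).indicator
        (Sym2.lift ⟨fun u w => |min (f u) s - min (f w) s| ^ (p - 1),
          fun u w => by dsimp only; rw [abs_sub_comm]⟩) s(u, w)
      = (if (f w < s ∧ s ≤ f u) ∨ (f u < s ∧ s ≤ f w)
          then |min (f u) s - min (f w) s| ^ (p - 1) else 0) := by
    intro u w huw s
    rw [Set.indicator_apply, hΨ s u w]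
    refine if_congr ?_ rfl rfl
    rw [coarea_mem_edgeBoundary_iff G _ huw]
    simp only [Set.mem_setOf_eq, not_le]
    tauto
  have hInt : ∀ e ∈ T, IntervalIntegrable (fun s =>
      (edgeBoundary G {x : V | s ≤ f x}).indicator
        (Sym2.lift ⟨fun u w => |min (f u) s - min (f w) s| ^ (p - 1),
          fun u w => by dsimp only; rw [abs_sub_comm]⟩) e) MeasureTheory.volume 0 1 := by
    intro e he
    induction e using Sym2.ind with
    | _ u w =>
      have huw : G.Adj u w := (SimpleGraph.mem_edgeSet G).1 (hTedge _ he)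
      have heq : (fun s => (edgeBoundary G {x : V | s ≤ f x}).indicator
          (Sym2.lift ⟨fun u w => |min (f u) s - min (f w) s| ^ (p - 1),
            fun u w => by dsimp only; rw [abs_sub_comm]⟩) s(u, w))
          = fun s => (if (f w < s ∧ s ≤ f u) ∨ (f u < s ∧ s ≤ f w)
              then |min (f u) s - min (f w) s| ^ (p - 1) else 0) :=
        funext (hind u w huw)
      rw [heq]
      exact coarea_integrable p (f u) (f w) hp
  rw [hLHS]
  rw [intervalIntegral.integral_congr (fun s _ => hInner s)]
  rw [intervalIntegral.integral_finset_sum hInt]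
  rw [Finset.mul_sum]
  refine Finset.sum_congr rfl fun e he => ?_
  induction e using Sym2.ind with
  | _ u w =>
    have huw : G.Adj u w := (SimpleGraph.mem_edgeSet G).1 (hTedge _ he)
    rw [intervalIntegral.integral_congr (fun s _ => hind u w huw s)]
    rw [coarea_integral p (f u) (f w) hp (h0 u) (h0 w) (h1 u) (h1 w)]
    simp [hΦ, Sym2.lift_mk]
end

section
/- Let m ≥ 1 be an integer and let A ⊆ ℤ² be a finite set of vertices of the grid graph (ℤ²,ℓ¹). If m² < #A ≤ m² + m, then #∂_E(A) ≥ 4m + 2; and if m² + m < #A ≤ m² + 2m, then #∂_E(A) ≥ 4m + 4. -/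
open Real

namespace GridIso

def D : Finset (ℤ × ℤ) := {(1,0),(-1,0),(0,1),(0,-1)}

lemma adj_sub_mem {p q : ℤ × ℤ} (h : gridGraph.Adj p q) : q - p ∈ D := by
  have h' : |p.1 - q.1| + |p.2 - q.2| = 1 := h
  simp only [D, Finset.mem_insert, Finset.mem_singleton, Prod.ext_iff, Prod.fst_sub,
    Prod.snd_sub, Prod.mk.injEq]
  rcases abs_cases (p.1 - q.1) with ⟨h1, _⟩ | ⟨h1, _⟩ <;>
    rcases abs_cases (p.2 - q.2) with ⟨h2, _⟩ | ⟨h2, _⟩ <;> omega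

lemma edgeBoundary_finite (A : Set (ℤ × ℤ)) (hA : A.Finite) :
    (edgeBoundary gridGraph A).Finite := by
  have hsub : edgeBoundary gridGraph A ⊆
      (fun ud : (ℤ × ℤ) × (ℤ × ℤ) => s(ud.1, ud.1 + ud.2)) '' (A ×ˢ (D : Set (ℤ × ℤ))) := by
    rintro e ⟨he, u, w, rfl, hu, hw⟩
    have hadj : gridGraph.Adj u w := by rwa [SimpleGraph.mem_edgeSet] at he
    refine ⟨(u, w - u), ⟨hu, adj_sub_mem hadj⟩, ?_⟩
    simp
  exact Set.Finite.subset ((hA.prod D.finite_toSet).image _) hsub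


/-- y-coordinates of the column at x. -/
def colY (A' : Finset (ℤ × ℤ)) (x : ℤ) : Finset ℤ := (A'.filter fun p => p.1 = x).image Prod.snd
/-- x-coordinates of the row at y. -/
def rowX (A' : Finset (ℤ × ℤ)) (y : ℤ) : Finset ℤ := (A'.filter fun p => p.2 = y).image Prod.fst

def tX (A' : Finset (ℤ × ℤ)) (x : ℤ) : ℤ := (colY A' x).max.getD 0
def bX (A' : Finset (ℤ × ℤ)) (x : ℤ) : ℤ := (colY A' x).min.getD 0
def rY (A' : Finset (ℤ × ℤ)) (y : ℤ) : ℤ := (rowX A' y).max.getD 0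
def lY (A' : Finset (ℤ × ℤ)) (y : ℤ) : ℤ := (rowX A' y).min.getD 0

lemma mem_colY {A' : Finset (ℤ × ℤ)} {x y : ℤ} : y ∈ colY A' x ↔ (x, y) ∈ A' := by
  constructor
  · intro h
    simp only [colY, Finset.mem_image, Finset.mem_filter] at h
    obtain ⟨p, ⟨hp, hp1⟩, hp2⟩ := h
    have : p = (x, y) := by rw [Prod.ext_iff]; exact ⟨hp1, hp2⟩
    rwa [this] at hp
  · intro h
    simp only [colY, Finset.mem_image, Finset.mem_filter]
    exact ⟨(x, y), ⟨h, rfl⟩, rfl⟩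

lemma mem_rowX {A' : Finset (ℤ × ℤ)} {x y : ℤ} : x ∈ rowX A' y ↔ (x, y) ∈ A' := by
  constructor
  · intro h
    simp only [rowX, Finset.mem_image, Finset.mem_filter] at h
    obtain ⟨p, ⟨hp, hp2⟩, hp1⟩ := h
    have : p = (x, y) := by rw [Prod.ext_iff]; exact ⟨hp1, hp2⟩
    rwa [this] at hp
  · intro h
    simp only [rowX, Finset.mem_image, Finset.mem_filter]
    exact ⟨(x, y), ⟨h, rfl⟩, rfl⟩

lemma tX_mem {A' : Finset (ℤ × ℤ)} {x y : ℤ} (h : (x, y) ∈ A') : (x, tX A' x) ∈ A' := by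
  obtain ⟨M, hM⟩ := Finset.max_of_mem (mem_colY.mpr h)
  have : M ∈ colY A' x := Finset.mem_of_max hM
  rw [← mem_colY]
  rw [tX, hM]; exact this

lemma tX_top {A' : Finset (ℤ × ℤ)} {x y : ℤ} (h : (x, y) ∈ A') : y ≤ tX A' x := by
  obtain ⟨M, hM⟩ := Finset.max_of_mem (mem_colY.mpr h)
  have := Finset.le_max (mem_colY.mpr h)
  rw [hM] at this
  rw [tX, hM]; exact WithBot.coe_le_coe.mp this

lemma bX_mem {A' : Finset (ℤ × ℤ)} {x y : ℤ} (h : (x, y) ∈ A') : (x, bX A' x) ∈ A' := by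
  obtain ⟨M, hM⟩ := Finset.min_of_mem (mem_colY.mpr h)
  have : M ∈ colY A' x := Finset.mem_of_min hM
  rw [← mem_colY]
  rw [bX, hM]; exact this

lemma bX_bot {A' : Finset (ℤ × ℤ)} {x y : ℤ} (h : (x, y) ∈ A') : bX A' x ≤ y := by
  obtain ⟨M, hM⟩ := Finset.min_of_mem (mem_colY.mpr h)
  have := Finset.min_le (mem_colY.mpr h)
  rw [hM] at this
  rw [bX, hM]; exact WithTop.coe_le_coe.mp this

lemma rY_mem {A' : Finset (ℤ × ℤ)} {x y : ℤ} (h : (x, y) ∈ A') : (rY A' y, y) ∈ A' := by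
  obtain ⟨M, hM⟩ := Finset.max_of_mem (mem_rowX.mpr h)
  have : M ∈ rowX A' y := Finset.mem_of_max hM
  rw [← mem_rowX]
  rw [rY, hM]; exact this

lemma rY_top {A' : Finset (ℤ × ℤ)} {x y : ℤ} (h : (x, y) ∈ A') : x ≤ rY A' y := by
  obtain ⟨M, hM⟩ := Finset.max_of_mem (mem_rowX.mpr h)
  have := Finset.le_max (mem_rowX.mpr h)
  rw [hM] at this
  rw [rY, hM]; exact WithBot.coe_le_coe.mp this

lemma lY_mem {A' : Finset (ℤ × ℤ)} {x y : ℤ} (h : (x, y) ∈ A') : (lY A' y, y) ∈ A' := by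
  obtain ⟨M, hM⟩ := Finset.min_of_mem (mem_rowX.mpr h)
  have : M ∈ rowX A' y := Finset.mem_of_min hM
  rw [← mem_rowX]
  rw [lY, hM]; exact this

lemma lY_bot {A' : Finset (ℤ × ℤ)} {x y : ℤ} (h : (x, y) ∈ A') : lY A' y ≤ x := by
  obtain ⟨M, hM⟩ := Finset.min_of_mem (mem_rowX.mpr h)
  have := Finset.min_le (mem_rowX.mpr h)
  rw [hM] at this
  rw [lY, hM]; exact WithTop.coe_le_coe.mp this

/-- Index-to-boundary-edge map. -/
def fEdge (A' : Finset (ℤ × ℤ)) : (ℤ × Bool) ⊕ (ℤ × Bool) → Sym2 (ℤ × ℤ)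
  | .inl (x, true) => s((x, tX A' x), (x, tX A' x + 1))
  | .inl (x, false) => s((x, bX A' x - 1), (x, bX A' x))
  | .inr (y, true) => s((rY A' y, y), (rY A' y + 1, y))
  | .inr (y, false) => s((lY A' y - 1, y), (lY A' y, y))

lemma adj_vert (x a : ℤ) : gridGraph.Adj (x, a) (x, a + 1) := by
  show |x - x| + |a - (a + 1)| = 1
  simp

lemma adj_horiz (a y : ℤ) : gridGraph.Adj (a, y) (a + 1, y) := by
  show |a - (a + 1)| + |y - y| = 1
  simp


lemma main_bound (A : Set (ℤ × ℤ)) (hA : A.Finite) :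
    2 * ((hA.toFinset.image Prod.fst).card + (hA.toFinset.image Prod.snd).card)
      ≤ (edgeBoundary gridGraph A).ncard := by
  classical
  set A' := hA.toFinset with hA'def
  set C := A'.image Prod.fst with hCdef
  set R := A'.image Prod.snd with hRdef
  have exC : ∀ x ∈ C, ∃ y, (x, y) ∈ A' := by
    intro x hx
    obtain ⟨p, hp, hp1⟩ := Finset.mem_image.mp hx
    exact ⟨p.2, by rwa [show (x, p.2) = p from Prod.ext hp1.symm rfl]⟩
  have exR : ∀ y ∈ R, ∃ x, (x, y) ∈ A' := by
    intro y hy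
    obtain ⟨p, hp, hp2⟩ := Finset.mem_image.mp hy
    exact ⟨p.1, by rwa [show (p.1, y) = p from Prod.ext rfl hp2.symm]⟩
  have hmemA : ∀ p : ℤ × ℤ, p ∈ A' ↔ p ∈ A := fun p => hA.mem_toFinset
  set F : Finset ((ℤ × Bool) ⊕ (ℤ × Bool)) :=
    (C ×ˢ (Finset.univ : Finset Bool)).disjSum (R ×ˢ Finset.univ) with hFdef
  have hfin := edgeBoundary_finite A hA
  have hmaps : ∀ i ∈ F, fEdge A' i ∈ hfin.toFinset := by
    intro i hi
    rw [Set.Finite.mem_toFinset]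
    rcases i with ⟨x, b⟩ | ⟨y, b⟩
    · have hx : x ∈ C := by
        rw [hFdef, Finset.inl_mem_disjSum, Finset.mem_product] at hi; exact hi.1
      obtain ⟨y0, hy0⟩ := exC x hx
      cases b
      · show s((x, bX A' x - 1), (x, bX A' x)) ∈ edgeBoundary gridGraph A
        have hadj : gridGraph.Adj (x, bX A' x - 1) (x, bX A' x) := by
          have := adj_vert x (bX A' x - 1); simpa using this
        refine ⟨gridGraph.mem_edgeSet.mpr hadj, (x, bX A' x), (x, bX A' x - 1),
          Sym2.eq_swap.symm, ?_, ?_⟩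
        · rw [← hmemA]; exact bX_mem hy0
        · rw [← hmemA]; intro hmem; have := bX_bot hmem; omega
      · show s((x, tX A' x), (x, tX A' x + 1)) ∈ edgeBoundary gridGraph A
        refine ⟨gridGraph.mem_edgeSet.mpr (adj_vert x (tX A' x)), (x, tX A' x),
          (x, tX A' x + 1), rfl, ?_, ?_⟩
        · rw [← hmemA]; exact tX_mem hy0
        · rw [← hmemA]; intro hmem; have := tX_top hmem; omega
    · have hy : y ∈ R := by
        rw [hFdef, Finset.inr_mem_disjSum, Finset.mem_product] at hi; exact hi.1
      obtain ⟨x0, hx0⟩ := exR y hy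
      cases b
      · show s((lY A' y - 1, y), (lY A' y, y)) ∈ edgeBoundary gridGraph A
        have hadj : gridGraph.Adj (lY A' y - 1, y) (lY A' y, y) := by
          have := adj_horiz (lY A' y - 1) y; simpa using this
        refine ⟨gridGraph.mem_edgeSet.mpr hadj, (lY A' y, y), (lY A' y - 1, y),
          Sym2.eq_swap.symm, ?_, ?_⟩
        · rw [← hmemA]; exact lY_mem hx0
        · rw [← hmemA]; intro hmem; have := lY_bot hmem; omega
      · show s((rY A' y, y), (rY A' y + 1, y)) ∈ edgeBoundary gridGraph A
        refine ⟨gridGraph.mem_edgeSet.mpr (adj_horiz (rY A' y) y), (rY A' y, y),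
          (rY A' y + 1, y), rfl, ?_, ?_⟩
        · rw [← hmemA]; exact rY_mem hx0
        · rw [← hmemA]; intro hmem; have := rY_top hmem; omega
  have hinj : Set.InjOn (fEdge A') F := by
    intro i hi j hj h
    have hbt : ∀ x ∈ C, bX A' x ≤ tX A' x := by
      intro x hx
      obtain ⟨y0, hy0⟩ := exC x hx
      exact tX_top (bX_mem hy0)
    have hlr : ∀ y ∈ R, lY A' y ≤ rY A' y := by
      intro y hy
      obtain ⟨x0, hx0⟩ := exR y hy
      exact rY_top (lY_mem hx0)
    rcases i with ⟨x, _ | _⟩ | ⟨y, _ | _⟩ <;> rcases j with ⟨x', _ | _⟩ | ⟨y', _ | _⟩ <;>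
        simp only [fEdge, Sym2.eq_iff, Prod.mk.injEq] at h
    -- inl false, inl false
    · obtain rfl : x = x' := by rcases h with ⟨⟨h1, _⟩, _⟩ | ⟨⟨h1, _⟩, _⟩ <;> exact h1
      rfl
    -- inl false, inl true
    · obtain rfl : x = x' := by rcases h with ⟨⟨h1, _⟩, _⟩ | ⟨⟨h1, _⟩, _⟩ <;> exact h1
      have hx : x ∈ C := by
        have h' : _ ∈ F := hi
        rw [hFdef, Finset.inl_mem_disjSum, Finset.mem_product] at h'
        exact h'.1
      have := hbt x hx
      exfalso; omega
    -- inl false, inr false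
    · exfalso; omega
    -- inl false, inr true
    · exfalso; omega
    -- inl true, inl false
    · obtain rfl : x = x' := by rcases h with ⟨⟨h1, _⟩, _⟩ | ⟨⟨h1, _⟩, _⟩ <;> exact h1
      have hx : x ∈ C := by
        have h' : _ ∈ F := hi
        rw [hFdef, Finset.inl_mem_disjSum, Finset.mem_product] at h'
        exact h'.1
      have := hbt x hx
      exfalso; omega
    -- inl true, inl true
    · obtain rfl : x = x' := by rcases h with ⟨⟨h1, _⟩, _⟩ | ⟨⟨h1, _⟩, _⟩ <;> exact h1
      rfl
    -- inl true, inr false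
    · exfalso; omega
    -- inl true, inr true
    · exfalso; omega
    -- inr false, inl false
    · exfalso; omega
    -- inr false, inl true
    · exfalso; omega
    -- inr false, inr false
    · obtain rfl : y = y' := by rcases h with ⟨⟨_, h1⟩, _⟩ | ⟨⟨_, h1⟩, _⟩ <;> exact h1
      rfl
    -- inr false, inr true
    · obtain rfl : y = y' := by rcases h with ⟨⟨_, h1⟩, _⟩ | ⟨⟨_, h1⟩, _⟩ <;> exact h1
      have hy : y ∈ R := by
        have h' : _ ∈ F := hi
        rw [hFdef, Finset.inr_mem_disjSum, Finset.mem_product] at h'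
        exact h'.1
      have := hlr y hy
      exfalso; omega
    -- inr true, inl false
    · exfalso; omega
    -- inr true, inl true
    · exfalso; omega
    -- inr true, inr false
    · obtain rfl : y = y' := by rcases h with ⟨⟨_, h1⟩, _⟩ | ⟨⟨_, h1⟩, _⟩ <;> exact h1
      have hy : y ∈ R := by
        have h' : _ ∈ F := hi
        rw [hFdef, Finset.inr_mem_disjSum, Finset.mem_product] at h'
        exact h'.1
      have := hlr y hy
      exfalso; omega
    -- inr true, inr true
    · obtain rfl : y = y' := by rcases h with ⟨⟨_, h1⟩, _⟩ | ⟨⟨_, h1⟩, _⟩ <;> exact h1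
      rfl
  have hcard := Finset.card_le_card_of_injOn (fEdge A') hmaps hinj
  have hFcard : F.card = 2 * (C.card + R.card) := by
    rw [hFdef, Finset.card_disjSum, Finset.card_product, Finset.card_product]
    simp [Finset.card_univ]
    ring
  rw [hFcard] at hcard
  rwa [Set.ncard_eq_toFinset_card _ hfin]


lemma arith1 (c r m : ℕ) (h : m ^ 2 < c * r) : 2 * m + 1 ≤ c + r := by
  by_contra h'
  push_neg at h'
  have hc : (m : ℤ) ^ 2 < (c : ℤ) * r := by exact_mod_cast h
  have hc' : (c : ℤ) + r ≤ 2 * m := by exact_mod_cast Nat.lt_succ_iff.mp h'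
  nlinarith [sq_nonneg ((c : ℤ) - r)]

lemma arith2 (c r m : ℕ) (h : m ^ 2 + m < c * r) : 2 * m + 2 ≤ c + r := by
  by_contra h'
  push_neg at h'
  have hc : (m : ℤ) ^ 2 + m < (c : ℤ) * r := by exact_mod_cast h
  have hc' : (c : ℤ) + r ≤ 2 * m + 1 := by exact_mod_cast Nat.lt_succ_iff.mp h'
  nlinarith [sq_nonneg ((c : ℤ) - r)]

end GridIso

/-- Let `m ≥ 1` and let `A ⊆ ℤ²` be finite. If `m² < #A ≤ m² + m`
then `#∂_E(A) ≥ 4m + 2`, and if `m² + m < #A ≤ m² + 2m` then `#∂_E(A) ≥ 4m + 4`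
(edge boundary in the grid graph `(ℤ², ℓ¹)`). -/
theorem grid_edge_isoperimetry_refined (m : ℕ) (hm : 1 ≤ m)
    (A : Set (ℤ × ℤ)) (hA : A.Finite) :
    (m ^ 2 < A.ncard → A.ncard ≤ m ^ 2 + m →
      4 * m + 2 ≤ (edgeBoundary gridGraph A).ncard) ∧
    (m ^ 2 + m < A.ncard → A.ncard ≤ m ^ 2 + 2 * m →
      4 * m + 4 ≤ (edgeBoundary gridGraph A).ncard) := by
  classical
  set c := (hA.toFinset.image Prod.fst).card with hc
  set r := (hA.toFinset.image Prod.snd).card with hr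
  have hsub : hA.toFinset ⊆ (hA.toFinset.image Prod.fst) ×ˢ (hA.toFinset.image Prod.snd) := by
    intro p hp
    exact Finset.mem_product.mpr ⟨Finset.mem_image_of_mem _ hp, Finset.mem_image_of_mem _ hp⟩
  have hAcard : A.ncard ≤ c * r := by
    rw [Set.ncard_eq_toFinset_card A hA]
    calc hA.toFinset.card ≤ _ := Finset.card_le_card hsub
      _ = c * r := Finset.card_product _ _
  have hmain := GridIso.main_bound A hA
  constructor
  · intro h1 _
    have := GridIso.arith1 c r m (lt_of_lt_of_le h1 hAcard)
    omega
  · intro h1 _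
    have := GridIso.arith2 c r m (lt_of_lt_of_le h1 hAcard)
    omega
end

section
/- For every N ≥ 1, the set {v₁,…,v_N} consisting of the first N vertices of the spiral enumeration of ℤ² minimizes the edge boundary among all N-element subsets of the grid graph (ℤ²,ℓ¹): for every A ⊆ ℤ² with #A = N, one has #∂_E({v₁,…,v_N}) ≤ #∂_E(A). -/
open Real

lemma grid_adj_iff (p q : ℤ × ℤ) :
    gridGraph.Adj p q ↔
      q = (p.1+1, p.2) ∨ q = (p.1-1, p.2) ∨ q = (p.1, p.2+1) ∨ q = (p.1, p.2-1) := by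
  show |p.1 - q.1| + |p.2 - q.2| = 1 ↔ _
  rw [Int.abs_eq_natAbs, Int.abs_eq_natAbs]
  simp only [Prod.ext_iff]
  omega

def nbrs (p : ℤ × ℤ) : Set (ℤ × ℤ) := {(p.1+1, p.2), (p.1-1, p.2), (p.1, p.2+1), (p.1, p.2-1)}

lemma adj_iff_mem_nbrs (p q : ℤ × ℤ) : gridGraph.Adj p q ↔ q ∈ nbrs p := by
  rw [grid_adj_iff]; rfl

lemma nbrs_finite (p : ℤ × ℤ) : (nbrs p).Finite := by
  apply Set.Finite.insert; apply Set.Finite.insert; apply Set.Finite.insert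
  exact Set.finite_singleton _

lemma nbrs_ncard (p : ℤ × ℤ) : (nbrs p).ncard = 4 := by
  obtain ⟨x, y⟩ := p
  have h1 : ((x:ℤ)+1, y) ∉ ({((x:ℤ)-1, y), (x, y+1), (x, y-1)} : Set (ℤ×ℤ)) := by
    intro h; simp only [Set.mem_insert_iff, Set.mem_singleton_iff, Prod.mk.injEq] at h; omega
  have h2 : ((x:ℤ)-1, y) ∉ ({((x:ℤ), y+1), (x, y-1)} : Set (ℤ×ℤ)) := by
    intro h; simp only [Set.mem_insert_iff, Set.mem_singleton_iff, Prod.mk.injEq] at h; omega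
  have h3 : ((x:ℤ), y+1) ∉ ({((x:ℤ), y-1)} : Set (ℤ×ℤ)) := by
    intro h; simp only [Set.mem_singleton_iff, Prod.mk.injEq] at h; omega
  show ({((x:ℤ)+1, y), (x-1, y), (x, y+1), (x, y-1)} : Set (ℤ×ℤ)).ncard = 4
  rw [Set.ncard_insert_of_notMem h1 ((Set.finite_singleton _).insert _ |>.insert _),
      Set.ncard_insert_of_notMem h2 ((Set.finite_singleton _).insert _),
      Set.ncard_insert_of_notMem h3 (Set.finite_singleton _),
      Set.ncard_singleton]

def obnd (A : Set (ℤ × ℤ)) : Set ((ℤ × ℤ) × (ℤ × ℤ)) :=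
  {q | gridGraph.Adj q.1 q.2 ∧ q.1 ∈ A ∧ q.2 ∉ A}

lemma edgeBoundary_eq_image (A : Set (ℤ × ℤ)) :
    edgeBoundary gridGraph A = (fun q : (ℤ×ℤ) × (ℤ×ℤ) => s(q.1, q.2)) '' obnd A := by
  ext e
  constructor
  · rintro ⟨he, u, w, rfl, hu, hw⟩
    exact ⟨(u, w), ⟨(SimpleGraph.mem_edgeSet gridGraph).1 he, hu, hw⟩, rfl⟩
  · rintro ⟨⟨u, w⟩, ⟨hadj, hu, hw⟩, rfl⟩
    exact ⟨(SimpleGraph.mem_edgeSet gridGraph).2 hadj, u, w, rfl, hu, hw⟩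

lemma obnd_injOn (A : Set (ℤ × ℤ)) :
    Set.InjOn (fun q : (ℤ×ℤ) × (ℤ×ℤ) => s(q.1, q.2)) (obnd A) := by
  rintro ⟨u, w⟩ ⟨hadj, hu, hw⟩ ⟨u', w'⟩ ⟨hadj', hu', hw'⟩ h
  simp only [Sym2.eq, Sym2.rel_iff', Prod.mk.injEq, Prod.swap_prod_mk] at h
  rcases h with ⟨rfl, rfl⟩ | ⟨rfl, rfl⟩
  · rfl
  · exact absurd hu' hw

lemma eb_ncard_eq (A : Set (ℤ × ℤ)) :
    (edgeBoundary gridGraph A).ncard = (obnd A).ncard := by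
  rw [edgeBoundary_eq_image, Set.ncard_image_of_injOn (obnd_injOn A)]

lemma obnd_finite {A : Set (ℤ × ℤ)} (hA : A.Finite) : (obnd A).Finite := by
  apply Set.Finite.subset (hA.biUnion (fun a _ => (Set.finite_singleton a).prod (nbrs_finite a)))
  rintro ⟨u, w⟩ ⟨hadj, hu, hw⟩
  exact Set.mem_biUnion hu ⟨rfl, (adj_iff_mem_nbrs u w).1 hadj⟩

lemma eb_finite {A : Set (ℤ × ℤ)} (hA : A.Finite) : (edgeBoundary gridGraph A).Finite := by
  rw [edgeBoundary_eq_image]; exact (obnd_finite hA).image _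

lemma incr (A : Set (ℤ × ℤ)) (hA : A.Finite) (p : ℤ × ℤ) (hp : p ∉ A) :
    (edgeBoundary gridGraph (insert p A)).ncard + 2 * ((nbrs p ∩ A).ncard)
      = (edgeBoundary gridGraph A).ncard + 4 := by
  rw [eb_ncard_eq, eb_ncard_eq]
  set D := nbrs p ∩ A with hD
  set E := nbrs p \ A with hE
  have hDfin : D.Finite := (nbrs_finite p).inter_of_left _
  have hEfin : E.Finite := (nbrs_finite p).diff
  have key : obnd (insert p A)
      = (obnd A \ ((fun q => (q, p)) '' D)) ∪ ((fun q => (p, q)) '' E) := by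
    ext ⟨u, w⟩
    constructor
    · rintro ⟨hadj, hu, hw⟩
      simp only [Set.mem_insert_iff, not_or] at hu hw
      rcases hu with rfl | hu
      · right
        exact ⟨w, ⟨(adj_iff_mem_nbrs u w).1 hadj, hw.2⟩, rfl⟩
      · left
        refine ⟨⟨hadj, hu, hw.2⟩, ?_⟩
        rintro ⟨q, hq, heq⟩
        injection heq with h1 h2
        exact hw.1 h2.symm
    · rintro (⟨⟨hadj, hu, hw⟩, hnot⟩ | ⟨q, hq, heq⟩)
      · refine ⟨hadj, Set.mem_insert_of_mem _ hu, ?_⟩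
        rintro (rfl | hwA)
        · exact hnot ⟨u, ⟨(adj_iff_mem_nbrs w u).1 hadj.symm, hu⟩, rfl⟩
        · exact hw hwA
      · injection heq with h1 h2
        subst h1; subst h2
        have hadj : gridGraph.Adj p q := (adj_iff_mem_nbrs p q).2 hq.1
        exact ⟨hadj, Set.mem_insert _ _, by simp [hadj.ne', hq.2]⟩
  have hsubD : ((fun q => (q, p)) '' D) ⊆ obnd A := by
    rintro ⟨u, w⟩ ⟨q, ⟨hqn, hqA⟩, heq⟩
    injection heq with h1 h2
    subst h1; subst h2
    exact ⟨((adj_iff_mem_nbrs p q).2 hqn).symm, hqA, hp⟩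
  have hdisj : Disjoint (obnd A \ ((fun q => (q, p)) '' D)) ((fun q => (p, q)) '' E) := by
    rw [Set.disjoint_left]
    rintro ⟨u, w⟩ ⟨⟨hadj, hu, hw⟩, -⟩ ⟨q, hq, heq⟩
    injection heq with h1 h2
    subst h1; subst h2
    exact hp hu
  have hinjD : Set.InjOn (fun q => (q, p)) D := fun a _ b _ h => (Prod.ext_iff.1 h).1
  have hinjE : Set.InjOn (fun q => (p, q)) E := fun a _ b _ h => (Prod.ext_iff.1 h).2
  have hcardD : ((fun q => (q, p)) '' D).ncard = D.ncard := Set.ncard_image_of_injOn hinjD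
  have hcardE : ((fun q => (p, q)) '' E).ncard = E.ncard := Set.ncard_image_of_injOn hinjE
  have hDE : D.ncard + E.ncard = 4 := by
    rw [← Set.ncard_union_eq (Set.disjoint_sdiff_right.mono_left Set.inter_subset_right)
      hDfin hEfin]
    rw [Set.inter_union_diff]
    exact nbrs_ncard p
  have hle : ((fun q => (q, p)) '' D).ncard ≤ (obnd A).ncard :=
    Set.ncard_le_ncard hsubD (obnd_finite hA)
  rw [key, Set.ncard_union_eq hdisj ((obnd_finite hA).diff) (hEfin.image _),
    Set.ncard_diff hsubD (hDfin.image _), hcardD, hcardE]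
  omega

def fpt (k t : ℕ) : ℤ × ℤ :=
  if t ≤ 2*k+1 then ((k:ℤ)+1, -(k:ℤ)+t)
  else if t ≤ 4*k+3 then (3*(k:ℤ)+2-t, (k:ℤ)+1)
  else if t ≤ 6*k+5 then (-(k:ℤ)-1, 5*(k:ℤ)+4-t)
  else ((t:ℤ)-7*(k:ℤ)-6, -(k:ℤ)-1)

def inS (k t : ℕ) (p : ℤ × ℤ) : Prop :=
  (-(k:ℤ) ≤ p.1 ∧ p.1 ≤ k ∧ -(k:ℤ) ≤ p.2 ∧ p.2 ≤ k) ∨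
  (p.1 = (k:ℤ)+1 ∧ -(k:ℤ) ≤ p.2 ∧ p.2 ≤ -(k:ℤ)+t-1 ∧ p.2 ≤ (k:ℤ)+1) ∨
  (p.2 = (k:ℤ)+1 ∧ 3*(k:ℤ)+3-t ≤ p.1 ∧ -(k:ℤ)-1 ≤ p.1 ∧ p.1 ≤ k) ∨
  (p.1 = -(k:ℤ)-1 ∧ 5*(k:ℤ)+5-t ≤ p.2 ∧ -(k:ℤ)-1 ≤ p.2 ∧ p.2 ≤ (k:ℤ)+1) ∨
  (p.2 = -(k:ℤ)-1 ∧ -(k:ℤ) ≤ p.1 ∧ p.1 ≤ (t:ℤ)-7*(k:ℤ)-7 ∧ p.1 ≤ (k:ℤ)+1)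

lemma fpt_a (k t : ℕ) (h : t ≤ 2*k+1) : fpt k t = ((k:ℤ)+1, -(k:ℤ)+t) := by
  rw [fpt, if_pos h]

lemma fpt_b (k t : ℕ) (h1 : 2*k+1 < t) (h2 : t ≤ 4*k+3) :
    fpt k t = (3*(k:ℤ)+2-t, (k:ℤ)+1) := by
  rw [fpt, if_neg (by omega), if_pos h2]

lemma fpt_c (k t : ℕ) (h1 : 4*k+3 < t) (h2 : t ≤ 6*k+5) :
    fpt k t = (-(k:ℤ)-1, 5*(k:ℤ)+4-t) := by
  rw [fpt, if_neg (by omega), if_neg (by omega), if_pos h2]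

lemma fpt_d (k t : ℕ) (h1 : 6*k+5 < t) :
    fpt k t = ((t:ℤ)-7*(k:ℤ)-6, -(k:ℤ)-1) := by
  rw [fpt, if_neg (by omega), if_neg (by omega), if_neg (by omega)]

lemma spiralNext_pair (a b : ℤ) : spiralNext (a, b) =
    if 1 ≤ a ∧ b = -a then (a + 1, b)
    else if 1 ≤ a ∧ -a ≤ b ∧ b < a then (a, b + 1)
    else if 1 ≤ b ∧ -b < a ∧ a ≤ b then (a - 1, b)
    else if a ≤ -1 ∧ a < b ∧ b ≤ -a then (a, b - 1)
    else (a + 1, b) := rfl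

set_option maxHeartbeats 2000000 in
lemma inS_step (k t : ℕ) (ht : t < 8*k+8) (p : ℤ × ℤ) :
    inS k (t+1) p ↔ inS k t p ∨ p = fpt k t := by
  obtain ⟨x, y⟩ := p
  rcases le_or_gt t (2*k+1) with h | h
  · rw [fpt_a k t h]; simp only [inS, Prod.mk.injEq]; push_cast; omega
  rcases le_or_gt t (4*k+3) with h2 | h2
  · rw [fpt_b k t h h2]; simp only [inS, Prod.mk.injEq]; push_cast; omega
  rcases le_or_gt t (6*k+5) with h3 | h3
  · rw [fpt_c k t h2 h3]; simp only [inS, Prod.mk.injEq]; push_cast; omega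
  · rw [fpt_d k t h3]; simp only [inS, Prod.mk.injEq]; push_cast; omega

lemma fpt_not_mem (k t : ℕ) (ht : t ≤ 8*k+7) : ¬ inS k t (fpt k t) := by
  rcases le_or_gt t (2*k+1) with h | h
  · rw [fpt_a k t h]; simp only [inS]; push_cast; omega
  rcases le_or_gt t (4*k+3) with h2 | h2
  · rw [fpt_b k t h h2]; simp only [inS]; push_cast; omega
  rcases le_or_gt t (6*k+5) with h3 | h3
  · rw [fpt_c k t h2 h3]; simp only [inS]; push_cast; omega
  · rw [fpt_d k t h3]; simp only [inS]; push_cast; omega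

lemma inS_wrap (k : ℕ) (p : ℤ × ℤ) : inS k (8*k+8) p ↔ inS (k+1) 0 p := by
  obtain ⟨x, y⟩ := p
  simp only [inS]
  push_cast
  omega

lemma spiralNext_fpt (k t : ℕ) (ht : t < 8*k+7) :
    spiralNext (fpt k t) = fpt k (t+1) := by
  rcases le_or_gt t (2*k) with h | h
  · rw [fpt_a k t (by omega), fpt_a k (t+1) (by omega), spiralNext_pair]
    split_ifs <;> simp only [Prod.mk.injEq] <;> push_cast at * <;> (try simp only [true_and, and_true]) <;> omega
  rcases le_or_gt t (2*k+1) with h1 | h1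
  · rw [fpt_a k t (by omega), fpt_b k (t+1) (by omega) (by omega), spiralNext_pair]
    split_ifs <;> simp only [Prod.mk.injEq] <;> push_cast at * <;> (try simp only [true_and, and_true]) <;> omega
  rcases le_or_gt t (4*k+2) with h2 | h2
  · rw [fpt_b k t (by omega) (by omega), fpt_b k (t+1) (by omega) (by omega), spiralNext_pair]
    split_ifs <;> simp only [Prod.mk.injEq] <;> push_cast at * <;> (try simp only [true_and, and_true]) <;> omega
  rcases le_or_gt t (4*k+3) with h3 | h3
  · rw [fpt_b k t (by omega) (by omega), fpt_c k (t+1) (by omega) (by omega), spiralNext_pair]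
    split_ifs <;> simp only [Prod.mk.injEq] <;> push_cast at * <;> (try simp only [true_and, and_true]) <;> omega
  rcases le_or_gt t (6*k+4) with h4 | h4
  · rw [fpt_c k t (by omega) (by omega), fpt_c k (t+1) (by omega) (by omega), spiralNext_pair]
    split_ifs <;> simp only [Prod.mk.injEq] <;> push_cast at * <;> (try simp only [true_and, and_true]) <;> omega
  rcases le_or_gt t (6*k+5) with h5 | h5
  · rw [fpt_c k t (by omega) (by omega), fpt_d k (t+1) (by omega), spiralNext_pair]
    split_ifs <;> simp only [Prod.mk.injEq] <;> push_cast at * <;> (try simp only [true_and, and_true]) <;> omega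
  · rw [fpt_d k t (by omega), fpt_d k (t+1) (by omega), spiralNext_pair]
    split_ifs <;> simp only [Prod.mk.injEq] <;> push_cast at * <;> (try simp only [true_and, and_true]) <;> omega

lemma spiralNext_fpt_wrap (k : ℕ) :
    spiralNext (fpt k (8*k+7)) = fpt (k+1) 0 := by
  rw [fpt_d k (8*k+7) (by omega), fpt_a (k+1) 0 (by omega), spiralNext_pair]
  split_ifs <;> simp only [Prod.mk.injEq] <;> push_cast at * <;> (try simp only [true_and, and_true]) <;> omega

lemma ncard_pair' (a b : ℤ × ℤ) (h : a ≠ b) : ({a, b} : Set (ℤ × ℤ)).ncard = 2 :=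
  Set.ncard_pair h

set_option maxHeartbeats 2000000 in
lemma d_corner (k t : ℕ) (h : t = 0 ∨ t = 2*k+1 ∨ t = 4*k+3 ∨ t = 6*k+5) :
    (nbrs (fpt k t) ∩ {p | inS k t p}).ncard = 1 := by
  obtain rfl | rfl | rfl | rfl := h
  · have he : nbrs (fpt k 0) ∩ {p | inS k 0 p} = {((k:ℤ), -(k:ℤ))} := by
      rw [fpt_a k 0 (by omega)]; ext ⟨x, y⟩
      simp only [nbrs, inS, Set.mem_inter_iff, Set.mem_insert_iff, Set.mem_singleton_iff,
        Set.mem_setOf_eq, Prod.mk.injEq]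
      push_cast; omega
    rw [he]; exact Set.ncard_singleton _
  · have he : nbrs (fpt k (2*k+1)) ∩ {p | inS k (2*k+1) p} = {((k:ℤ)+1, (k:ℤ))} := by
      rw [fpt_a k (2*k+1) (by omega)]; ext ⟨x, y⟩
      simp only [nbrs, inS, Set.mem_inter_iff, Set.mem_insert_iff, Set.mem_singleton_iff,
        Set.mem_setOf_eq, Prod.mk.injEq]
      push_cast; omega
    rw [he]; exact Set.ncard_singleton _
  · have he : nbrs (fpt k (4*k+3)) ∩ {p | inS k (4*k+3) p} = {(-(k:ℤ), (k:ℤ)+1)} := by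
      rw [fpt_b k (4*k+3) (by omega) (by omega)]; ext ⟨x, y⟩
      simp only [nbrs, inS, Set.mem_inter_iff, Set.mem_insert_iff, Set.mem_singleton_iff,
        Set.mem_setOf_eq, Prod.mk.injEq]
      push_cast; omega
    rw [he]; exact Set.ncard_singleton _
  · have he : nbrs (fpt k (6*k+5)) ∩ {p | inS k (6*k+5) p} = {(-(k:ℤ)-1, -(k:ℤ))} := by
      rw [fpt_c k (6*k+5) (by omega) (by omega)]; ext ⟨x, y⟩
      simp only [nbrs, inS, Set.mem_inter_iff, Set.mem_insert_iff, Set.mem_singleton_iff,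
        Set.mem_setOf_eq, Prod.mk.injEq]
      push_cast; omega
    rw [he]; exact Set.ncard_singleton _

set_option maxHeartbeats 4000000 in
lemma d_mid (k t : ℕ) (h1 : 1 ≤ t) (h2 : t ≤ 8*k+7)
    (hc : t ≠ 2*k+1) (hc2 : t ≠ 4*k+3) (hc3 : t ≠ 6*k+5) :
    (nbrs (fpt k t) ∩ {p | inS k t p}).ncard = 2 := by
  have main : ∃ q1 q2 : ℤ × ℤ, q1 ≠ q2 ∧ nbrs (fpt k t) ∩ {p | inS k t p} = {q1, q2} := by
    rcases le_or_gt t (2*k) with hr | hr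
    · refine ⟨((k:ℤ)+1, -(k:ℤ)+t-1), ((k:ℤ), -(k:ℤ)+t), by intro hq; rw [Prod.mk.injEq] at hq; omega, ?_⟩
      rw [fpt_a k t (by omega)]; ext ⟨x, y⟩
      simp only [nbrs, inS, Set.mem_inter_iff, Set.mem_insert_iff, Set.mem_singleton_iff,
        Set.mem_setOf_eq, Prod.mk.injEq]
      push_cast; omega
    rcases Nat.lt_or_ge t (2*k+3) with hr2 | hr2
    · have htv : t = 2*k+2 := by omega
      subst htv
      refine ⟨((k:ℤ)+1, (k:ℤ)+1), ((k:ℤ), (k:ℤ)), by intro hq; rw [Prod.mk.injEq] at hq; omega, ?_⟩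
      rw [fpt_b k _ (by omega) (by omega)]; ext ⟨x, y⟩
      simp only [nbrs, inS, Set.mem_inter_iff, Set.mem_insert_iff, Set.mem_singleton_iff,
        Set.mem_setOf_eq, Prod.mk.injEq]
      push_cast; omega
    rcases le_or_gt t (4*k+2) with hr3 | hr3
    · refine ⟨(3*(k:ℤ)+3-t, (k:ℤ)+1), (3*(k:ℤ)+2-t, (k:ℤ)), by intro hq; rw [Prod.mk.injEq] at hq; omega, ?_⟩
      rw [fpt_b k t (by omega) (by omega)]; ext ⟨x, y⟩
      simp only [nbrs, inS, Set.mem_inter_iff, Set.mem_insert_iff, Set.mem_singleton_iff,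
        Set.mem_setOf_eq, Prod.mk.injEq]
      push_cast; omega
    rcases Nat.lt_or_ge t (4*k+5) with hr4 | hr4
    · have htv : t = 4*k+4 := by omega
      subst htv
      refine ⟨(-(k:ℤ)-1, (k:ℤ)+1), (-(k:ℤ), (k:ℤ)), by intro hq; rw [Prod.mk.injEq] at hq; omega, ?_⟩
      rw [fpt_c k _ (by omega) (by omega)]; ext ⟨x, y⟩
      simp only [nbrs, inS, Set.mem_inter_iff, Set.mem_insert_iff, Set.mem_singleton_iff,
        Set.mem_setOf_eq, Prod.mk.injEq]
      push_cast; omega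
    rcases le_or_gt t (6*k+4) with hr5 | hr5
    · refine ⟨(-(k:ℤ)-1, 5*(k:ℤ)+5-t), (-(k:ℤ), 5*(k:ℤ)+4-t), by intro hq; rw [Prod.mk.injEq] at hq; omega, ?_⟩
      rw [fpt_c k t (by omega) (by omega)]; ext ⟨x, y⟩
      simp only [nbrs, inS, Set.mem_inter_iff, Set.mem_insert_iff, Set.mem_singleton_iff,
        Set.mem_setOf_eq, Prod.mk.injEq]
      push_cast; omega
    rcases Nat.lt_or_ge t (6*k+7) with hr6 | hr6
    · have htv : t = 6*k+6 := by omega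
      subst htv
      refine ⟨(-(k:ℤ)-1, -(k:ℤ)-1), (-(k:ℤ), -(k:ℤ)), by intro hq; rw [Prod.mk.injEq] at hq; omega, ?_⟩
      rw [fpt_d k _ (by omega)]; ext ⟨x, y⟩
      simp only [nbrs, inS, Set.mem_inter_iff, Set.mem_insert_iff, Set.mem_singleton_iff,
        Set.mem_setOf_eq, Prod.mk.injEq]
      push_cast; omega
    · refine ⟨((t:ℤ)-7*(k:ℤ)-7, -(k:ℤ)-1), ((t:ℤ)-7*(k:ℤ)-6, -(k:ℤ)), by
        intro hq; rw [Prod.mk.injEq] at hq; omega, ?_⟩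
      rw [fpt_d k t (by omega)]; ext ⟨x, y⟩
      simp only [nbrs, inS, Set.mem_inter_iff, Set.mem_insert_iff, Set.mem_singleton_iff,
        Set.mem_setOf_eq, Prod.mk.injEq]
      push_cast; omega
  obtain ⟨q1, q2, hne, he⟩ := main
  rw [he]
  exact Set.ncard_pair hne

/-- Half-perimeter bookkeeping. -/
def per (k t : ℕ) : ℕ :=
  8*k+4 + (if t = 0 then 0 else if t ≤ 2*k+1 then 2 else if t ≤ 4*k+3 then 4
    else if t ≤ 6*k+5 then 6 else 8)

set_option maxHeartbeats 1000000 in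
lemma main_inv (n : ℕ) (hn : 1 ≤ n) : ∀ k t : ℕ, n = (2*k+1)^2 + t → t < 8*k+8 →
    spiral '' Set.Iio n = {p | inS k t p} ∧ spiral n = fpt k t ∧
      (edgeBoundary gridGraph (spiral '' Set.Iio n)).ncard = per k t := by
  induction n, hn using Nat.le_induction with
  | base =>
    intro k t hdec ht
    obtain ⟨rfl, rfl⟩ : k = 0 ∧ t = 0 := by
      rcases k with _ | m
      · constructor <;> omega
      · exfalso
        have h9 : 3^2 ≤ (2*(m+1)+1)^2 := Nat.pow_le_pow_left (by omega) 2
        omega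
    have hIio : Set.Iio (1:ℕ) = {0} := by ext m; simp [Nat.lt_one_iff]
    have hs0 : spiral 0 = ((0:ℤ), (0:ℤ)) := rfl
    have himg : spiral '' Set.Iio 1 = {((0:ℤ), (0:ℤ))} := by
      rw [hIio, Set.image_singleton, hs0]
    have hset : spiral '' Set.Iio 1 = {p | inS 0 0 p} := by
      rw [himg]; ext ⟨x, y⟩
      simp only [Set.mem_singleton_iff, Set.mem_setOf_eq, inS, Prod.mk.injEq]
      push_cast; omega
    refine ⟨hset, ?_, ?_⟩
    · show spiralNext (0, 0) = fpt 0 0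
      rw [fpt]; norm_num [spiralNext]
    · rw [himg, show ({((0:ℤ), (0:ℤ))} : Set (ℤ × ℤ)) = insert ((0:ℤ), (0:ℤ)) ∅ by simp]
      have h0 := incr ∅ Set.finite_empty ((0:ℤ), (0:ℤ)) (Set.notMem_empty _)
      have hee : edgeBoundary gridGraph (∅ : Set (ℤ × ℤ)) = ∅ := by
        ext e; simp [edgeBoundary]
      rw [hee, Set.inter_empty] at h0
      simp only [Set.ncard_empty, Nat.mul_zero, Nat.add_zero, Nat.zero_add] at h0
      have hper : per 0 0 = 4 := by simp [per]
      omega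
  | succ n hn1 IH =>
    intro k t hdec ht
    have hIio : Set.Iio (n+1) = insert n (Set.Iio n) := by
      ext m; simp [Set.mem_Iio, Set.mem_insert_iff]
    have hstep : spiral '' Set.Iio (n+1) = insert (spiral n) (spiral '' Set.Iio n) := by
      rw [hIio, Set.image_insert_eq]
    have hiter : spiral (n+1) = spiralNext (spiral n) :=
      Function.iterate_succ_apply' spiralNext n (0, 0)
    rcases Nat.eq_zero_or_pos t with rfl | htpos
    · -- wrap case : n+1 = (2k+1)^2, previous decomposition (k-1, 8(k-1)+7)
      obtain ⟨m, rfl⟩ : ∃ m, k = m + 1 := by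
        rcases k with _ | m
        · exfalso; omega
        · exact ⟨m, rfl⟩
      have hdec' : n = (2*m+1)^2 + (8*m+7) := by
        have : (2*(m+1)+1)^2 = (2*m+1)^2 + (8*m+8) := by ring
        omega
      obtain ⟨hset, hnext, hbd⟩ := IH m (8*m+7) hdec' (by omega)
      have hfin : ({p | inS m (8*m+7) p} : Set (ℤ × ℤ)).Finite :=
        hset ▸ ((Set.finite_Iio n).image _)
      have hins : insert (fpt m (8*m+7)) {p | inS m (8*m+7) p} = {p | inS (m+1) 0 p} := by
        ext p
        rw [Set.mem_insert_iff, Set.mem_setOf_eq, Set.mem_setOf_eq, ← inS_wrap,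
          show 8*m+8 = (8*m+7)+1 from rfl, inS_step m (8*m+7) (by omega) p]
        tauto
      have hsetnew : spiral '' Set.Iio (n+1) = {p | inS (m+1) 0 p} := by
        rw [hstep, hnext, hset, hins]
      refine ⟨hsetnew, ?_, ?_⟩
      · rw [hiter, hnext, spiralNext_fpt_wrap]
      · have hd : (nbrs (fpt m (8*m+7)) ∩ {p | inS m (8*m+7) p}).ncard = 2 :=
          d_mid m (8*m+7) (by omega) (by omega) (by omega) (by omega) (by omega)
        have h0 := incr {p | inS m (8*m+7) p} hfin (fpt m (8*m+7))
          (fpt_not_mem m (8*m+7) (by omega))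
        rw [hd, hins] at h0
        rw [hsetnew]
        rw [← hset, hbd] at h0
        have hp1 : per m (8*m+7) = 8*m+12 := by
          simp only [per]; split_ifs <;> first | omega | exact (‹False›).elim
        have hp2 : per (m+1) 0 = 8*m+12 := by
          simp only [per]; split_ifs <;> first | omega | exact (‹False›).elim
        omega
    · -- interior case : previous decomposition (k, t-1)
      obtain ⟨s, rfl⟩ : ∃ s, t = s + 1 := ⟨t - 1, by omega⟩
      have hdec' : n = (2*k+1)^2 + s := by omega
      obtain ⟨hset, hnext, hbd⟩ := IH k s hdec' (by omega)
      have hfin : ({p | inS k s p} : Set (ℤ × ℤ)).Finite :=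
        hset ▸ ((Set.finite_Iio n).image _)
      have hins : insert (fpt k s) {p | inS k s p} = {p | inS k (s+1) p} := by
        ext p
        rw [Set.mem_insert_iff, Set.mem_setOf_eq, Set.mem_setOf_eq,
          inS_step k s (by omega) p]
        tauto
      have hsetnew : spiral '' Set.Iio (n+1) = {p | inS k (s+1) p} := by
        rw [hstep, hnext, hset, hins]
      refine ⟨hsetnew, ?_, ?_⟩
      · rw [hiter, hnext, spiralNext_fpt k s (by omega)]
      · have h0 := incr {p | inS k s p} hfin (fpt k s) (fpt_not_mem k s (by omega))
        rw [hsetnew]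
        by_cases hcor : s = 0 ∨ s = 2*k+1 ∨ s = 4*k+3 ∨ s = 6*k+5
        · have hd : (nbrs (fpt k s) ∩ {p | inS k s p}).ncard = 1 := d_corner k s hcor
          rw [hd, hins] at h0
          rw [← hset, hbd] at h0
          have hp : per k (s+1) = per k s + 2 := by
            simp only [per]; split_ifs <;> first | omega | exact (‹False›).elim
          omega
        · push_neg at hcor
          have hd : (nbrs (fpt k s) ∩ {p | inS k s p}).ncard = 2 :=
            d_mid k s (by omega) (by omega) (by omega) (by omega) (by omega)
          rw [hd, hins] at h0
          rw [← hset, hbd] at h0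
          have hp : per k (s+1) = per k s := by
            simp only [per]; split_ifs <;> first | omega | exact (‹False›).elim
          omega

lemma max_facts (F : Finset ℤ) (h : F.Nonempty) :
    F.max.unbotD 0 ∈ F ∧ ∀ y ∈ F, y ≤ F.max.unbotD 0 := by
  obtain ⟨M, hM⟩ := Finset.max_of_nonempty h
  rw [hM]
  refine ⟨Finset.mem_of_max hM, fun y hy => ?_⟩
  have := Finset.le_max hy
  rw [hM] at this
  exact_mod_cast this

lemma min_facts (F : Finset ℤ) (h : F.Nonempty) :
    F.min.untopD 0 ∈ F ∧ ∀ y ∈ F, F.min.untopD 0 ≤ y := by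
  obtain ⟨M, hM⟩ := Finset.min_of_nonempty h
  rw [hM]
  refine ⟨Finset.mem_of_min hM, fun y hy => ?_⟩
  have := Finset.min_le hy
  rw [hM] at this
  exact_mod_cast this

lemma vert_eq_iff (x a x' a' : ℤ) :
    s(((x, a) : ℤ × ℤ), (x, a+1)) = s(((x', a') : ℤ × ℤ), (x', a'+1)) ↔ x = x' ∧ a = a' := by
  constructor
  · intro h
    rw [Sym2.eq_iff] at h
    rcases h with ⟨h1, h2⟩ | ⟨h1, h2⟩ <;> rw [Prod.mk.injEq] at h1 h2 <;> omega
  · rintro ⟨rfl, rfl⟩; rfl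

lemma horiz_eq_iff (y a y' a' : ℤ) :
    s(((a, y) : ℤ × ℤ), (a+1, y)) = s(((a', y') : ℤ × ℤ), (a'+1, y')) ↔ y = y' ∧ a = a' := by
  constructor
  · intro h
    rw [Sym2.eq_iff] at h
    rcases h with ⟨h1, h2⟩ | ⟨h1, h2⟩ <;> rw [Prod.mk.injEq] at h1 h2 <;> omega
  · rintro ⟨rfl, rfl⟩; rfl

lemma vert_ne_horiz (x a b y : ℤ) :
    s(((x, a) : ℤ × ℤ), (x, a+1)) ≠ s(((b, y) : ℤ × ℤ), (b+1, y)) := by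
  intro h
  rw [Sym2.eq_iff] at h
  rcases h with ⟨h1, h2⟩ | ⟨h1, h2⟩ <;> rw [Prod.mk.injEq] at h1 h2 <;> omega

set_option maxHeartbeats 1000000 in
lemma lower_bound (A : Set (ℤ × ℤ)) (hA : A.Finite) (hne : A.Nonempty) :
    ∃ c r : ℕ, 1 ≤ c ∧ 1 ≤ r ∧ A.ncard ≤ c*r ∧
      2*(c+r) ≤ (edgeBoundary gridGraph A).ncard := by
  classical
  set s : Finset (ℤ × ℤ) := hA.toFinset with hs
  have hmem : ∀ p : ℤ × ℤ, p ∈ s ↔ p ∈ A := fun p => hA.mem_toFinset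
  have hsne : s.Nonempty := by
    obtain ⟨p, hp⟩ := hne; exact ⟨p, (hmem p).2 hp⟩
  set cols := s.image Prod.fst with hcols
  set rows := s.image Prod.snd with hrows
  -- fibers
  set colF : ℤ → Finset ℤ := fun x => (s.filter (fun p => p.1 = x)).image Prod.snd with hcolF
  set rowF : ℤ → Finset ℤ := fun y => (s.filter (fun p => p.2 = y)).image Prod.fst with hrowF
  have hcolF_ne : ∀ x ∈ cols, (colF x).Nonempty := by
    intro x hx
    obtain ⟨p, hp, rfl⟩ := Finset.mem_image.1 hx
    exact ⟨p.2, Finset.mem_image.2 ⟨p, Finset.mem_filter.2 ⟨hp, rfl⟩, rfl⟩⟩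
  have hrowF_ne : ∀ y ∈ rows, (rowF y).Nonempty := by
    intro y hy
    obtain ⟨p, hp, rfl⟩ := Finset.mem_image.1 hy
    exact ⟨p.1, Finset.mem_image.2 ⟨p, Finset.mem_filter.2 ⟨hp, rfl⟩, rfl⟩⟩
  set ytop : ℤ → ℤ := fun x => (colF x).max.unbotD 0 with hytop
  set ybot : ℤ → ℤ := fun x => (colF x).min.untopD 0 with hybot
  set xrt : ℤ → ℤ := fun y => (rowF y).max.unbotD 0 with hxrt
  set xlt : ℤ → ℤ := fun y => (rowF y).min.untopD 0 with hxlt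
  have hcolF_mem : ∀ x y : ℤ, y ∈ colF x ↔ (x, y) ∈ s := by
    intro x y
    constructor
    · intro h
      obtain ⟨p, hp, rfl⟩ := Finset.mem_image.1 h
      obtain ⟨hps, hpx⟩ := Finset.mem_filter.1 hp
      rwa [show (x, p.2) = p from Prod.ext hpx.symm rfl]
    · intro h
      exact Finset.mem_image.2 ⟨(x, y), Finset.mem_filter.2 ⟨h, rfl⟩, rfl⟩
  have hrowF_mem : ∀ y x : ℤ, x ∈ rowF y ↔ (x, y) ∈ s := by
    intro y x
    constructor
    · intro h
      obtain ⟨p, hp, rfl⟩ := Finset.mem_image.1 h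
      obtain ⟨hps, hpy⟩ := Finset.mem_filter.1 hp
      rwa [show (p.1, y) = p from Prod.ext rfl hpy.symm]
    · intro h
      exact Finset.mem_image.2 ⟨(x, y), Finset.mem_filter.2 ⟨h, rfl⟩, rfl⟩
  have htopfacts : ∀ x ∈ cols, (x, ytop x) ∈ s ∧ ∀ y, (x, y) ∈ s → y ≤ ytop x := by
    intro x hx
    obtain ⟨h1, h2⟩ := max_facts (colF x) (hcolF_ne x hx)
    exact ⟨(hcolF_mem x _).1 h1, fun y hy => h2 y ((hcolF_mem x y).2 hy)⟩
  have hbotfacts : ∀ x ∈ cols, (x, ybot x) ∈ s ∧ ∀ y, (x, y) ∈ s → ybot x ≤ y := by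
    intro x hx
    obtain ⟨h1, h2⟩ := min_facts (colF x) (hcolF_ne x hx)
    exact ⟨(hcolF_mem x _).1 h1, fun y hy => h2 y ((hcolF_mem x y).2 hy)⟩
  have hrtfacts : ∀ y ∈ rows, (xrt y, y) ∈ s ∧ ∀ x, (x, y) ∈ s → x ≤ xrt y := by
    intro y hy
    obtain ⟨h1, h2⟩ := max_facts (rowF y) (hrowF_ne y hy)
    exact ⟨(hrowF_mem y _).1 h1, fun x hx => h2 x ((hrowF_mem y x).2 hx)⟩
  have hltfacts : ∀ y ∈ rows, (xlt y, y) ∈ s ∧ ∀ x, (x, y) ∈ s → xlt y ≤ x := by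
    intro y hy
    obtain ⟨h1, h2⟩ := min_facts (rowF y) (hrowF_ne y hy)
    exact ⟨(hrowF_mem y _).1 h1, fun x hx => h2 x ((hrowF_mem y x).2 hx)⟩
  -- the four families of boundary edges
  set et : ℤ → Sym2 (ℤ × ℤ) := fun x => s(((x, ytop x) : ℤ × ℤ), (x, ytop x + 1)) with het
  set eb : ℤ → Sym2 (ℤ × ℤ) := fun x => s(((x, ybot x - 1) : ℤ × ℤ), (x, ybot x)) with heb
  set er : ℤ → Sym2 (ℤ × ℤ) := fun y => s(((xrt y, y) : ℤ × ℤ), (xrt y + 1, y)) with her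
  set el : ℤ → Sym2 (ℤ × ℤ) := fun y => s(((xlt y - 1, y) : ℤ × ℤ), (xlt y, y)) with hel
  have hebv : ∀ x, eb x = s(((x, ybot x - 1) : ℤ × ℤ), (x, (ybot x - 1) + 1)) := by
    intro x; rw [heb]; norm_num
  have helv : ∀ y, el y = s((((xlt y - 1), y) : ℤ × ℤ), ((xlt y - 1) + 1, y)) := by
    intro y; rw [hel]; norm_num
  set T : Finset (Sym2 (ℤ × ℤ)) :=
    ((cols.image et ∪ cols.image eb) ∪ (rows.image er ∪ rows.image el)) with hT
  -- injectivity of each family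
  have hinj_et : Set.InjOn et cols := by
    intro x _ x' _ h; exact ((vert_eq_iff _ _ _ _).1 h).1
  have hinj_eb : Set.InjOn eb cols := by
    intro x _ x' _ h; rw [hebv, hebv] at h; exact ((vert_eq_iff _ _ _ _).1 h).1
  have hinj_er : Set.InjOn er rows := by
    intro y _ y' _ h; exact ((horiz_eq_iff _ _ _ _).1 h).1
  have hinj_el : Set.InjOn el rows := by
    intro y _ y' _ h; rw [helv, helv] at h; exact ((horiz_eq_iff _ _ _ _).1 h).1
  -- disjointness
  have hdisj1 : Disjoint (cols.image et) (cols.image eb) := by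
    rw [Finset.disjoint_left]
    rintro e he1 he2
    obtain ⟨x, hx, rfl⟩ := Finset.mem_image.1 he1
    obtain ⟨x', hx', hee⟩ := Finset.mem_image.1 he2
    rw [hebv x'] at hee
    obtain ⟨rfl, hv⟩ := (vert_eq_iff _ _ _ _).1 hee.symm
    have h1 := (htopfacts x hx).2 _ (hbotfacts x hx).1
    omega
  have hdisj2 : Disjoint (rows.image er) (rows.image el) := by
    rw [Finset.disjoint_left]
    rintro e he1 he2
    obtain ⟨y, hy, rfl⟩ := Finset.mem_image.1 he1
    obtain ⟨y', hy', hee⟩ := Finset.mem_image.1 he2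
    rw [helv y'] at hee
    obtain ⟨rfl, hv⟩ := (horiz_eq_iff _ _ _ _).1 hee.symm
    have h1 := (hrtfacts y hy).2 _ (hltfacts y hy).1
    omega
  have hdisjVH : Disjoint (cols.image et ∪ cols.image eb) (rows.image er ∪ rows.image el) := by
    rw [Finset.disjoint_left]
    rintro e he1 he2
    rw [Finset.mem_union] at he1 he2
    have hev : ∃ x a : ℤ, e = s(((x, a) : ℤ × ℤ), (x, a+1)) := by
      rcases he1 with h | h
      · obtain ⟨x, hx, rfl⟩ := Finset.mem_image.1 h
        exact ⟨x, ytop x, rfl⟩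
      · obtain ⟨x, hx, rfl⟩ := Finset.mem_image.1 h
        exact ⟨x, ybot x - 1, hebv x⟩
    have heh : ∃ y b : ℤ, e = s(((b, y) : ℤ × ℤ), (b+1, y)) := by
      rcases he2 with h | h
      · obtain ⟨y, hy, rfl⟩ := Finset.mem_image.1 h
        exact ⟨y, xrt y, rfl⟩
      · obtain ⟨y, hy, rfl⟩ := Finset.mem_image.1 h
        exact ⟨y, xlt y - 1, helv y⟩
    obtain ⟨x, a, rfl⟩ := hev
    obtain ⟨y, b, hee⟩ := heh
    exact vert_ne_horiz x a b y hee
  -- cardinality of T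
  have hcardT : T.card = 2 * (cols.card + rows.card) := by
    rw [hT, Finset.card_union_of_disjoint hdisjVH, Finset.card_union_of_disjoint hdisj1,
      Finset.card_union_of_disjoint hdisj2,
      Finset.card_image_of_injOn hinj_et, Finset.card_image_of_injOn hinj_eb,
      Finset.card_image_of_injOn hinj_er, Finset.card_image_of_injOn hinj_el]
    ring
  -- T consists of boundary edges
  have hadjv : ∀ x a : ℤ, gridGraph.Adj (x, a) (x, a+1) := by
    intro x a; show |x - x| + |a - (a+1)| = 1; simp
  have hadjh : ∀ y b : ℤ, gridGraph.Adj (b, y) (b+1, y) := by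
    intro y b; show |b - (b+1)| + |y - y| = 1; simp
  have hadjv2 : ∀ x a : ℤ, gridGraph.Adj (x, a) (x, a-1) := by
    intro x a; show |x - x| + |a - (a-1)| = 1; simp
  have hadjh2 : ∀ y b : ℤ, gridGraph.Adj (b, y) (b-1, y) := by
    intro y b; show |b - (b-1)| + |y - y| = 1; simp
  have hTsub : (T : Set (Sym2 (ℤ × ℤ))) ⊆ edgeBoundary gridGraph A := by
    intro e he
    rw [Finset.mem_coe, hT] at he
    rw [Finset.mem_union, Finset.mem_union, Finset.mem_union] at he
    rcases he with (h | h) | (h | h)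
    · obtain ⟨x, hx, rfl⟩ := Finset.mem_image.1 h
      refine ⟨(SimpleGraph.mem_edgeSet gridGraph).2 (hadjv x (ytop x)), (x, ytop x),
        (x, ytop x + 1), rfl, (hmem _).1 (htopfacts x hx).1, fun hmem2 => ?_⟩
      have := (htopfacts x hx).2 _ ((hmem _).2 hmem2)
      omega
    · obtain ⟨x, hx, rfl⟩ := Finset.mem_image.1 h
      simp only [heb]
      refine ⟨by rw [Sym2.eq_swap]; exact (SimpleGraph.mem_edgeSet gridGraph).2 (hadjv2 x (ybot x)), (x, ybot x),
        (x, ybot x - 1), Sym2.eq_swap, (hmem _).1 (hbotfacts x hx).1, fun hmem2 => ?_⟩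
      have := (hbotfacts x hx).2 _ ((hmem _).2 hmem2)
      omega
    · obtain ⟨y, hy, rfl⟩ := Finset.mem_image.1 h
      refine ⟨(SimpleGraph.mem_edgeSet gridGraph).2 (hadjh y (xrt y)), (xrt y, y),
        (xrt y + 1, y), rfl, (hmem _).1 (hrtfacts y hy).1, fun hmem2 => ?_⟩
      have := (hrtfacts y hy).2 _ ((hmem _).2 hmem2)
      omega
    · obtain ⟨y, hy, rfl⟩ := Finset.mem_image.1 h
      simp only [hel]
      refine ⟨by rw [Sym2.eq_swap]; exact (SimpleGraph.mem_edgeSet gridGraph).2 (hadjh2 y (xlt y)), (xlt y, y),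
        (xlt y - 1, y), Sym2.eq_swap, (hmem _).1 (hltfacts y hy).1, fun hmem2 => ?_⟩
      have := (hltfacts y hy).2 _ ((hmem _).2 hmem2)
      omega
  refine ⟨cols.card, rows.card, ?_, ?_, ?_, ?_⟩
  · exact Finset.card_pos.2 (hsne.image _)
  · exact Finset.card_pos.2 (hsne.image _)
  · rw [Set.ncard_eq_toFinset_card A hA]
    calc s.card ≤ (cols ×ˢ rows).card := by
          apply Finset.card_le_card
          intro p hp
          rw [Finset.mem_product]
          exact ⟨Finset.mem_image.2 ⟨p, hp, rfl⟩, Finset.mem_image.2 ⟨p, hp, rfl⟩⟩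
      _ = cols.card * rows.card := Finset.card_product _ _
  · calc 2 * (cols.card + rows.card) = T.card := hcardT.symm
      _ = (T : Set (Sym2 (ℤ × ℤ))).ncard := (Set.ncard_coe_finset T).symm
      _ ≤ (edgeBoundary gridGraph A).ncard := Set.ncard_le_ncard hTsub (eb_finite hA)

lemma exists_decomp (n : ℕ) (hn : 1 ≤ n) : ∃ k t, n = (2*k+1)^2 + t ∧ t < 8*k+8 := by
  induction n, hn using Nat.le_induction with
  | base => exact ⟨0, 0, by norm_num, by omega⟩
  | succ n hn IH =>
    obtain ⟨k, t, hdec, ht⟩ := IH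
    by_cases h : t + 1 < 8*k+8
    · exact ⟨k, t+1, by omega, h⟩
    · refine ⟨k+1, 0, ?_, by omega⟩
      have he : (2*(k+1)+1)^2 = (2*k+1)^2 + (8*k+8) := by ring
      omega

lemma sum_ge (k t c r : ℕ) (ht : t < 8*k+8) (hc : 1 ≤ c) (hr : 1 ≤ r)
    (h : (2*k+1)^2 + t ≤ c*r) : per k t ≤ 2*(c+r) := by
  have key : ∀ s : ℕ, 4*((2*k+1)^2 + t) > s*s → s + 1 ≤ c + r := by
    intro s hs
    by_contra hcon
    push_neg at hcon
    have h1 : c + r ≤ s := by omega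
    have h2 : 4*(c*r) ≤ (c+r)*(c+r) := by
      rcases Nat.le_total c r with hle | hle
      · obtain ⟨d, rfl⟩ := Nat.exists_eq_add_of_le hle
        ring_nf; nlinarith
      · obtain ⟨d, rfl⟩ := Nat.exists_eq_add_of_le hle
        ring_nf; nlinarith
    have h3 : (c+r)*(c+r) ≤ s*s := Nat.mul_le_mul h1 h1
    have h4 : 4*((2*k+1)^2 + t) ≤ 4*(c*r) := by omega
    omega
  simp only [per]
  split_ifs with h0 h1 h2 h3
  · -- t = 0 : need 8k+4 ≤ 2(c+r) i.e. c+r ≥ 4k+2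
    have := key (4*k+1) (by nlinarith)
    omega
  · -- 1 ≤ t ≤ 2k+1 : c+r ≥ 4k+3
    have := key (4*k+2) (by nlinarith [Nat.one_le_iff_ne_zero.2 h0])
    omega
  · -- 2k+2 ≤ t ≤ 4k+3 : c+r ≥ 4k+4
    have := key (4*k+3) (by nlinarith)
    omega
  · -- 4k+4 ≤ t ≤ 6k+5 : c+r ≥ 4k+5
    have := key (4*k+4) (by nlinarith)
    omega
  · -- 6k+6 ≤ t : c+r ≥ 4k+6
    have := key (4*k+5) (by nlinarith)
    omega

/-- For every `N ≥ 1`, the first `N` vertices of the spiral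
enumeration minimize the edge boundary among all `N`-element subsets of the grid
graph `(ℤ², ℓ¹)`. -/
theorem spiral_minimizes_edge_boundary (N : ℕ) (hN : 1 ≤ N)
    (A : Set (ℤ × ℤ)) (hA : A.Finite) (hcard : A.ncard = N) :
    (edgeBoundary gridGraph (spiral '' Set.Iio N)).ncard
      ≤ (edgeBoundary gridGraph A).ncard := by
  obtain ⟨k, t, hdec, ht⟩ := exists_decomp N hN
  obtain ⟨hset, hnext, hbd⟩ := main_inv N hN k t hdec ht
  rw [hbd]
  have hne : A.Nonempty := Set.nonempty_of_ncard_ne_zero (by omega)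
  obtain ⟨c, r, hc, hr, hcr, hlow⟩ := lower_bound A hA hne
  have harith := sum_ge k t c r ht hc hr (by rw [hcard] at hcr; omega)
  omega
end
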